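/- arXiv:1406.5744 — 15 statements merged into one kernel-verified Lean document; each statement's English description precedes it below -/
import Mathlib

section
/- Let v ∈ Hom(M,ℚ), let ρ ∈ Hom(M,ℚ) be nonzero, let e, θ ∈ M, s ∈ ℤ, d ∈ ℤ∖{0}, and φ ∈ K(t)∖{0}. Define K-derivations ∂_• and ∂ of K(t)[M] by ∂_•(Qχ^m) = d·(v(m)Q + tQ′)·t^s·χ^{m+e} and ∂(Qχ^m) = ρ(m)·φ·Q·χ^{m+θ}. Then ∂∘∂_• = ∂_•∘∂ if and only if ρ(e) = 0, v(θ) ∈ ℤ, and φ = λ·t^{−v(θ)} for some λ ∈ K∖{0}. -/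
open Polynomial

set_option linter.unusedSectionVars false

section StmtTwoAux

variable {K : Type*} [Field K] [CharZero K]
variable (D : Derivation K (RatFunc K) (RatFunc K)) (hD : D RatFunc.X = 1)

lemma stmt2_aeval_X_eq (p : K[X]) :
    Polynomial.aeval (RatFunc.X : RatFunc K) p = algebraMap K[X] (RatFunc K) p := by
  have h : (Polynomial.aeval (RatFunc.X : RatFunc K) : K[X] →ₐ[K] RatFunc K)
      = IsScalarTower.toAlgHom K K[X] (RatFunc K) := by
    apply Polynomial.algHom_ext; simp
  exact congrArg (fun f => f p) h

include hD in
lemma stmt2_Dalg (p : K[X]) : D (algebraMap K[X] (RatFunc K) p)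
    = algebraMap K[X] (RatFunc K) (Polynomial.derivative p) := by
  rw [← stmt2_aeval_X_eq, ← stmt2_aeval_X_eq, Derivation.comp_aeval_eq, hD, smul_eq_mul, mul_one]

lemma stmt2_divSelf {r : K[X]} (hr : r ≠ 0) (h : r ∣ Polynomial.X * derivative r) :
    ∃ u : K, Polynomial.X * derivative r = C u * r := by
  by_cases hd : derivative r = 0
  · exact ⟨0, by simp [hd]⟩
  obtain ⟨w, hw⟩ := h
  have hXr : Polynomial.X * derivative r ≠ 0 := mul_ne_zero X_ne_zero hd
  have hw0 : w ≠ 0 := by rintro rfl; simp at hw; exact hXr (by simp [hw])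
  have hdegr : r.natDegree ≠ 0 := fun h0 => hd (by
    rw [Polynomial.eq_C_of_natDegree_eq_zero h0]; simp)
  have hlt : (derivative r).natDegree < r.natDegree := natDegree_derivative_lt hdegr
  have hdeg : (Polynomial.X * derivative r).natDegree ≤ r.natDegree := by
    rw [natDegree_X_mul hd]; omega
  rw [hw] at hdeg
  rw [natDegree_mul hr hw0] at hdeg
  have : w.natDegree = 0 := by omega
  obtain ⟨u, hu⟩ := Polynomial.natDegree_eq_zero.mp this
  exact ⟨u, by rw [hw, ← hu, mul_comm]⟩

lemma stmt2_mono {r : K[X]} (hr : r ≠ 0) {u : K}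
    (h : Polynomial.X * derivative r = C u * r) :
    u = (r.natDegree : K) ∧ r = C (r.coeff r.natDegree) * Polynomial.X ^ r.natDegree := by
  have hcoeff : ∀ j : ℕ, (j : K) * r.coeff j = u * r.coeff j := by
    intro j
    have := congrArg (fun p => Polynomial.coeff p j) h
    simp only [coeff_C_mul] at this
    cases j with
    | zero =>
      rw [mul_comm Polynomial.X _, coeff_mul_X_zero] at this
      simpa using this.symm
    | succ i =>
      rw [coeff_X_mul, coeff_derivative] at this
      rw [← this]; push_cast; ring
  have hN : r.coeff r.natDegree ≠ 0 := by
    rw [← leadingCoeff]; exact leadingCoeff_ne_zero.mpr hr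
  have hu : u = (r.natDegree : K) := by
    have := hcoeff r.natDegree
    exact (mul_right_cancel₀ hN this).symm
  refine ⟨hu, ?_⟩
  ext j
  rw [coeff_C_mul, coeff_X_pow]
  by_cases hj : j = r.natDegree
  · simp [hj]
  · simp only [hj, if_false, mul_zero]
    by_contra hc
    have := hcoeff j
    rw [hu] at this
    exact hj (Nat.cast_injective (mul_right_cancel₀ hc this))

include hD in
lemma stmt2_ode (c : K) (φ : RatFunc K) (hφ : φ ≠ 0)
    (h : RatFunc.X * D φ + algebraMap K (RatFunc K) c * φ = 0) :
    ∃ n : ℤ, (n : K) = c ∧ ∃ a : K, a ≠ 0 ∧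
      φ = algebraMap K (RatFunc K) a * RatFunc.X ^ (-n) := by
  set p := φ.num with hpdef
  set q := φ.denom with hqdef
  have hp0 : p ≠ 0 := RatFunc.num_ne_zero hφ
  have hq0 : q ≠ 0 := φ.denom_ne_zero
  have hcop : IsCoprime p q := φ.isCoprime_num_denom
  set A := algebraMap K[X] (RatFunc K) with hA
  have hAq0 : A q ≠ 0 := RatFunc.algebraMap_ne_zero hq0
  have h1 : A p = φ * A q := by
    conv_rhs => rw [← RatFunc.num_div_denom φ]
    exact (div_mul_cancel₀ _ hAq0).symm
  have h2 : A (derivative p) = D φ * A q + φ * A (derivative q) := by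
    have h2' := congrArg D h1
    rw [stmt2_Dalg D hD, D.leibniz, smul_eq_mul, smul_eq_mul, stmt2_Dalg D hD] at h2'
    rw [h2']; ring
  have key : Polynomial.X * derivative p * q + Polynomial.C c * (p * q)
      = Polynomial.X * (p * derivative q) := by
    apply RatFunc.algebraMap_injective K
    push_cast [map_add, map_mul, RatFunc.algebraMap_X, hA]
    have hC : algebraMap K[X] (RatFunc K) (Polynomial.C c) = algebraMap K (RatFunc K) c := rfl
    rw [hC]
    linear_combination (RatFunc.X * A q) * h2
      + (algebraMap K (RatFunc K) c * A q - RatFunc.X * A (derivative q)) * h1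
      + (A q * A q) * h
  have hqdvd : q ∣ Polynomial.X * derivative q := by
    refine (hcop.symm.dvd_of_dvd_mul_left (y := p)) ?_
    refine ⟨Polynomial.X * derivative p + Polynomial.C c * p, ?_⟩
    linear_combination -key
  have hpdvd : p ∣ Polynomial.X * derivative p := by
    refine (hcop.dvd_of_dvd_mul_right (z := q)) ?_
    refine ⟨Polynomial.X * derivative q - Polynomial.C c * q, ?_⟩
    linear_combination key
  obtain ⟨u, hu⟩ := stmt2_divSelf hq0 hqdvd
  obtain ⟨hum, hqeq⟩ := stmt2_mono hq0 hu
  obtain ⟨w, hw⟩ := stmt2_divSelf hp0 hpdvd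
  obtain ⟨hwk, hpeq⟩ := stmt2_mono hp0 hw
  set m := q.natDegree
  set k := p.natDegree
  set a := p.coeff k with ha
  have ha0 : a ≠ 0 := by
    rw [ha, ← leadingCoeff]; exact leadingCoeff_ne_zero.mpr hp0
  have hqpow : q = Polynomial.X ^ m := by
    have hmon : q.Monic := φ.monic_denom
    rw [hqeq]
    rw [show q.coeff m = 1 from hmon.coeff_natDegree]
    simp
  have hcval : c = u - w := by
    have hc2 : (Polynomial.C w + Polynomial.C c - Polynomial.C u) * (p * q) = 0 := by
      linear_combination key - q * hw + p * hu
    have hpq : p * q ≠ 0 := mul_ne_zero hp0 hq0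
    have := (mul_eq_zero.mp hc2).resolve_right hpq
    have : Polynomial.C (w + c - u) = 0 := by rw [C_sub, C_add]; exact this
    have := Polynomial.C_eq_zero.mp this
    linear_combination this
  refine ⟨(m : ℤ) - (k : ℤ), ?_, a, ha0, ?_⟩
  · rw [hcval, hum, hwk]; push_cast; ring
  · have hXne : (RatFunc.X : RatFunc K) ≠ 0 := RatFunc.X_ne_zero
    have hzp : (RatFunc.X : RatFunc K) ^ (-((m : ℤ) - (k : ℤ)))
        = RatFunc.X ^ (k : ℤ) / RatFunc.X ^ (m : ℤ) := by
      rw [← zpow_sub₀ hXne]; ring_nf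
    rw [hzp, zpow_natCast, zpow_natCast]
    rw [← RatFunc.num_div_denom φ, ← hpdef, ← hqdef, ← hA]
    rw [hpeq, hqpow] at *
    push_cast [map_mul, map_pow, RatFunc.algebraMap_X]
    rw [mul_div_assoc]
    rfl

include hD in
lemma stmt2_DXpow' (n : ℕ) : D ((RatFunc.X : RatFunc K) ^ (n + 1))
    = ((n : RatFunc K) + 1) * RatFunc.X ^ n := by
  rw [Derivation.leibniz_pow, hD, Nat.add_sub_cancel]
  simp only [smul_eq_mul, nsmul_eq_mul, mul_one]
  push_cast; ring

include hD in
lemma stmt2_DXz (z : ℤ) : (RatFunc.X : RatFunc K) * D (RatFunc.X ^ z)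
    = (z : RatFunc K) * RatFunc.X ^ z := by
  have hXne : (RatFunc.X : RatFunc K) ≠ 0 := RatFunc.X_ne_zero
  cases z with
  | ofNat n =>
    rw [Int.ofNat_eq_coe, zpow_natCast]
    cases n with
    | zero => simp
    | succ k =>
      rw [stmt2_DXpow' D hD]
      push_cast; ring
  | negSucc n =>
    have hcast : (Int.negSucc n : RatFunc K) = -((n : RatFunc K) + 1) := by
      push_cast [Int.negSucc_eq]; ring
    rw [zpow_negSucc, D.leibniz_inv, stmt2_DXpow' D hD, smul_eq_mul, hcast]
    have hXn : (RatFunc.X : RatFunc K) ^ (n + 1) ≠ 0 := pow_ne_zero _ hXne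
    field_simp
    ring

end StmtTwoAux

/-- Lemma on brackets.  Let `v ∈ Hom(M,ℚ)`, `ρ ∈ Hom(M,ℚ)` nonzero,
`e, θ ∈ M`, `s ∈ ℤ`, `d ∈ ℤ∖{0}`, `φ ∈ K(t)∖{0}`.  Define derivations of `K(t)[M]` by
`∂_•(Qχ^m) = d·(v(m)Q + tQ′)·t^s·χ^{m+e}` and `∂(Qχ^m) = ρ(m)·φ·Q·χ^{m+θ}`.
Then `∂∘∂_• = ∂_•∘∂` iff `ρ(e) = 0`, `v(θ) ∈ ℤ`, and `φ = λ·t^{−v(θ)}` for some `λ ∈ K∖{0}`. -/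
theorem stmt_2 {K : Type*} [Field K] [CharZero K]
    {M : Type*} [AddCommGroup M] [Module.Free ℤ M] [Module.Finite ℤ M]
    (D : Derivation K (RatFunc K) (RatFunc K)) (hD : D RatFunc.X = 1)
    (v ρ : M →+ ℚ) (hρ : ρ ≠ 0) (e θ : M) (s : ℤ) (d : ℤ) (hd : d ≠ 0)
    (φ : RatFunc K) (hφ : φ ≠ 0)
    (Db Dd : Derivation K (AddMonoidAlgebra (RatFunc K) M) (AddMonoidAlgebra (RatFunc K) M))
    (hDb : ∀ (Q : RatFunc K) (m : M), Db (AddMonoidAlgebra.single m Q) =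
      AddMonoidAlgebra.single (m + e)
        ((d : RatFunc K) * (((v m : ℚ) : RatFunc K) * Q + RatFunc.X * D Q) * RatFunc.X ^ s))
    (hDd : ∀ (Q : RatFunc K) (m : M), Dd (AddMonoidAlgebra.single m Q) =
      AddMonoidAlgebra.single (m + θ) (((ρ m : ℚ) : RatFunc K) * φ * Q)) :
    (∀ f, Dd (Db f) = Db (Dd f)) ↔
      (ρ e = 0 ∧ ∃ n : ℤ, (n : ℚ) = v θ ∧
        ∃ lam : K, lam ≠ 0 ∧ φ = algebraMap K (RatFunc K) lam * RatFunc.X ^ (-n)) := by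
  haveI : CharZero (RatFunc K) :=
    charZero_of_injective_algebraMap (algebraMap K (RatFunc K)).injective
  have hQalg : ∀ qq : ℚ, algebraMap K (RatFunc K) ((qq : K)) = ((qq : ℚ) : RatFunc K) :=
    fun qq => map_ratCast (algebraMap K (RatFunc K)) qq
  have hDQ : ∀ qq : ℚ, D ((qq : ℚ) : RatFunc K) = 0 := by
    intro qq
    rw [← hQalg]
    exact D.map_algebraMap _
  have hDc : ∀ (qq : ℚ) (x : RatFunc K),
      D (((qq : ℚ) : RatFunc K) * x) = ((qq : ℚ) : RatFunc K) * D x := by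
    intro qq x
    rw [D.leibniz, hDQ, smul_eq_mul, smul_eq_mul]; ring
  have hXne : (RatFunc.X : RatFunc K) ≠ 0 := RatFunc.X_ne_zero
  have hXs : (RatFunc.X : RatFunc K) ^ s ≠ 0 := zpow_ne_zero _ hXne
  have hdR : ((d : ℤ) : RatFunc K) ≠ 0 := Int.cast_ne_zero.mpr hd
  constructor
  · intro h
    -- coefficient identity for all m, Q
    have E : ∀ (m : M) (Q : RatFunc K),
        ((ρ (m + e) : ℚ) : RatFunc K) * φ *
          ((d : RatFunc K) * (((v m : ℚ) : RatFunc K) * Q + RatFunc.X * D Q) * RatFunc.X ^ s)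
        = (d : RatFunc K) * (((v (m + θ) : ℚ) : RatFunc K) * (((ρ m : ℚ) : RatFunc K) * φ * Q)
            + RatFunc.X * D (((ρ m : ℚ) : RatFunc K) * φ * Q)) * RatFunc.X ^ s := by
      intro m Q
      have h0 := h (AddMonoidAlgebra.single m Q)
      rw [hDb, hDd, hDd, hDb] at h0
      rw [show m + θ + e = m + e + θ from add_right_comm m θ e] at h0
      exact AddMonoidAlgebra.single_right_inj.mp h0
    -- expanded and cancelled identity
    have E' : ∀ (m : M) (Q : RatFunc K),
        ((ρ (m + e) : ℚ) : RatFunc K) * φ * (((v m : ℚ) : RatFunc K) * Q + RatFunc.X * D Q)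
        = ((v (m + θ) : ℚ) : RatFunc K) * (((ρ m : ℚ) : RatFunc K) * φ * Q)
            + RatFunc.X * (((ρ m : ℚ) : RatFunc K) * (D φ * Q + φ * D Q)) := by
      intro m Q
      have hde : D (((ρ m : ℚ) : RatFunc K) * φ * Q)
          = ((ρ m : ℚ) : RatFunc K) * (D φ * Q + φ * D Q) := by
        rw [mul_assoc, hDc, D.leibniz, smul_eq_mul, smul_eq_mul]
        ring
      have hE := E m Q
      rw [hde] at hE
      apply mul_left_cancel₀ hdR
      apply mul_right_cancel₀ hXs
      linear_combination hE
    -- ρ (m + e) = ρ m for all m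
    have hre : ∀ m : M, ρ (m + e) = ρ m := by
      intro m
      have h1 := E' m 1
      have hx := E' m RatFunc.X
      rw [hD] at hx
      simp only [mul_one, D.map_one_eq_zero, mul_zero, add_zero] at h1
      have hkey : ((((ρ (m + e) : ℚ) : RatFunc K)) - (((ρ m : ℚ) : RatFunc K)))
          * (φ * RatFunc.X) = 0 := by
        linear_combination hx - RatFunc.X * h1
      have hc := (mul_eq_zero.mp hkey).resolve_right (mul_ne_zero hφ hXne)
      have : ((ρ (m + e) : ℚ) : RatFunc K) = ((ρ m : ℚ) : RatFunc K) := by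
        linear_combination hc
      exact_mod_cast Rat.cast_injective this
    have hρe : ρ e = 0 := by
      have := hre 0
      rwa [zero_add, map_zero] at this
    refine ⟨hρe, ?_⟩
    -- pick m₀ with ρ m₀ ≠ 0
    obtain ⟨m0, hm0⟩ : ∃ m : M, ρ m ≠ 0 := by
      by_contra hno
      push_neg at hno
      exact hρ (DFunLike.ext _ _ fun m => hno m)
    have h1 := E' m0 1
    simp only [mul_one, D.map_one_eq_zero, mul_zero, add_zero] at h1
    rw [hre m0] at h1
    have hvadd : ((v (m0 + θ) : ℚ) : RatFunc K)
        = ((v m0 : ℚ) : RatFunc K) + ((v θ : ℚ) : RatFunc K) := by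
      rw [map_add]; push_cast; ring
    rw [hvadd] at h1
    have hρm0 : ((ρ m0 : ℚ) : RatFunc K) ≠ 0 := by
      exact_mod_cast Rat.cast_ne_zero.mpr hm0
    have hode : RatFunc.X * D φ + algebraMap K (RatFunc K) ((v θ : ℚ) : K) * φ = 0 := by
      rw [hQalg]
      have hfac : ((ρ m0 : ℚ) : RatFunc K)
          * (RatFunc.X * D φ + ((v θ : ℚ) : RatFunc K) * φ) = 0 := by
        linear_combination -h1
      exact (mul_eq_zero.mp hfac).resolve_left hρm0
    obtain ⟨n, hnK, a, ha0, haφ⟩ := stmt2_ode D hD _ φ hφ hode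
    refine ⟨n, ?_, a, ha0, haφ⟩
    have : ((n : ℚ) : K) = ((v θ : ℚ) : K) := by
      rw [Rat.cast_intCast]; exact hnK
    exact_mod_cast Rat.cast_injective this
  · rintro ⟨hρe, n, hn, lam, hlam, hphi⟩
    have hre : ∀ m : M, ρ (m + e) = ρ m := by
      intro m; rw [map_add, hρe, add_zero]
    -- key ODE satisfied by φ
    have hkey : RatFunc.X * D φ + ((v θ : ℚ) : RatFunc K) * φ = 0 := by
      have hDφ : D φ = algebraMap K (RatFunc K) lam * D (RatFunc.X ^ (-n)) := by
        rw [hphi, D.leibniz, D.map_algebraMap, smul_eq_mul, smul_eq_mul, mul_zero, add_zero]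
      have hz := stmt2_DXz D hD (-n)
      have hvθ : ((v θ : ℚ) : RatFunc K) = ((n : ℤ) : RatFunc K) := by
        rw [← hn]; push_cast; ring
      rw [hDφ, hphi, hvθ]
      push_cast at hz ⊢
      linear_combination (algebraMap K (RatFunc K) lam) * hz
    intro f
    induction f using AddMonoidAlgebra.induction_linear with
    | zero => simp
    | add f g hf hg => rw [map_add, map_add, hf, hg, map_add, map_add]
    | single m Q =>
      rw [hDb, hDd, hDd, hDb]
      rw [show m + θ + e = m + e + θ from add_right_comm m θ e]
      congr 1
      have hde : D (((ρ m : ℚ) : RatFunc K) * φ * Q)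
          = ((ρ m : ℚ) : RatFunc K) * (D φ * Q + φ * D Q) := by
        rw [mul_assoc, hDc, D.leibniz, smul_eq_mul, smul_eq_mul]
        ring
      have hρme : ((ρ (m + e) : ℚ) : RatFunc K) = ((ρ m : ℚ) : RatFunc K) := by
        rw [hre]
      have hvadd : ((v (m + θ) : ℚ) : RatFunc K)
          = ((v m : ℚ) : RatFunc K) + ((v θ : ℚ) : RatFunc K) := by
        rw [map_add]; exact Rat.cast_add _ _
      rw [hde, hρme, hvadd]
      linear_combination (-(d : RatFunc K) * RatFunc.X ^ s * ((ρ m : ℚ) : RatFunc K) * Q) * hkey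
end

section
/- Let θ ∈ M and define the K-derivation ∂ of K(t)[M] by ∂(Qχ^m) = Q′·χ^{m+θ}. Then ∂ commutes with the reflexive derivation ∂₋ if and only if v₀(θ) = 1, and ∂ commutes with the reflexive derivation ∂₊ if and only if v₁(θ) = 1. -/
/-- Let `K` be a field of characteristic zero, `K(t)` the field of rational
functions (with `D` the derivative `d/dt`, i.e. the `K`-derivation with `D t = 1`), `M` a
finitely generated free abelian group and `K(t)[M]` its group algebra over `K(t)`.  Given group
homomorphisms `v₀ v₁ : M → ℤ` and `e ∈ M` with `v₀ e = 1`, `v₁ e = -1`, let `∂₋, ∂₊` be the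
reflexive derivations, `∂₋(Qχ^m) = (v₀(m)Q + tQ')χ^{m-e}`, `∂₊(Qχ^m) = (v₁(m)Q + (t-1)Q')χ^{m+e}`.
For `θ ∈ M` let `∂` be the derivation with `∂(Qχ^m) = Q'·χ^{m+θ}`.  Then `∂` commutes with `∂₋`
iff `v₀ θ = 1`, and `∂` commutes with `∂₊` iff `v₁ θ = 1`. -/
theorem stmt_3 {K : Type*} [Field K] [CharZero K]
    {M : Type*} [AddCommGroup M] [Module.Free ℤ M] [Module.Finite ℤ M]
    (D : Derivation K (RatFunc K) (RatFunc K)) (hD : D RatFunc.X = 1)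
    (v₀ v₁ : M →+ ℤ) (e : M) (hv₀e : v₀ e = 1) (hv₁e : v₁ e = -1)
    (Dm Dp : Derivation K (AddMonoidAlgebra (RatFunc K) M) (AddMonoidAlgebra (RatFunc K) M))
    (hDm : ∀ (Q : RatFunc K) (m : M), Dm (AddMonoidAlgebra.single m Q) =
      AddMonoidAlgebra.single (m - e) ((v₀ m : RatFunc K) * Q + RatFunc.X * D Q))
    (hDp : ∀ (Q : RatFunc K) (m : M), Dp (AddMonoidAlgebra.single m Q) =
      AddMonoidAlgebra.single (m + e) ((v₁ m : RatFunc K) * Q + (RatFunc.X - 1) * D Q))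
    (θ : M)
    (Dd : Derivation K (AddMonoidAlgebra (RatFunc K) M) (AddMonoidAlgebra (RatFunc K) M))
    (hDd : ∀ (Q : RatFunc K) (m : M), Dd (AddMonoidAlgebra.single m Q) =
      AddMonoidAlgebra.single (m + θ) (D Q)) :
    ((∀ f, Dd (Dm f) = Dm (Dd f)) ↔ v₀ θ = 1) ∧
    ((∀ f, Dd (Dp f) = Dp (Dd f)) ↔ v₁ θ = 1) := by
  have general : ∀ (v : M →+ ℤ) (s : M) (c : RatFunc K), D c = 1 →
      ∀ (Dr : Derivation K (AddMonoidAlgebra (RatFunc K) M)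
        (AddMonoidAlgebra (RatFunc K) M)),
      (∀ (Q : RatFunc K) (m : M), Dr (AddMonoidAlgebra.single m Q) =
        AddMonoidAlgebra.single (m + s) ((v m : RatFunc K) * Q + c * D Q)) →
      ((∀ f, Dd (Dr f) = Dr (Dd f)) ↔ v θ = 1) := by
    intro v s c hc Dr hDr
    haveI : CharZero (RatFunc K) := charZero_of_injective_algebraMap (algebraMap K (RatFunc K)).injective
    have key : ∀ (Q : RatFunc K) (m : M),
        Dd (Dr (AddMonoidAlgebra.single m Q)) - Dr (Dd (AddMonoidAlgebra.single m Q)) =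
        AddMonoidAlgebra.single (m + s + θ) ((1 - (v θ : RatFunc K)) * D Q) := by
      intro Q m
      rw [hDr, hDd, hDd, hDr]
      have h1 : D ((v m : RatFunc K) * Q + c * D Q) =
          (v m : RatFunc K) * D Q + D Q + c * D (D Q) := by
        have hint : D ((v m : RatFunc K)) = 0 := by
          rw [show ((v m : ℤ) : RatFunc K) = ((v m : ℤ) • (1 : RatFunc K)) by
            rw [zsmul_eq_mul]; push_cast; ring]
          rw [map_zsmul, Derivation.map_one_eq_zero, smul_zero]
        rw [map_add, Derivation.leibniz, Derivation.leibniz, hint, hc]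
        simp only [smul_eq_mul]
        ring
      rw [h1]
      have h2 : (m + θ + s) = (m + s + θ) := by abel
      rw [h2, ← AddMonoidAlgebra.single_sub]
      congr 1
      push_cast [map_add]
      ring
    constructor
    · intro h
      have := key RatFunc.X 0
      rw [sub_eq_zero.mpr (h _), hD] at this
      have h0 := (AddMonoidAlgebra.single_eq_zero.mp this.symm)
      have : ((v θ : ℤ) : RatFunc K) = 1 := by
        have := sub_eq_zero.mp (by simpa using h0)
        exact this.symm
      exact_mod_cast this
    · intro hv f
      induction f using AddMonoidAlgebra.induction_linear with
      | zero => simp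
      | add f g hf hg => simp only [map_add, hf, hg]
      | single m Q =>
        have := key Q m
        rw [hv] at this
        simpa [sub_eq_zero] using this
  refine ⟨general v₀ (-e) RatFunc.X hD Dm ?_, general v₁ e (RatFunc.X - 1) (by simp [hD]) Dp hDp⟩
  intro Q m
  rw [hDm, sub_eq_add_neg]
end

section
/- Let θ ∈ M, set γ = t^{−v₀(θ)}·(t−1)^{−v₁(θ)} ∈ K(t), and define the K-derivation ∂ of K(t)[M] by ∂(Qχ^m) = ((v₀(m)/t + v₁(m)/(t−1))·Q + Q′)·γ·χ^{m+θ}. Then ∂ commutes with both reflexive derivations ∂₋ and ∂₊ if and only if v₀(θ) = v₁(θ) = −1; in that case ∂(Qχ^m) = ((v₀(m)(t−1) + v₁(m)t)·Q + t(t−1)·Q′)·χ^{m+θ} for all Q ∈ K(t) and m ∈ M. -/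
private lemma sne' {K : Type*} [Field K] : (RatFunc.X : RatFunc K) - 1 ≠ 0 := by
  have h1 : (RatFunc.X : RatFunc K) - 1
      = algebraMap (Polynomial K) (RatFunc K) (Polynomial.X - Polynomial.C 1) := by
    simp [RatFunc.algebraMap_X]
  rw [h1]
  exact RatFunc.algebraMap_ne_zero (Polynomial.X_sub_C_ne_zero 1)

private lemma dgamma' {K : Type*} [Field K]
    (D : Derivation K (RatFunc K) (RatFunc K)) (hD : D RatFunc.X = 1)
    (a b : ℤ) (γ : RatFunc K)
    (hγ : γ = RatFunc.X ^ a * (RatFunc.X - 1) ^ b) :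
    RatFunc.X * (RatFunc.X - 1) * D γ
      = ((b : RatFunc K) * RatFunc.X + (a : RatFunc K) * (RatFunc.X - 1)) * γ := by
  have ht : (RatFunc.X : RatFunc K) ≠ 0 := RatFunc.X_ne_zero
  have hs : (RatFunc.X : RatFunc K) - 1 ≠ 0 := sne'
  have hDs : D (RatFunc.X - 1) = 1 := by
    rw [Derivation.map_sub, hD, Derivation.map_one_eq_zero, sub_zero]
  rw [hγ, Derivation.leibniz, Derivation.leibniz_zpow, Derivation.leibniz_zpow, hD, hDs,
    zpow_sub_one₀ ht, zpow_sub_one₀ hs]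
  simp only [smul_eq_mul, zsmul_eq_mul, smul_smul]
  field_simp

/-- Reflexive setting as before.  For `θ ∈ M` let
`γ = t^{-v₀(θ)}·(t-1)^{-v₁(θ)}` and let `∂` be the derivation given by
`∂(Qχ^m) = ((v₀(m)/t + v₁(m)/(t-1))·Q + Q')·γ·χ^{m+θ}`.  Then `∂` commutes with both reflexive
derivations `∂₋` and `∂₊` iff `v₀(θ) = v₁(θ) = -1`; and in that case
`∂(Qχ^m) = ((v₀(m)(t-1) + v₁(m)t)·Q + t(t-1)·Q')·χ^{m+θ}`. -/
theorem stmt_4 {K : Type*} [Field K] [CharZero K]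
    {M : Type*} [AddCommGroup M] [Module.Free ℤ M] [Module.Finite ℤ M]
    (D : Derivation K (RatFunc K) (RatFunc K)) (hD : D RatFunc.X = 1)
    (v₀ v₁ : M →+ ℤ) (e : M) (hv₀e : v₀ e = 1) (hv₁e : v₁ e = -1)
    (Dm Dp : Derivation K (AddMonoidAlgebra (RatFunc K) M) (AddMonoidAlgebra (RatFunc K) M))
    (hDm : ∀ (Q : RatFunc K) (m : M), Dm (AddMonoidAlgebra.single m Q) =
      AddMonoidAlgebra.single (m - e) ((v₀ m : RatFunc K) * Q + RatFunc.X * D Q))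
    (hDp : ∀ (Q : RatFunc K) (m : M), Dp (AddMonoidAlgebra.single m Q) =
      AddMonoidAlgebra.single (m + e) ((v₁ m : RatFunc K) * Q + (RatFunc.X - 1) * D Q))
    (θ : M) (γ : RatFunc K)
    (hγ : γ = RatFunc.X ^ (-(v₀ θ)) * (RatFunc.X - 1) ^ (-(v₁ θ)))
    (Dd : Derivation K (AddMonoidAlgebra (RatFunc K) M) (AddMonoidAlgebra (RatFunc K) M))
    (hDd : ∀ (Q : RatFunc K) (m : M), Dd (AddMonoidAlgebra.single m Q) =
      AddMonoidAlgebra.single (m + θ)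
        ((((v₀ m : RatFunc K) / RatFunc.X + (v₁ m : RatFunc K) / (RatFunc.X - 1)) * Q + D Q) * γ)) :
    (((∀ f, Dd (Dm f) = Dm (Dd f)) ∧ (∀ f, Dd (Dp f) = Dp (Dd f))) ↔
        (v₀ θ = -1 ∧ v₁ θ = -1)) ∧
    ((v₀ θ = -1 ∧ v₁ θ = -1) → ∀ (Q : RatFunc K) (m : M),
      Dd (AddMonoidAlgebra.single m Q) = AddMonoidAlgebra.single (m + θ)
        (((v₀ m : RatFunc K) * (RatFunc.X - 1) + (v₁ m : RatFunc K) * RatFunc.X) * Q +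
          RatFunc.X * (RatFunc.X - 1) * D Q)) := by
  have ht : (RatFunc.X : RatFunc K) ≠ 0 := RatFunc.X_ne_zero
  have hs : (RatFunc.X : RatFunc K) - 1 ≠ 0 := sne'
  have hDs : D (RatFunc.X - 1) = 1 := by
    rw [Derivation.map_sub, hD, Derivation.map_one_eq_zero, sub_zero]
  haveI : CharZero (RatFunc K) :=
    charZero_of_injective_algebraMap (algebraMap K (RatFunc K)).injective
  have hγne : γ ≠ 0 := by
    rw [hγ]; exact mul_ne_zero (zpow_ne_zero _ ht) (zpow_ne_zero _ hs)
  have hDγ := dgamma' D hD _ _ γ hγ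
  -- part 2
  have part2 : (v₀ θ = -1 ∧ v₁ θ = -1) → ∀ (Q : RatFunc K) (m : M),
      Dd (AddMonoidAlgebra.single m Q) = AddMonoidAlgebra.single (m + θ)
        (((v₀ m : RatFunc K) * (RatFunc.X - 1) + (v₁ m : RatFunc K) * RatFunc.X) * Q +
          RatFunc.X * (RatFunc.X - 1) * D Q) := by
    rintro ⟨h0, h1⟩ Q m
    have hγ' : γ = RatFunc.X * (RatFunc.X - 1) := by
      rw [hγ, h0, h1]; norm_num
    rw [hDd, hγ']
    congr 1
    field_simp
  refine ⟨⟨?_, ?_⟩, part2⟩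
  · -- forward
    rintro ⟨hm, hp⟩
    have Hm := hm (AddMonoidAlgebra.single 0 RatFunc.X)
    simp only [hDm, hDd] at Hm
    rw [show (0:M) - e + θ = 0 + θ - e from by abel] at Hm
    have HCm := AddMonoidAlgebra.single_right_inj.mp Hm
    simp only [map_zero, Int.cast_zero, zero_mul, zero_div, add_zero, zero_add, hD, one_mul,
      mul_one, map_neg, map_sub, zero_sub, hv₀e, hv₁e, Int.cast_neg, Int.cast_one, neg_neg] at HCm
    have Hp := hp (AddMonoidAlgebra.single 0 RatFunc.X)
    simp only [hDp, hDd] at Hp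
    rw [show (0:M) + e + θ = 0 + θ + e from by abel] at Hp
    have HCp := AddMonoidAlgebra.single_right_inj.mp Hp
    simp only [map_zero, Int.cast_zero, zero_mul, zero_div, add_zero, zero_add, hD, one_mul,
      mul_one, map_add, hv₀e, hv₁e, Int.cast_neg, Int.cast_one, hDs] at HCp
    push_cast at hDγ
    field_simp [ht, hs] at HCm HCp
    constructor
    · have key : (((v₀ θ : ℤ) : RatFunc K) + 1) * ((RatFunc.X - 1) ^ 2 * γ) = 0 := by
        linear_combination (RatFunc.X - 1) * HCp + (RatFunc.X - 1) * hDγ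
      rcases mul_eq_zero.mp key with h | h
      · have h' : ((v₀ θ : ℤ) : RatFunc K) = -1 := by linear_combination h
        exact Int.cast_injective (α := RatFunc K) (by push_cast; exact h')
      · exact absurd h (mul_ne_zero (pow_ne_zero 2 hs) hγne)
    · have key : (((v₁ θ : ℤ) : RatFunc K) + 1) * (RatFunc.X ^ 2 * γ) = 0 := by
        linear_combination RatFunc.X * HCm + RatFunc.X * hDγ
      rcases mul_eq_zero.mp key with h | h
      · have h' : ((v₁ θ : ℤ) : RatFunc K) = -1 := by linear_combination h
        exact Int.cast_injective (α := RatFunc K) (by push_cast; exact h')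
      · exact absurd h (mul_ne_zero (pow_ne_zero 2 ht) hγne)
  · -- backward
    rintro ⟨h0, h1⟩
    have hDd' := part2 ⟨h0, h1⟩
    have key_m : ∀ (Q : RatFunc K) (m : M),
        Dd (Dm (AddMonoidAlgebra.single m Q)) = Dm (Dd (AddMonoidAlgebra.single m Q)) := by
      intro Q m
      simp only [hDm, hDd']
      rw [show m - e + θ = m + θ - e from by abel]
      congr 1
      simp only [map_add, map_sub, Derivation.leibniz, Derivation.map_intCast, hD, hDs,
        Derivation.map_one_eq_zero, smul_eq_mul, mul_zero, zero_mul, add_zero, zero_add,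
        sub_zero, mul_one, Int.cast_sub, Int.cast_add, Int.cast_one, Int.cast_neg, hv₀e, hv₁e, h0, h1]
      ring
    have key_p : ∀ (Q : RatFunc K) (m : M),
        Dd (Dp (AddMonoidAlgebra.single m Q)) = Dp (Dd (AddMonoidAlgebra.single m Q)) := by
      intro Q m
      simp only [hDp, hDd']
      rw [show m + e + θ = m + θ + e from by abel]
      congr 1
      simp only [map_add, map_sub, Derivation.leibniz, Derivation.map_intCast, hD, hDs,
        Derivation.map_one_eq_zero, smul_eq_mul, mul_zero, zero_mul, add_zero, zero_add,
        sub_zero, mul_one, Int.cast_sub, Int.cast_add, Int.cast_one, Int.cast_neg, hv₀e, hv₁e, h0, h1]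
      ring
    constructor
    · intro f
      refine AddMonoidAlgebra.induction f (by simp) ?_
      intro a b f _ _ ih
      rw [map_add, map_add, map_add, map_add, ih, key_m b a]
    · intro f
      refine AddMonoidAlgebra.induction f (by simp) ?_
      intro a b f _ _ ih
      rw [map_add, map_add, map_add, map_add, ih, key_p b a]
end

section
/- Let ρ ∈ Hom(M,ℚ) be nonzero with ρ(e) = 0, let θ ∈ M with v₀(θ) ∈ ℤ, and define the K-derivation ∂ of K(t)[M] by ∂(Qχ^m) = ρ(m)·t^{−v₀(θ)}·Q·χ^{m+θ}. Then ∂ commutes with the reflexive derivation ∂₋, and (∂₊∘∂ − ∂∘∂₊)(Qχ^m) = ρ(m)·(v₁(θ) − v₀(θ)·(t−1)/t)·t^{−v₀(θ)}·Q·χ^{m+e+θ} for all Q ∈ K(t) and m ∈ M; consequently ∂ commutes with the reflexive derivation ∂₊ if and only if v₀(θ) = v₁(θ) = 0. -/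
/-- Reflexive setting.  Let `ρ : M → ℚ` be a nonzero homomorphism with
`ρ(e) = 0`, `θ ∈ M` (note `v₀(θ) ∈ ℤ` automatically), and `∂(Qχ^m) = ρ(m)·t^{-v₀(θ)}·Q·χ^{m+θ}`.
Then `∂` commutes with `∂₋`, the commutator with `∂₊` is
`(∂₊∘∂ − ∂∘∂₊)(Qχ^m) = ρ(m)·(v₁(θ) − v₀(θ)·(t−1)/t)·t^{−v₀(θ)}·Q·χ^{m+e+θ}`, and consequently
`∂` commutes with `∂₊` iff `v₀(θ) = v₁(θ) = 0`. -/
theorem stmt_5 {K : Type*} [Field K] [CharZero K]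
    {M : Type*} [AddCommGroup M] [Module.Free ℤ M] [Module.Finite ℤ M]
    (D : Derivation K (RatFunc K) (RatFunc K)) (hD : D RatFunc.X = 1)
    (v₀ v₁ : M →+ ℤ) (e : M) (hv₀e : v₀ e = 1) (hv₁e : v₁ e = -1)
    (Dm Dp : Derivation K (AddMonoidAlgebra (RatFunc K) M) (AddMonoidAlgebra (RatFunc K) M))
    (hDm : ∀ (Q : RatFunc K) (m : M), Dm (AddMonoidAlgebra.single m Q) =
      AddMonoidAlgebra.single (m - e) ((v₀ m : RatFunc K) * Q + RatFunc.X * D Q))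
    (hDp : ∀ (Q : RatFunc K) (m : M), Dp (AddMonoidAlgebra.single m Q) =
      AddMonoidAlgebra.single (m + e) ((v₁ m : RatFunc K) * Q + (RatFunc.X - 1) * D Q))
    (ρ : M →+ ℚ) (hρ : ρ ≠ 0) (hρe : ρ e = 0) (θ : M)
    (Dd : Derivation K (AddMonoidAlgebra (RatFunc K) M) (AddMonoidAlgebra (RatFunc K) M))
    (hDd : ∀ (Q : RatFunc K) (m : M), Dd (AddMonoidAlgebra.single m Q) =
      AddMonoidAlgebra.single (m + θ) (((ρ m : ℚ) : RatFunc K) * RatFunc.X ^ (-(v₀ θ)) * Q)) :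
    (∀ f, Dd (Dm f) = Dm (Dd f)) ∧
    (∀ (Q : RatFunc K) (m : M),
      Dp (Dd (AddMonoidAlgebra.single m Q)) - Dd (Dp (AddMonoidAlgebra.single m Q)) =
        AddMonoidAlgebra.single (m + e + θ)
          (((ρ m : ℚ) : RatFunc K) *
            ((v₁ θ : RatFunc K) - (v₀ θ : RatFunc K) * (RatFunc.X - 1) / RatFunc.X) *
            RatFunc.X ^ (-(v₀ θ)) * Q)) ∧
    ((∀ f, Dd (Dp f) = Dp (Dd f)) ↔ (v₀ θ = 0 ∧ v₁ θ = 0)) := by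
  have hX : (RatFunc.X : RatFunc K) ≠ 0 := RatFunc.X_ne_zero
  haveI : CharZero (RatFunc K) := charZero_of_injective_algebraMap (algebraMap K (RatFunc K)).injective
  set n : ℤ := v₀ θ with hn
  have hDq : ∀ q : ℚ, D ((q : RatFunc K)) = 0 := by
    intro q
    have : ((q : RatFunc K)) = algebraMap K (RatFunc K) (q : K) := by
      rw [map_ratCast]
    rw [this, Derivation.map_algebraMap]
  have hDzpow : ∀ k : ℤ, D ((RatFunc.X : RatFunc K) ^ k)
      = (k : RatFunc K) * RatFunc.X ^ (k - 1) := by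
    intro k
    rw [Derivation.leibniz_zpow, hD, smul_eq_mul, mul_one, zsmul_eq_mul]
  have hz : (RatFunc.X : RatFunc K) ^ (-n) = RatFunc.X * RatFunc.X ^ (-n - 1) := by
    rw [mul_comm, ← zpow_add_one₀ hX]; ring_nf
  -- part 1
  have P1 : ∀ (Q : RatFunc K) (m : M),
      Dd (Dm (AddMonoidAlgebra.single m Q)) = Dm (Dd (AddMonoidAlgebra.single m Q)) := by
    intro Q m
    rw [hDm, hDd, hDd, hDm]
    rw [show m - e + θ = m + θ - e by abel]
    congr 1
    simp only [Derivation.leibniz, hDzpow, hDq, smul_eq_mul, map_sub, map_add, hρe,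
      Rat.cast_sub, Rat.cast_zero, sub_zero, Int.cast_add, ← hn]
    rw [hz]
    push_cast
    ring
  have P2 : ∀ (Q : RatFunc K) (m : M),
      Dp (Dd (AddMonoidAlgebra.single m Q)) - Dd (Dp (AddMonoidAlgebra.single m Q)) =
        AddMonoidAlgebra.single (m + e + θ)
          (((ρ m : ℚ) : RatFunc K) *
            ((v₁ θ : RatFunc K) - (v₀ θ : RatFunc K) * (RatFunc.X - 1) / RatFunc.X) *
            RatFunc.X ^ (-(v₀ θ)) * Q) := by
    intro Q m
    rw [hDp, hDd, hDd, hDp]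
    rw [show m + θ + e = m + e + θ by abel, ← AddMonoidAlgebra.single_sub]
    congr 1
    simp only [Derivation.leibniz, hDzpow, hDq, smul_eq_mul, map_add, hρe,
      Rat.cast_add, Rat.cast_zero, add_zero, Int.cast_add, ← hn]
    rw [hz]
    field_simp
    push_cast
    ring
  refine ⟨?_, P2, ?_⟩
  · intro f
    have : (Dd.toLinearMap ∘ₗ Dm.toLinearMap : AddMonoidAlgebra (RatFunc K) M →ₗ[K] _)
        = Dm.toLinearMap ∘ₗ Dd.toLinearMap := by
      apply AddMonoidAlgebra.lhom_ext'
      intro m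
      refine LinearMap.ext fun Q => ?_
      exact P1 Q m
    exact DFunLike.congr_fun this f
  · constructor
    · intro h
      obtain ⟨m, hm⟩ := DFunLike.ne_iff.mp hρ
      have hm' : ρ m ≠ 0 := hm
      have h0 := P2 1 m
      rw [sub_eq_zero.mpr (h _).symm] at h0
      have hc := (AddMonoidAlgebra.single_eq_zero.mp h0.symm)
      have hρc : ((ρ m : ℚ) : RatFunc K) ≠ 0 := by
        exact_mod_cast Rat.cast_ne_zero.mpr hm'
      have hXn : (RatFunc.X : RatFunc K) ^ (-n) ≠ 0 := zpow_ne_zero _ hX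
      have hc2 : ((v₁ θ : RatFunc K) - (n : RatFunc K) * (RatFunc.X - 1) / RatFunc.X) = 0 := by
        have := hc
        rw [mul_one] at this
        rcases mul_eq_zero.mp this with h' | h'
        · rcases mul_eq_zero.mp h' with h'' | h''
          · exact absurd h'' hρc
          · exact h''
        · exact absurd h' hXn
      have hc3 : (v₁ θ : RatFunc K) * RatFunc.X = (n : RatFunc K) * (RatFunc.X - 1) := by
        field_simp at hc2
        linear_combination hc2
      -- transfer to polynomials
      have hpoly : ((v₁ θ : Polynomial K) * Polynomial.X : Polynomial K)
          = (n : Polynomial K) * (Polynomial.X - 1) := by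
        apply RatFunc.algebraMap_injective K
        push_cast [map_mul, map_sub, map_one, map_intCast, RatFunc.algebraMap_X]
        exact_mod_cast hc3
      have h0' : (n : K) = 0 := by
        have := congrArg (Polynomial.eval (0 : K)) hpoly
        simpa using this.symm
      have hn0 : n = 0 := by exact_mod_cast h0'
      have h1' : (v₁ θ : K) = 0 := by
        have := congrArg (Polynomial.eval (1 : K)) hpoly
        simpa [hn0] using this
      exact ⟨hn0, by exact_mod_cast h1'⟩
    · rintro ⟨h0, h1⟩
      intro f
      have key : ∀ (Q : RatFunc K) (m : M),
          Dd (Dp (AddMonoidAlgebra.single m Q)) = Dp (Dd (AddMonoidAlgebra.single m Q)) := by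
        intro Q m
        have h2 := P2 Q m
        have h0' : v₀ θ = 0 := h0
        rw [h0', h1] at h2
        simp only [Int.cast_zero, zero_mul, zero_div, sub_zero, mul_zero, zero_sub,
          neg_zero, sub_self, AddMonoidAlgebra.single_zero] at h2
        exact (sub_eq_zero.mp h2).symm
      have : (Dd.toLinearMap ∘ₗ Dp.toLinearMap : AddMonoidAlgebra (RatFunc K) M →ₗ[K] _)
          = Dp.toLinearMap ∘ₗ Dd.toLinearMap := by
        apply AddMonoidAlgebra.lhom_ext'
        intro m
        refine LinearMap.ext fun Q => ?_
        exact key Q m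
      exact DFunLike.congr_fun this f
end

section
/- Let ρ ∈ Hom(M,ℚ) be nonzero with ρ(e) = 0, let θ ∈ M with v₀(θ) ∈ ℤ, and define the K-derivation ∂ of K(t)[M] by ∂(Qχ^m) = ρ(m)·t^{−v₀(θ)}·Q·χ^{m+θ}. Then ∂ commutes with the skew derivation ∂₋, and (∂₊∘∂ − ∂∘∂₊)(Qχ^m) = 2ρ(m)·v₁(θ)·t^{−v₀(θ)}·Q·χ^{m+e+θ} for all Q ∈ K(t) and m ∈ M; consequently ∂ commutes with the skew derivation ∂₊ if and only if v₁(θ) = 0. -/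
/-- Skew setting: `v₁ : M → ℤ` a homomorphism, `v₀ : M → ℚ` with `2v₀` a
homomorphism `M → ℤ`, `2v₀(e) = 1`, `v₁(e) = -1`, and the skew derivations
`∂₋(Qχ^m) = 2(v₀(m)Q + tQ')χ^{m-e}`,
`∂₊(Qχ^m) = 2((v₀(m)(1 - 1/t) + v₁(m))Q + (t-1)Q')χ^{m+e}`.
Let `ρ : M → ℚ` be a nonzero homomorphism with `ρ(e) = 0`, `θ ∈ M` with `v₀(θ) ∈ ℤ` (the
integer `n`), and `∂(Qχ^m) = ρ(m)·t^{-v₀(θ)}·Q·χ^{m+θ}`.  Then `∂` commutes with `∂₋`, the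
commutator with `∂₊` is `(∂₊∘∂ − ∂∘∂₊)(Qχ^m) = 2ρ(m)·v₁(θ)·t^{−v₀(θ)}·Q·χ^{m+e+θ}`, and
consequently `∂` commutes with `∂₊` iff `v₁(θ) = 0`. -/
theorem stmt_6 {K : Type*} [Field K] [CharZero K]
    {M : Type*} [AddCommGroup M] [Module.Free ℤ M] [Module.Finite ℤ M]
    (D : Derivation K (RatFunc K) (RatFunc K)) (hD : D RatFunc.X = 1)
    (v₀ : M →+ ℚ) (h2v₀ : ∀ m : M, ∃ n : ℤ, (n : ℚ) = 2 * v₀ m)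
    (v₁ : M →+ ℤ) (e : M) (hv₀e : 2 * v₀ e = 1) (hv₁e : v₁ e = -1)
    (Dm Dp : Derivation K (AddMonoidAlgebra (RatFunc K) M) (AddMonoidAlgebra (RatFunc K) M))
    (hDm : ∀ (Q : RatFunc K) (m : M), Dm (AddMonoidAlgebra.single m Q) =
      AddMonoidAlgebra.single (m - e)
        (2 * (((v₀ m : ℚ) : RatFunc K) * Q + RatFunc.X * D Q)))
    (hDp : ∀ (Q : RatFunc K) (m : M), Dp (AddMonoidAlgebra.single m Q) =
      AddMonoidAlgebra.single (m + e)
        (2 * ((((v₀ m : ℚ) : RatFunc K) * (1 - RatFunc.X⁻¹) + (v₁ m : RatFunc K)) * Q +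
          (RatFunc.X - 1) * D Q)))
    (ρ : M →+ ℚ) (hρ : ρ ≠ 0) (hρe : ρ e = 0) (θ : M)
    (n : ℤ) (hn : (n : ℚ) = v₀ θ)
    (Dd : Derivation K (AddMonoidAlgebra (RatFunc K) M) (AddMonoidAlgebra (RatFunc K) M))
    (hDd : ∀ (Q : RatFunc K) (m : M), Dd (AddMonoidAlgebra.single m Q) =
      AddMonoidAlgebra.single (m + θ) (((ρ m : ℚ) : RatFunc K) * RatFunc.X ^ (-n) * Q)) :
    (∀ f, Dd (Dm f) = Dm (Dd f)) ∧
    (∀ (Q : RatFunc K) (m : M),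
      Dp (Dd (AddMonoidAlgebra.single m Q)) - Dd (Dp (AddMonoidAlgebra.single m Q)) =
        AddMonoidAlgebra.single (m + e + θ)
          (2 * ((ρ m : ℚ) : RatFunc K) * ((v₁ θ : ℤ) : RatFunc K) * RatFunc.X ^ (-n) * Q)) ∧
    ((∀ f, Dd (Dp f) = Dp (Dd f)) ↔ v₁ θ = 0) := by
  haveI : CharZero (RatFunc K) :=
    charZero_of_injective_algebraMap (algebraMap K (RatFunc K)).injective
  have hX : (RatFunc.X : RatFunc K) ≠ 0 := RatFunc.X_ne_zero
  have hcast : ∀ c : ℚ, D ((c : RatFunc K)) = 0 := fun c => by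
    rw [← map_ratCast (algebraMap K (RatFunc K)) c, Derivation.map_algebraMap]
  have hDzpow : D (RatFunc.X ^ (-n) : RatFunc K) = (-n : ℤ) • RatFunc.X ^ (-n-1) := by
    rw [Derivation.leibniz_zpow, hD, smul_eq_mul, mul_one]
  have hDmul : ∀ (c : ℚ) (Q : RatFunc K),
      D ((c : RatFunc K) * RatFunc.X ^ (-n) * Q) =
        (c : RatFunc K) * ((-n : RatFunc K) * RatFunc.X ^ (-n-1) * Q
          + RatFunc.X ^ (-n) * D Q) := by
    intro c Q
    rw [Derivation.leibniz, Derivation.leibniz, hcast, hDzpow]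
    simp only [smul_eq_mul, zsmul_eq_mul, Int.cast_neg]
    push_cast
    ring
  have hb : (RatFunc.X : RatFunc K) ^ (-n-1) = RatFunc.X ^ (-n) * RatFunc.X⁻¹ := by
    rw [zpow_sub_one₀ hX]
  have hc : RatFunc.X * (RatFunc.X : RatFunc K)⁻¹ = 1 := mul_inv_cancel₀ hX
  -- part 2 : the commutator formula
  have part2 : ∀ (Q : RatFunc K) (m : M),
      Dp (Dd (AddMonoidAlgebra.single m Q)) - Dd (Dp (AddMonoidAlgebra.single m Q)) =
        AddMonoidAlgebra.single (m + e + θ)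
          (2 * ((ρ m : ℚ) : RatFunc K) * ((v₁ θ : ℤ) : RatFunc K) * RatFunc.X ^ (-n) * Q) := by
    intro Q m
    rw [hDd, hDp, hDp, hDd,
      show m + θ + e = m + e + θ by abel, ← AddMonoidAlgebra.single_sub]
    congr 1
    rw [hDmul, hb]
    have h1 : ((ρ (m + e) : ℚ) : RatFunc K) = ((ρ m : ℚ) : RatFunc K) := by
      rw [map_add, hρe, add_zero]
    have h2 : ((v₀ (m + θ) : ℚ) : RatFunc K) = ((v₀ m : ℚ) : RatFunc K) + (n : RatFunc K) := by
      rw [map_add, ← hn]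
      push_cast
      ring
    have h3 : ((v₁ (m + θ) : ℤ) : RatFunc K) = ((v₁ m : ℤ) : RatFunc K)
        + ((v₁ θ : ℤ) : RatFunc K) := by rw [map_add]; push_cast; ring
    rw [h1, h2, h3]
    linear_combination (-2 * (n : RatFunc K) * ((ρ m : ℚ) : RatFunc K) *
      RatFunc.X ^ (-n) * Q) * hc
  -- part 1 : commuting with Dm, on singles
  have part1s : ∀ (Q : RatFunc K) (m : M),
      Dd (Dm (AddMonoidAlgebra.single m Q)) = Dm (Dd (AddMonoidAlgebra.single m Q)) := by
    intro Q m
    rw [hDm, hDd, hDd, hDm, show m - e + θ = m + θ - e by abel]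
    congr 1
    rw [hDmul, hb]
    have h1 : ((ρ (m - e) : ℚ) : RatFunc K) = ((ρ m : ℚ) : RatFunc K) := by
      rw [map_sub, hρe, sub_zero]
    have h2 : ((v₀ (m + θ) : ℚ) : RatFunc K) = ((v₀ m : ℚ) : RatFunc K) + (n : RatFunc K) := by
      rw [map_add, ← hn]
      push_cast
      ring
    rw [h1, h2]
    linear_combination (2 * (n : RatFunc K) * ((ρ m : ℚ) : RatFunc K) *
      RatFunc.X ^ (-n) * Q) * hc
  have ext_comm : ∀ (A B : Derivation K (AddMonoidAlgebra (RatFunc K) M)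
      (AddMonoidAlgebra (RatFunc K) M)),
      (∀ (Q : RatFunc K) (m : M), A (B (AddMonoidAlgebra.single m Q))
        = B (A (AddMonoidAlgebra.single m Q))) → ∀ f, A (B f) = B (A f) := by
    intro A B h f
    induction f using AddMonoidAlgebra.induction_linear with
    | zero => simp
    | add f g hf hg => rw [map_add, map_add, map_add, map_add, hf, hg]
    | single m Q => exact h Q m
  refine ⟨ext_comm Dd Dm part1s, part2, ?_, ?_⟩
  · intro hcom
    obtain ⟨m, hm⟩ : ∃ m, ρ m ≠ 0 := by
      by_contra h
      push_neg at h
      exact hρ (AddMonoidHom.ext h)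
    have h := part2 1 m
    rw [hcom, sub_self] at h
    have h0 := AddMonoidAlgebra.single_eq_zero.mp h.symm
    have hρm : ((ρ m : ℚ) : RatFunc K) ≠ 0 := by exact_mod_cast hm
    have hpow : (RatFunc.X ^ (-n) : RatFunc K) ≠ 0 := zpow_ne_zero _ hX
    rw [mul_one] at h0
    have hfin : ((v₁ θ : ℤ) : RatFunc K) = 0 := by
      by_contra hne
      exact mul_ne_zero (mul_ne_zero (mul_ne_zero two_ne_zero hρm) hne) hpow h0
    exact_mod_cast hfin
  · intro hθ
    refine ext_comm Dd Dp fun Q m => ?_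
    have h := part2 Q m
    rw [hθ] at h
    simp only [Int.cast_zero, mul_zero, zero_mul, AddMonoidAlgebra.single_zero, sub_eq_zero] at h
    exact h.symm
end

section
/- Let ρ₋, ρ₊, ρ ∈ Hom(M,ℚ) and e, θ ∈ M, and define K-derivations of the group algebra K[M] by ∂₋(χ^m) = ρ₋(m)χ^{m−e}, ∂₊(χ^m) = ρ₊(m)χ^{m+e}, and ∂(χ^m) = ρ(m)χ^{m+θ}. Then ∂ commutes with ∂₋ if and only if ρ₋(θ)·ρ = −ρ(e)·ρ₋ as linear forms on M, and ∂ commutes with ∂₊ if and only if ρ₊(θ)·ρ = ρ(e)·ρ₊ as linear forms on M. -/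
open AddMonoidAlgebra

lemma aux_single_smul {K : Type*} [Field K] {M : Type*} [AddCommGroup M]
    (D : Derivation K (AddMonoidAlgebra K M) (AddMonoidAlgebra K M))
    (σ : M →+ ℚ) (t : M)
    (h : ∀ m : M, D (AddMonoidAlgebra.single m (1 : K)) =
      AddMonoidAlgebra.single (m + t) ((σ m : K)))
    (m : M) (c : K) :
    D (AddMonoidAlgebra.single m c) = AddMonoidAlgebra.single (m + t) (c * (σ m : K)) := by
  have hs : (AddMonoidAlgebra.single m c : AddMonoidAlgebra K M)
      = c • AddMonoidAlgebra.single m (1 : K) := by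
    simp [AddMonoidAlgebra.smul_single']
  rw [hs, Derivation.map_smul, h]
  simp [AddMonoidAlgebra.smul_single', smul_eq_mul]

lemma aux_comm {K : Type*} [Field K] [CharZero K] {M : Type*} [AddCommGroup M]
    (σ1 σ2 : M →+ ℚ) (t1 t2 : M)
    (D1 D2 : Derivation K (AddMonoidAlgebra K M) (AddMonoidAlgebra K M))
    (h1 : ∀ m : M, D1 (AddMonoidAlgebra.single m (1 : K)) =
      AddMonoidAlgebra.single (m + t1) ((σ1 m : K)))
    (h2 : ∀ m : M, D2 (AddMonoidAlgebra.single m (1 : K)) =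
      AddMonoidAlgebra.single (m + t2) ((σ2 m : K))) :
    (∀ f, D2 (D1 f) = D1 (D2 f)) ↔ ∀ m : M, σ1 m * σ2 t1 = σ2 m * σ1 t2 := by
  constructor
  · intro h m
    have := h (AddMonoidAlgebra.single m (1 : K))
    rw [h1, h2, aux_single_smul D2 σ2 t2 h2, aux_single_smul D1 σ1 t1 h1] at this
    have hidx : m + t1 + t2 = m + t2 + t1 := by abel
    rw [hidx] at this
    have hco : ((σ1 m : K)) * ((σ2 (m + t1) : K)) = ((σ2 m : K)) * ((σ1 (m + t2) : K)) :=
      AddMonoidAlgebra.single_right_injective this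
    have hq : (σ1 m) * (σ2 (m + t1)) = (σ2 m) * (σ1 (m + t2)) := by exact_mod_cast hco
    rw [map_add, map_add] at hq
    linear_combination hq
  · intro h f
    induction f using AddMonoidAlgebra.induction_linear with
    | zero => simp
    | add f g hf hg => simp [map_add, hf, hg]
    | single m c =>
      rw [aux_single_smul D1 σ1 t1 h1, aux_single_smul D2 σ2 t2 h2,
        aux_single_smul D2 σ2 t2 h2, aux_single_smul D1 σ1 t1 h1]
      have hidx : m + t1 + t2 = m + t2 + t1 := by abel
      rw [hidx]
      congr 1
      have hq : (σ1 m) * (σ2 (m + t1)) = (σ2 m) * (σ1 (m + t2)) := by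
        rw [map_add, map_add]; linear_combination h m
      have hc : ((σ1 m : K)) * ((σ2 (m + t1) : K)) = ((σ2 m : K)) * ((σ1 (m + t2) : K)) := by
        exact_mod_cast congrArg (fun q : ℚ => (q : K)) hq
      ring_nf
      linear_combination c * hc

/-- Let `K` be a field of characteristic zero, `M` a finitely generated free
abelian group, `K[M]` its group algebra.  Let `ρ₋, ρ₊, ρ ∈ Hom(M,ℚ)`, `e, θ ∈ M`, and define
derivations of `K[M]` by `∂₋(χ^m) = ρ₋(m)χ^{m−e}`, `∂₊(χ^m) = ρ₊(m)χ^{m+e}`,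
`∂(χ^m) = ρ(m)χ^{m+θ}`.  Then `∂` commutes with `∂₋` iff `ρ₋(θ)·ρ = −ρ(e)·ρ₋` as linear forms
on `M`, and `∂` commutes with `∂₊` iff `ρ₊(θ)·ρ = ρ(e)·ρ₊` as linear forms on `M`. -/
theorem stmt_7 {K : Type*} [Field K] [CharZero K]
    {M : Type*} [AddCommGroup M] [Module.Free ℤ M] [Module.Finite ℤ M]
    (ρm ρp ρ : M →+ ℚ) (e θ : M)
    (Dm Dp Dd : Derivation K (AddMonoidAlgebra K M) (AddMonoidAlgebra K M))
    (hDm : ∀ m : M, Dm (AddMonoidAlgebra.single m (1 : K)) =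
      AddMonoidAlgebra.single (m - e) ((ρm m : K)))
    (hDp : ∀ m : M, Dp (AddMonoidAlgebra.single m (1 : K)) =
      AddMonoidAlgebra.single (m + e) ((ρp m : K)))
    (hDd : ∀ m : M, Dd (AddMonoidAlgebra.single m (1 : K)) =
      AddMonoidAlgebra.single (m + θ) ((ρ m : K))) :
    ((∀ f, Dd (Dm f) = Dm (Dd f)) ↔ (∀ m : M, ρm θ * ρ m = -(ρ e) * ρm m)) ∧
    ((∀ f, Dd (Dp f) = Dp (Dd f)) ↔ (∀ m : M, ρp θ * ρ m = ρ e * ρp m)) := by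
  have hDm' : ∀ m : M, Dm (AddMonoidAlgebra.single m (1 : K)) =
      AddMonoidAlgebra.single (m + (-e)) ((ρm m : K)) := by
    intro m; rw [hDm, sub_eq_add_neg]
  constructor
  · rw [aux_comm ρm ρ (-e) θ Dm Dd hDm' hDd]
    constructor
    · intro h m
      have := h m
      rw [map_neg] at this
      linear_combination -this
    · intro h m
      rw [map_neg]
      linear_combination -h m
  · rw [aux_comm ρp ρ e θ Dp Dd hDp hDd]
    constructor
    · intro h m; linear_combination -h m
    · intro h m; linear_combination -h m
end

section
/- Let ρ₋, ρ₊, ρ ∈ Hom(M,ℚ) and e, θ ∈ M, and define K-derivations of the group algebra K[M] by ∂₋(χ^m) = ρ₋(m)χ^{m−e}, ∂₊(χ^m) = ρ₊(m)χ^{m+e}, and ∂(χ^m) = ρ(m)χ^{m+θ}. If ρ₋ and ρ₊ are linearly independent, ρ ≠ 0, and ∂ commutes with both ∂₋ and ∂₊, then ρ(e) = 0 and ρ₋(θ) = ρ₊(θ) = 0. -/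
lemma deriv_single_smul {K : Type*} [Field K] {M : Type*} [AddCommGroup M]
    (D : Derivation K (AddMonoidAlgebra K M) (AddMonoidAlgebra K M)) (m : M) (c : K) :
    D (AddMonoidAlgebra.single m c) = c • D (AddMonoidAlgebra.single m (1 : K)) := by
  have : AddMonoidAlgebra.single m c = c • AddMonoidAlgebra.single m (1 : K) := by
    rw [AddMonoidAlgebra.smul_single', mul_one]
  rw [this]
  exact Derivation.map_smul D c _

/-- Setting of Statement 7.  If `ρ₋` and `ρ₊` are linearly independent (over
`ℚ`), `ρ ≠ 0`, and `∂` commutes with both `∂₋` and `∂₊`, then `ρ(e) = 0` and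
`ρ₋(θ) = ρ₊(θ) = 0`. -/
theorem stmt_8 {K : Type*} [Field K] [CharZero K]
    {M : Type*} [AddCommGroup M] [Module.Free ℤ M] [Module.Finite ℤ M]
    (ρm ρp ρ : M →+ ℚ) (e θ : M)
    (Dm Dp Dd : Derivation K (AddMonoidAlgebra K M) (AddMonoidAlgebra K M))
    (hDm : ∀ m : M, Dm (AddMonoidAlgebra.single m (1 : K)) =
      AddMonoidAlgebra.single (m - e) ((ρm m : K)))
    (hDp : ∀ m : M, Dp (AddMonoidAlgebra.single m (1 : K)) =
      AddMonoidAlgebra.single (m + e) ((ρp m : K)))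
    (hDd : ∀ m : M, Dd (AddMonoidAlgebra.single m (1 : K)) =
      AddMonoidAlgebra.single (m + θ) ((ρ m : K)))
    (hindep : ∀ a b : ℚ, (∀ m : M, a * ρm m + b * ρp m = 0) → a = 0 ∧ b = 0)
    (hρ : ρ ≠ 0)
    (hcm : ∀ f, Dd (Dm f) = Dm (Dd f)) (hcp : ∀ f, Dd (Dp f) = Dp (Dd f)) :
    ρ e = 0 ∧ ρm θ = 0 ∧ ρp θ = 0 := by
  -- key relation from commutation with Dm
  have keym : ∀ m : M, ρm m * ρ (m - e) = ρ m * ρm (m + θ) := by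
    intro m
    have h := hcm (AddMonoidAlgebra.single m (1 : K))
    rw [hDm m, hDd m, deriv_single_smul Dd (m - e) ((ρm m : K)), hDd (m - e),
      deriv_single_smul Dm (m + θ) ((ρ m : K)), hDm (m + θ),
      AddMonoidAlgebra.smul_single', AddMonoidAlgebra.smul_single'] at h
    have hi : m + θ - e = m - e + θ := by abel
    rw [hi] at h
    have h2 := congrArg (fun f => f.coeff (m - e + θ)) h
    simp only [AddMonoidAlgebra.coeff_single, Finsupp.single_eq_same] at h2
    exact_mod_cast h2
  have keyp : ∀ m : M, ρp m * ρ (m + e) = ρ m * ρp (m + θ) := by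
    intro m
    have h := hcp (AddMonoidAlgebra.single m (1 : K))
    rw [hDp m, hDd m, deriv_single_smul Dd (m + e) ((ρp m : K)), hDd (m + e),
      deriv_single_smul Dp (m + θ) ((ρ m : K)), hDp (m + θ),
      AddMonoidAlgebra.smul_single', AddMonoidAlgebra.smul_single'] at h
    have hi : m + θ + e = m + e + θ := by abel
    rw [hi] at h
    have h2 := congrArg (fun f => f.coeff (m + e + θ)) h
    simp only [AddMonoidAlgebra.coeff_single, Finsupp.single_eq_same] at h2
    exact_mod_cast h2
  have rm : ∀ m : M, ρ m * ρm θ + ρ e * ρm m = 0 := by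
    intro m
    have := keym m
    rw [map_sub, map_add] at this
    ring_nf at this ⊢
    linarith [this]
  have rp : ∀ m : M, ρ m * ρp θ - ρ e * ρp m = 0 := by
    intro m
    have := keyp m
    rw [map_add, map_add] at this
    ring_nf at this ⊢
    linarith [this]
  obtain ⟨m0, hm0⟩ : ∃ m0 : M, ρ m0 ≠ 0 := by
    by_contra h
    push_neg at h
    exact hρ (AddMonoidHom.ext fun m => h m)
  by_cases he : ρ e = 0
  · refine ⟨he, ?_, ?_⟩
    · have h := rm m0; rw [he, zero_mul, add_zero] at h
      exact (mul_eq_zero.mp h).resolve_left hm0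
    · have h := rp m0; rw [he, zero_mul, sub_zero] at h
      exact (mul_eq_zero.mp h).resolve_left hm0
  · exfalso
    have hd : ∀ m : M, ρp θ * ρm m + ρm θ * ρp m = 0 := by
      intro m
      have h1 := rm m
      have h2 := rp m
      have : ρ e * (ρp θ * ρm m + ρm θ * ρp m) = 0 := by linear_combination ρp θ * h1 - ρm θ * h2
      exact (mul_eq_zero.mp this).resolve_left he
    obtain ⟨h1, h2⟩ := hindep _ _ hd
    -- ρp θ = 0, ρm θ = 0 ⇒ ρ e * ρm m = 0 ⇒ ρm = 0, contradicting hindep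
    have hm : ∀ m : M, (1 : ℚ) * ρm m + 0 * ρp m = 0 := by
      intro m
      have := rm m
      rw [h2, mul_zero, zero_add] at this
      have := (mul_eq_zero.mp this).resolve_left he
      simp [this]
    exact one_ne_zero (hindep 1 0 hm).1
end

section
/- The K-linear maps ∂₋, ∂₊, δ of K(t)[M] determined by ∂₋(Qχ^m) = (v₀(m)Q + tQ′)χ^{m−e}, ∂₊(Qχ^m) = (v₁(m)Q + (t−1)Q′)χ^{m+e}, and δ(Qχ^m) = (v₀(m) − v₁(m))·Q·χ^m are K-derivations of K(t)[M] and satisfy the sl₂-relations ∂₊∘∂₋ − ∂₋∘∂₊ = δ, δ∘∂₊ − ∂₊∘δ = 2∂₊, and δ∘∂₋ − ∂₋∘δ = −2∂₋. -/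
noncomputable section

variable {K : Type*} [Field K] {M : Type*} [AddCommGroup M]

/-- Auxiliary linear map `Qχ^m ↦ (w(m)Q + P·Q′)χ^{m+s}`. -/
def preDer (D : Derivation K (RatFunc K) (RatFunc K)) (w : M →+ ℤ) (s : M) (P : RatFunc K) :
    AddMonoidAlgebra (RatFunc K) M →ₗ[K] AddMonoidAlgebra (RatFunc K) M :=
  (Finsupp.lsum K fun m =>
    (AddMonoidAlgebra.lsingle (m + s)).comp
      ((w m : RatFunc K) • (LinearMap.id : RatFunc K →ₗ[K] RatFunc K) + P • D.toLinearMap)) ∘ₗ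
    (AddMonoidAlgebra.coeffLinearEquiv K).toLinearMap

lemma preDer_single (D : Derivation K (RatFunc K) (RatFunc K)) (w : M →+ ℤ) (s : M)
    (P : RatFunc K) (m : M) (Q : RatFunc K) :
    preDer D w s P (AddMonoidAlgebra.single m Q) =
      AddMonoidAlgebra.single (m + s) ((w m : RatFunc K) * Q + P * D Q) := by
  rw [preDer, LinearMap.comp_apply]
  erw [Finsupp.lsum_single]
  rfl

lemma preDer_leibniz (D : Derivation K (RatFunc K) (RatFunc K)) (w : M →+ ℤ) (s : M)
    (P : RatFunc K) (a b : AddMonoidAlgebra (RatFunc K) M) :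
    preDer D w s P (a * b) = a * preDer D w s P b + b * preDer D w s P a := by
  induction a using AddMonoidAlgebra.induction_linear with
  | zero => simp
  | add f g hf hg =>
      simp only [add_mul, mul_add, map_add, hf, hg]
      abel
  | single m Q =>
      induction b using AddMonoidAlgebra.induction_linear with
      | zero => simp
      | add f g hf hg =>
          simp only [add_mul, mul_add, map_add, hf, hg]
          abel
      | single n R =>
          rw [AddMonoidAlgebra.single_mul_single, preDer_single, preDer_single, preDer_single,
            AddMonoidAlgebra.single_mul_single, AddMonoidAlgebra.single_mul_single]
          have h1 : m + (n + s) = m + n + s := by abel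
          have h2 : n + (m + s) = m + n + s := by abel
          rw [h1, h2, ← AddMonoidAlgebra.single_add]
          congr 1
          rw [map_add w, Derivation.leibniz, smul_eq_mul, smul_eq_mul]
          push_cast
          ring

/-- The derivation `Qχ^m ↦ (w(m)Q + P·Q′)χ^{m+s}`. -/
def mkDer (D : Derivation K (RatFunc K) (RatFunc K)) (w : M →+ ℤ) (s : M) (P : RatFunc K) :
    Derivation K (AddMonoidAlgebra (RatFunc K) M) (AddMonoidAlgebra (RatFunc K) M) where
  toLinearMap := preDer D w s P
  map_one_eq_zero' := by
    have h1 : (1 : AddMonoidAlgebra (RatFunc K) M) = AddMonoidAlgebra.single 0 1 := rfl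
    show preDer D w s P 1 = 0
    rw [h1, preDer_single]
    simp
  leibniz' := fun a b => by
    show preDer D w s P (a * b) = a • preDer D w s P b + b • preDer D w s P a
    rw [preDer_leibniz]
    simp [smul_eq_mul]

lemma mkDer_single (D : Derivation K (RatFunc K) (RatFunc K)) (w : M →+ ℤ) (s : M)
    (P : RatFunc K) (m : M) (Q : RatFunc K) :
    mkDer D w s P (AddMonoidAlgebra.single m Q) =
      AddMonoidAlgebra.single (m + s) ((w m : RatFunc K) * Q + P * D Q) :=
  preDer_single D w s P m Q

end

/-- Reflexive sl₂-triple: given `v₀ v₁ : M → ℤ` with `v₀(e) = 1`,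
`v₁(e) = −1`, the `K`-linear maps of `K(t)[M]` determined by
`∂₋(Qχ^m) = (v₀(m)Q + tQ′)χ^{m−e}`, `∂₊(Qχ^m) = (v₁(m)Q + (t−1)Q′)χ^{m+e}`, and
`δ(Qχ^m) = (v₀(m) − v₁(m))·Q·χ^m` are `K`-derivations and satisfy the sl₂-relations
`[∂₊,∂₋] = δ`, `[δ,∂₊] = 2∂₊`, `[δ,∂₋] = −2∂₋`. -/
theorem stmt_9 {K : Type*} [Field K] [CharZero K]
    {M : Type*} [AddCommGroup M] [Module.Free ℤ M] [Module.Finite ℤ M]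
    (D : Derivation K (RatFunc K) (RatFunc K)) (hD : D RatFunc.X = 1)
    (v₀ v₁ : M →+ ℤ) (e : M) (hv₀e : v₀ e = 1) (hv₁e : v₁ e = -1) :
    ∃ Dm Dp Dd : Derivation K (AddMonoidAlgebra (RatFunc K) M) (AddMonoidAlgebra (RatFunc K) M),
      (∀ (Q : RatFunc K) (m : M), Dm (AddMonoidAlgebra.single m Q) =
        AddMonoidAlgebra.single (m - e) ((v₀ m : RatFunc K) * Q + RatFunc.X * D Q)) ∧
      (∀ (Q : RatFunc K) (m : M), Dp (AddMonoidAlgebra.single m Q) =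
        AddMonoidAlgebra.single (m + e) ((v₁ m : RatFunc K) * Q + (RatFunc.X - 1) * D Q)) ∧
      (∀ (Q : RatFunc K) (m : M), Dd (AddMonoidAlgebra.single m Q) =
        AddMonoidAlgebra.single m (((v₀ m - v₁ m : ℤ) : RatFunc K) * Q)) ∧
      (∀ f, Dp (Dm f) - Dm (Dp f) = Dd f) ∧
      (∀ f, Dd (Dp f) - Dp (Dd f) = 2 • Dp f) ∧
      (∀ f, Dd (Dm f) - Dm (Dd f) = -(2 • Dm f)) := by
  -- Derivation of integer casts vanishes
  have hD0 : ∀ n : ℤ, D (n : RatFunc K) = 0 := by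
    intro n
    have : ((n : ℤ) : RatFunc K) = n • (1 : RatFunc K) := by
      rw [zsmul_eq_mul]; ring
    rw [this, map_zsmul, Derivation.map_one_eq_zero, smul_zero]
  have hDc : ∀ (n : ℤ) (Q : RatFunc K), D ((n : RatFunc K) * Q) = (n : RatFunc K) * D Q := by
    intro n Q
    rw [Derivation.leibniz, smul_eq_mul, smul_eq_mul, hD0, mul_zero, add_zero]
  refine ⟨mkDer D v₀ (-e) RatFunc.X, mkDer D v₁ e (RatFunc.X - 1),
    mkDer D (v₀ - v₁) 0 0, ?_, ?_, ?_, ?_, ?_, ?_⟩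
  · intro Q m
    rw [mkDer_single, sub_eq_add_neg]
  · intro Q m
    rw [mkDer_single]
  · intro Q m
    rw [mkDer_single]
    simp
  · intro f
    induction f using AddMonoidAlgebra.induction_linear with
    | zero => simp
    | add f g hf hg => simp only [map_add]; rw [← hf, ← hg]; abel
    | single m Q =>
        rw [mkDer_single, mkDer_single, mkDer_single, mkDer_single, mkDer_single]
        have h1 : m + -e + e = m := by abel
        have h2 : m + e + -e = m := by abel
        have h3 : m + 0 = m := by abel
        rw [h1, h2, h3, ← AddMonoidAlgebra.single_sub]
        congr 1
        simp only [map_add, map_sub, map_neg, map_zero, hDc, Derivation.leibniz, smul_eq_mul, hD, hD0,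
          Derivation.map_one_eq_zero, hv₀e, hv₁e, AddMonoidHom.sub_apply]
        push_cast
        ring
  · intro f
    induction f using AddMonoidAlgebra.induction_linear with
    | zero => simp
    | add f g hf hg => simp only [map_add, smul_add]; rw [← hf, ← hg]; abel
    | single m Q =>
        rw [mkDer_single, mkDer_single, mkDer_single, mkDer_single]
        have h3 : m + e + 0 = m + e := by abel
        have h4 : m + 0 = m := by abel
        rw [h3, h4, AddMonoidAlgebra.smul_single, ← AddMonoidAlgebra.single_sub]
        congr 1
        simp only [map_add, map_sub, map_neg, map_zero, hDc, Derivation.leibniz, smul_eq_mul, hD, hD0,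
          Derivation.map_one_eq_zero, hv₀e, hv₁e, AddMonoidHom.sub_apply, nsmul_eq_mul,
          Nat.cast_ofNat]
        push_cast
        ring
  · intro f
    induction f using AddMonoidAlgebra.induction_linear with
    | zero => simp
    | add f g hf hg => simp only [map_add, smul_add, neg_add]; rw [← hf, ← hg]; abel
    | single m Q =>
        rw [mkDer_single, mkDer_single, mkDer_single, mkDer_single]
        have h3 : m + -e + 0 = m + -e := by abel
        have h4 : m + 0 = m := by abel
        rw [h3, h4, AddMonoidAlgebra.smul_single, ← AddMonoidAlgebra.single_neg, ← AddMonoidAlgebra.single_sub]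
        congr 1
        simp only [map_add, map_sub, map_neg, map_zero, hDc, Derivation.leibniz, smul_eq_mul, hD, hD0,
          Derivation.map_one_eq_zero, hv₀e, hv₁e, AddMonoidHom.sub_apply, nsmul_eq_mul,
          Nat.cast_ofNat]
        push_cast
        ring
end

section
/- The K-linear maps ∂₋, ∂₊, δ of K(t)[M] determined by ∂₋(Qχ^m) = 2(v₀(m)Q + tQ′)χ^{m−e}, ∂₊(Qχ^m) = 2((v₀(m)(1 − 1/t) + v₁(m))Q + (t−1)Q′)χ^{m+e}, and δ(Qχ^m) = −2v₁(m)·Q·χ^m are K-derivations of K(t)[M] and satisfy the sl₂-relations ∂₊∘∂₋ − ∂₋∘∂₊ = δ, δ∘∂₊ − ∂₊∘δ = 2∂₊, and δ∘∂₋ − ∂₋∘δ = −2∂₋. -/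
section Aux

variable {K : Type*} [Field K] {M : Type*} [AddCommGroup M]

private lemma amaInduction {R : Type*} [CommRing R] {p : AddMonoidAlgebra R M → Prop}
    (f : AddMonoidAlgebra R M) (h0 : p 0) (hadd : ∀ f g, p f → p g → p (f + g))
    (hsingle : ∀ (m : M) (Q : R), p (AddMonoidAlgebra.single m Q)) : p f :=
  AddMonoidAlgebra.induction_linear f h0 hadd hsingle

private noncomputable def auxL (D : Derivation K (RatFunc K) (RatFunc K)) (s : M)
    (c : M → RatFunc K) (P : RatFunc K) :
    AddMonoidAlgebra (RatFunc K) M →ₗ[K] AddMonoidAlgebra (RatFunc K) M :=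
  (AddMonoidAlgebra.coeffLinearEquiv K).symm.toLinearMap ∘ₗ (Finsupp.lsum K fun m => (Finsupp.lsingle (m + s)).comp
    (LinearMap.mulLeft K (c m) + (LinearMap.mulLeft K P).comp D.toLinearMap)) ∘ₗ
    (AddMonoidAlgebra.coeffLinearEquiv K).toLinearMap

private lemma auxL_single (D : Derivation K (RatFunc K) (RatFunc K)) (s : M)
    (c : M → RatFunc K) (P : RatFunc K) (m : M) (Q : RatFunc K) :
    auxL D s c P (AddMonoidAlgebra.single m Q)
      = AddMonoidAlgebra.single (m + s) (c m * Q + P * D Q) := by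
  rw [auxL]
  show (AddMonoidAlgebra.coeffLinearEquiv K).symm (Finsupp.lsum K _ (Finsupp.single m Q)) = _
  erw [Finsupp.lsum_single]
  rfl

private lemma auxL_leibniz (D : Derivation K (RatFunc K) (RatFunc K)) (s : M)
    (c : M → RatFunc K) (P : RatFunc K) (hc : ∀ m n, c (m + n) = c m + c n)
    (a b : AddMonoidAlgebra (RatFunc K) M) :
    auxL D s c P (a * b) = a * auxL D s c P b + b * auxL D s c P a := by
  induction a using amaInduction with
  | h0 => simp
  | hadd f g hf hg => rw [add_mul, map_add, hf, hg, map_add]; ring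
  | hsingle m Q =>
    induction b using amaInduction with
    | h0 => simp
    | hadd f g hf hg => rw [mul_add, map_add, hf, hg, map_add]; ring
    | hsingle n R =>
      rw [AddMonoidAlgebra.single_mul_single, auxL_single, auxL_single, auxL_single,
        AddMonoidAlgebra.single_mul_single, AddMonoidAlgebra.single_mul_single,
        show m + (n + s) = m + n + s by abel, show n + (m + s) = m + n + s by abel,
        ← AddMonoidAlgebra.single_add]
      congr 1
      rw [hc, D.leibniz, smul_eq_mul, smul_eq_mul]
      ring

private noncomputable def auxDer (D : Derivation K (RatFunc K) (RatFunc K)) (s : M)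
    (c : M → RatFunc K) (P : RatFunc K) (hc : ∀ m n, c (m + n) = c m + c n) :
    Derivation K (AddMonoidAlgebra (RatFunc K) M) (AddMonoidAlgebra (RatFunc K) M) where
  toLinearMap := auxL D s c P
  map_one_eq_zero' := by
    have h := hc 0 0
    rw [add_zero] at h
    have hc0 : c 0 = 0 := left_eq_add.mp h
    have : (1 : AddMonoidAlgebra (RatFunc K) M) = AddMonoidAlgebra.single 0 1 := rfl
    rw [this, auxL_single]
    simp [hc0]
  leibniz' a b := by
    simp only [smul_eq_mul]
    exact auxL_leibniz D s c P hc a b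

private lemma auxDer_single (D : Derivation K (RatFunc K) (RatFunc K)) (s : M)
    (c : M → RatFunc K) (P : RatFunc K) (hc : ∀ m n, c (m + n) = c m + c n)
    (m : M) (Q : RatFunc K) :
    auxDer D s c P hc (AddMonoidAlgebra.single m Q)
      = AddMonoidAlgebra.single (m + s) (c m * Q + P * D Q) :=
  auxL_single D s c P m Q

private lemma single_sub' {R : Type*} [Ring R] (a : M) (b₁ b₂ : R) :
    (AddMonoidAlgebra.single a b₁ - AddMonoidAlgebra.single a b₂ : AddMonoidAlgebra R M) =
      AddMonoidAlgebra.single a (b₁ - b₂) :=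
  (AddMonoidAlgebra.single_sub _ _ _).symm

private lemma two_smul_single {R : Type*} [Ring R] (a : M) (b : R) :
    (2 • (AddMonoidAlgebra.single a b : AddMonoidAlgebra R M)) =
      AddMonoidAlgebra.single a (2 * b) := by
  rw [two_nsmul, ← AddMonoidAlgebra.single_add, two_mul]

private lemma single_neg' {R : Type*} [Ring R] (a : M) (b : R) :
    (-(AddMonoidAlgebra.single a b) : AddMonoidAlgebra R M) = AddMonoidAlgebra.single a (-b) :=
  (AddMonoidAlgebra.single_neg _ _).symm

end Aux

/-- Skew sl₂-triple: given `v₁ : M → ℤ` a homomorphism, `v₀ : M → ℚ` with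
`2v₀` a homomorphism `M → ℤ`, `2v₀(e) = 1`, `v₁(e) = −1`, the `K`-linear maps of `K(t)[M]`
determined by `∂₋(Qχ^m) = 2(v₀(m)Q + tQ′)χ^{m−e}`,
`∂₊(Qχ^m) = 2((v₀(m)(1 − 1/t) + v₁(m))Q + (t−1)Q′)χ^{m+e}`, and
`δ(Qχ^m) = −2v₁(m)·Q·χ^m` are `K`-derivations and satisfy the sl₂-relations
`[∂₊,∂₋] = δ`, `[δ,∂₊] = 2∂₊`, `[δ,∂₋] = −2∂₋`. -/
theorem stmt_10 {K : Type*} [Field K] [CharZero K]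
    {M : Type*} [AddCommGroup M] [Module.Free ℤ M] [Module.Finite ℤ M]
    (D : Derivation K (RatFunc K) (RatFunc K)) (hD : D RatFunc.X = 1)
    (v₀ : M →+ ℚ) (h2v₀ : ∀ m : M, ∃ n : ℤ, (n : ℚ) = 2 * v₀ m)
    (v₁ : M →+ ℤ) (e : M) (hv₀e : 2 * v₀ e = 1) (hv₁e : v₁ e = -1) :
    ∃ Dm Dp Dd : Derivation K (AddMonoidAlgebra (RatFunc K) M) (AddMonoidAlgebra (RatFunc K) M),
      (∀ (Q : RatFunc K) (m : M), Dm (AddMonoidAlgebra.single m Q) =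
        AddMonoidAlgebra.single (m - e)
          (2 * (((v₀ m : ℚ) : RatFunc K) * Q + RatFunc.X * D Q))) ∧
      (∀ (Q : RatFunc K) (m : M), Dp (AddMonoidAlgebra.single m Q) =
        AddMonoidAlgebra.single (m + e)
          (2 * ((((v₀ m : ℚ) : RatFunc K) * (1 - RatFunc.X⁻¹) + (v₁ m : RatFunc K)) * Q +
            (RatFunc.X - 1) * D Q))) ∧
      (∀ (Q : RatFunc K) (m : M), Dd (AddMonoidAlgebra.single m Q) =
        AddMonoidAlgebra.single m (-(2 * (v₁ m : RatFunc K)) * Q)) ∧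
      (∀ f, Dp (Dm f) - Dm (Dp f) = Dd f) ∧
      (∀ f, Dd (Dp f) - Dp (Dd f) = 2 • Dp f) ∧
      (∀ f, Dd (Dm f) - Dm (Dd f) = -(2 • Dm f)) := by
  classical
  haveI : CharZero (RatFunc K) :=
    charZero_of_injective_algebraMap (algebraMap K (RatFunc K)).injective
  have hX : (RatFunc.X : RatFunc K) ≠ 0 := RatFunc.X_ne_zero
  have hDq : ∀ q : ℚ, D ((q : ℚ) : RatFunc K) = 0 := fun q => by
    rw [← map_ratCast (algebraMap K (RatFunc K)) q]; exact D.map_algebraMap _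
  have hDz : ∀ n : ℤ, D ((n : ℤ) : RatFunc K) = 0 := fun n => D.map_intCast n
  have hD2 : D (2 : RatFunc K) = 0 := by
    rw [show (2 : RatFunc K) = ((2 : ℤ) : RatFunc K) by norm_num]; exact D.map_intCast 2
  have hD1 : D (1 : RatFunc K) = 0 := D.map_one_eq_zero
  have hDinv : D (RatFunc.X : RatFunc K)⁻¹ = RatFunc.X⁻¹ * RatFunc.X⁻¹ * (-1) := by
    rw [D.leibniz_inv, hD, sq, smul_eq_mul, mul_one]; ring
  have hD2i : D (2 : RatFunc K)⁻¹ = 0 := by rw [D.leibniz_inv, hD2, smul_zero]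
  have hv0e : (v₀ e : ℚ) = 1/2 := by linarith
  have h1 : ∀ m : M, ((v₀ (m - e) : ℚ) : RatFunc K) = ((v₀ m : ℚ) : RatFunc K) - 2⁻¹ := by
    intro m; rw [map_sub, hv0e]; push_cast; ring
  have h2 : ∀ m : M, ((v₀ (m + e) : ℚ) : RatFunc K) = ((v₀ m : ℚ) : RatFunc K) + 2⁻¹ := by
    intro m; rw [map_add, hv0e]; push_cast; ring
  have h3 : ∀ m : M, ((v₁ (m - e) : ℤ) : RatFunc K) = ((v₁ m : ℤ) : RatFunc K) + 1 := by
    intro m; rw [map_sub, hv₁e]; push_cast; ring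
  have h4 : ∀ m : M, ((v₁ (m + e) : ℤ) : RatFunc K) = ((v₁ m : ℤ) : RatFunc K) - 1 := by
    intro m; rw [map_add, hv₁e]; push_cast; ring
  set cm : M → RatFunc K := fun m => 2 * ((v₀ m : ℚ) : RatFunc K) with hcm
  set cp : M → RatFunc K := fun m =>
    2 * (((v₀ m : ℚ) : RatFunc K) * (1 - RatFunc.X⁻¹) + ((v₁ m : ℤ) : RatFunc K)) with hcp
  set cd : M → RatFunc K := fun m => -(2 * ((v₁ m : ℤ) : RatFunc K)) with hcd
  have hcm' : ∀ m n, cm (m + n) = cm m + cm n := by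
    intro m n; simp only [hcm, map_add]; push_cast; ring
  have hcp' : ∀ m n, cp (m + n) = cp m + cp n := by
    intro m n; simp only [hcp, map_add]; push_cast; ring
  have hcd' : ∀ m n, cd (m + n) = cd m + cd n := by
    intro m n; simp only [hcd, map_add]; push_cast; ring
  set Dm := auxDer D (-e) cm (2 * RatFunc.X) hcm' with hDmdef
  set Dp := auxDer D e cp (2 * (RatFunc.X - 1)) hcp' with hDpdef
  set Dd := auxDer D 0 cd 0 hcd' with hDddef
  have sm : ∀ (Q : RatFunc K) (m : M), Dm (AddMonoidAlgebra.single m Q) =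
      AddMonoidAlgebra.single (m - e)
        (2 * (((v₀ m : ℚ) : RatFunc K) * Q + RatFunc.X * D Q)) := by
    intro Q m
    rw [hDmdef, auxDer_single, ← sub_eq_add_neg]
    congr 1
    simp only [hcm]; ring
  have sp : ∀ (Q : RatFunc K) (m : M), Dp (AddMonoidAlgebra.single m Q) =
      AddMonoidAlgebra.single (m + e)
        (2 * ((((v₀ m : ℚ) : RatFunc K) * (1 - RatFunc.X⁻¹) + (v₁ m : RatFunc K)) * Q +
          (RatFunc.X - 1) * D Q)) := by
    intro Q m
    rw [hDpdef, auxDer_single]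
    congr 1
    simp only [hcp]; ring
  have sd : ∀ (Q : RatFunc K) (m : M), Dd (AddMonoidAlgebra.single m Q) =
      AddMonoidAlgebra.single m (-(2 * (v₁ m : RatFunc K)) * Q) := by
    intro Q m
    rw [hDddef, auxDer_single, add_zero]
    congr 1
    simp only [hcd]; ring
  refine ⟨Dm, Dp, Dd, sm, sp, sd, ?_, ?_, ?_⟩
  · intro f
    induction f using amaInduction with
    | h0 => simp
    | hadd f g hf hg => simp only [map_add]; rw [← hf, ← hg]; abel
    | hsingle m Q =>
      rw [sm Q m, sp _ (m - e), sp Q m, sm _ (m + e), sd Q m,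
        show m - e + e = m by abel, show m + e - e = m by abel, single_sub']
      congr 1
      rw [h1 m, h3 m, h2 m]
      simp only [Derivation.leibniz, map_add, map_sub, smul_eq_mul, hD, hD1, hD2, hD2i, hDinv,
        hDq, hDz]
      have hXu : RatFunc.X * (RatFunc.X : RatFunc K)⁻¹ = 1 := mul_inv_cancel₀ hX
      linear_combination (2 * D Q - 4 * ((v₀ m : ℚ) : RatFunc K) * RatFunc.X⁻¹ * Q) * hXu
  · intro f
    induction f using amaInduction with
    | h0 => simp
    | hadd f g hf hg => simp only [map_add, smul_add]; rw [← hf, ← hg]; abel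
    | hsingle m Q =>
      rw [sp Q m, sd _ (m + e), sd Q m, sp _ m, two_smul_single, single_sub']
      congr 1
      rw [h4 m]
      simp only [Derivation.leibniz, map_add, map_sub, map_neg, smul_eq_mul, hD, hD1, hD2, hD2i,
        hDinv, hDq, hDz]
      ring
  · intro f
    induction f using amaInduction with
    | h0 => simp
    | hadd f g hf hg => simp only [map_add, smul_add, neg_add]; rw [← hf, ← hg]; abel
    | hsingle m Q =>
      rw [sm Q m, sd _ (m - e), sd Q m, sm _ m, two_smul_single, single_neg', single_sub']
      congr 1
      rw [h3 m]
      simp only [Derivation.leibniz, map_add, map_sub, map_neg, smul_eq_mul, hD, hD1, hD2, hD2i,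
        hDinv, hDq, hDz]
      ring
end

section
/- Let ρ₋, ρ₊ ∈ Hom(M,ℤ) and e ∈ M with ρ₋(e) = 1 and ρ₊(e) = −1. The K-linear maps of the group algebra K[M] determined by ∂₋(χ^m) = ρ₋(m)χ^{m−e}, ∂₊(χ^m) = ρ₊(m)χ^{m+e}, and δ(χ^m) = (ρ₋(m) − ρ₊(m))χ^m are K-derivations and satisfy the sl₂-relations ∂₊∘∂₋ − ∂₋∘∂₊ = δ, δ∘∂₊ − ∂₊∘δ = 2∂₊, and δ∘∂₋ − ∂₋∘δ = −2∂₋. -/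
noncomputable def myDerivLM (K : Type*) [Field K] {M : Type*} [AddCommGroup M]
    (ρ : M →+ ℤ) (s : M) :
    AddMonoidAlgebra K M →ₗ[K] AddMonoidAlgebra K M :=
  (Finsupp.lsum K fun m =>
    LinearMap.toSpanSingleton K _ (AddMonoidAlgebra.single (m + s) ((ρ m : K)))) ∘ₗ
    (AddMonoidAlgebra.coeffLinearEquiv K).toLinearMap

theorem myDerivLM_single (K : Type*) [Field K] {M : Type*} [AddCommGroup M]
    (ρ : M →+ ℤ) (s : M) (m : M) (c : K) :
    myDerivLM K ρ s (AddMonoidAlgebra.single m c) =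
      AddMonoidAlgebra.single (m + s) (c * (ρ m : K)) := by
  rw [myDerivLM]
  erw [LinearMap.comp_apply, Finsupp.lsum_single (S := K)]
  rw [LinearMap.toSpanSingleton_apply, AddMonoidAlgebra.smul_single, smul_eq_mul]

noncomputable def myDeriv (K : Type*) [Field K] {M : Type*} [AddCommGroup M]
    (ρ : M →+ ℤ) (s : M) :
    Derivation K (AddMonoidAlgebra K M) (AddMonoidAlgebra K M) where
  toLinearMap := myDerivLM K ρ s
  map_one_eq_zero' := by
    have : (1 : AddMonoidAlgebra K M) = AddMonoidAlgebra.single 0 1 := rfl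
    rw [this, myDerivLM_single]; simp
  leibniz' a b := by
    induction a using AddMonoidAlgebra.induction_linear with
    | zero => simp
    | add f g hf hg =>
      simp only [add_mul, map_add, hf, hg, add_smul, smul_add]; abel
    | single m c =>
      induction b using AddMonoidAlgebra.induction_linear with
      | zero => simp
      | add f g hf hg =>
        simp only [mul_add, map_add, hf, hg, add_smul, smul_add]; abel
      | single n d =>
        rw [AddMonoidAlgebra.single_mul_single, myDerivLM_single,
          myDerivLM_single, myDerivLM_single]
        rw [smul_eq_mul, smul_eq_mul, AddMonoidAlgebra.single_mul_single,
          AddMonoidAlgebra.single_mul_single]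
        rw [show m + (n + s) = m + n + s by abel, show n + (m + s) = m + n + s by abel,
          ← AddMonoidAlgebra.single_add]
        congr 1
        push_cast [map_add]
        ring

theorem myDeriv_single (K : Type*) [Field K] {M : Type*} [AddCommGroup M]
    (ρ : M →+ ℤ) (s : M) (m : M) (c : K) :
    myDeriv K ρ s (AddMonoidAlgebra.single m c) =
      AddMonoidAlgebra.single (m + s) (c * (ρ m : K)) := by
  change myDerivLM K ρ s _ = _
  exact myDerivLM_single K ρ s m c

/-- Let `ρ₋, ρ₊ : M → ℤ` be homomorphisms and `e ∈ M` with `ρ₋(e) = 1`,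
`ρ₊(e) = −1`.  The `K`-linear maps of the group algebra `K[M]` determined by
`∂₋(χ^m) = ρ₋(m)χ^{m−e}`, `∂₊(χ^m) = ρ₊(m)χ^{m+e}`, `δ(χ^m) = (ρ₋(m) − ρ₊(m))χ^m`
are `K`-derivations and satisfy the sl₂-relations `[∂₊,∂₋] = δ`, `[δ,∂₊] = 2∂₊`,
`[δ,∂₋] = −2∂₋`. -/
theorem stmt_11 {K : Type*} [Field K] [CharZero K]
    {M : Type*} [AddCommGroup M] [Module.Free ℤ M] [Module.Finite ℤ M]
    (ρm ρp : M →+ ℤ) (e : M) (hρm : ρm e = 1) (hρp : ρp e = -1) :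
    ∃ Dm Dp Dd : Derivation K (AddMonoidAlgebra K M) (AddMonoidAlgebra K M),
      (∀ m : M, Dm (AddMonoidAlgebra.single m (1 : K)) =
        AddMonoidAlgebra.single (m - e) ((ρm m : K))) ∧
      (∀ m : M, Dp (AddMonoidAlgebra.single m (1 : K)) =
        AddMonoidAlgebra.single (m + e) ((ρp m : K))) ∧
      (∀ m : M, Dd (AddMonoidAlgebra.single m (1 : K)) =
        AddMonoidAlgebra.single m ((ρm m - ρp m : ℤ) : K)) ∧
      (∀ f, Dp (Dm f) - Dm (Dp f) = Dd f) ∧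
      (∀ f, Dd (Dp f) - Dp (Dd f) = 2 • Dp f) ∧
      (∀ f, Dd (Dm f) - Dm (Dd f) = -(2 • Dm f)) := by
  refine ⟨myDeriv K ρm (-e), myDeriv K ρp e, myDeriv K (ρm - ρp) 0, ?_, ?_, ?_, ?_, ?_, ?_⟩
  · intro m; rw [myDeriv_single]; simp [sub_eq_add_neg]
  · intro m; rw [myDeriv_single]; simp
  · intro m; rw [myDeriv_single]; simp
  · intro f
    induction f using AddMonoidAlgebra.induction_linear with
    | zero => simp
    | add f g hf hg => simp only [map_add, smul_add, neg_add]; rw [← hf, ← hg]; abel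
    | single m c =>
      rw [myDeriv_single, myDeriv_single, myDeriv_single, myDeriv_single, myDeriv_single]
      rw [show m + -e + e = m by abel, show m + e + -e = m by abel, add_zero,
        ← AddMonoidAlgebra.single_sub]
      congr 1
      push_cast [map_add, map_neg, map_zero, AddMonoidHom.sub_apply, hρm, hρp]
      ring
  · intro f
    induction f using AddMonoidAlgebra.induction_linear with
    | zero => simp
    | add f g hf hg => simp only [map_add, smul_add, neg_add]; rw [← hf, ← hg]; abel
    | single m c =>
      rw [myDeriv_single, myDeriv_single, myDeriv_single, myDeriv_single]
      rw [show m + e + 0 = m + e by abel, show m + 0 + e = m + e by abel,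
        ← AddMonoidAlgebra.single_sub, AddMonoidAlgebra.smul_single]
      congr 1
      push_cast [map_add, map_zero, AddMonoidHom.sub_apply, hρm, hρp]
      ring
  · intro f
    induction f using AddMonoidAlgebra.induction_linear with
    | zero => simp
    | add f g hf hg => simp only [map_add, smul_add, neg_add]; rw [← hf, ← hg]; abel
    | single m c =>
      rw [myDeriv_single, myDeriv_single, myDeriv_single, myDeriv_single]
      rw [show m + -e + 0 = m + -e by abel, show m + 0 + -e = m + -e by abel,
        ← AddMonoidAlgebra.single_sub, AddMonoidAlgebra.smul_single, ← AddMonoidAlgebra.single_neg]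
      congr 1
      push_cast [map_add, map_neg, map_zero, AddMonoidHom.sub_apply, hρm, hρp]
      ring
end

section
/- The center of the semidirect product G = SL₂(K) ⋊_ε T consists exactly of the elements ((a, 0; 0, a⁻¹), t) with a ∈ K∖{0}, t ∈ T, and a² = χ(t). -/
open Matrix

/-- Let `K` be a field of characteristic zero, `T` an abelian group,
`χ : T → Kˣ` a group homomorphism, and `ε : T → Aut(SL₂(K))` the homomorphism with
`ε(t)(a,b;c,d) = (a, χ(t)⁻¹b; χ(t)c, d)`.  The center of the semidirect product
`G = SL₂(K) ⋊_ε T` consists exactly of the elements `((a,0;0,a⁻¹), t)` with `a ∈ K∖{0}`,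
`t ∈ T`, and `a² = χ(t)`. -/
theorem stmt_13 {K : Type*} [Field K] [CharZero K] {T : Type*} [CommGroup T]
    (χ : T →* Kˣ)
    (ε : T →* MulAut (Matrix.SpecialLinearGroup (Fin 2) K))
    (hε : ∀ (t : T) (A : Matrix.SpecialLinearGroup (Fin 2) K),
      ((ε t A : Matrix.SpecialLinearGroup (Fin 2) K) : Matrix (Fin 2) (Fin 2) K) =
        !![(A : Matrix (Fin 2) (Fin 2) K) 0 0, ((χ t : K))⁻¹ * (A : Matrix (Fin 2) (Fin 2) K) 0 1;
           (χ t : K) * (A : Matrix (Fin 2) (Fin 2) K) 1 0, (A : Matrix (Fin 2) (Fin 2) K) 1 1]) :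
    ∀ g : Matrix.SpecialLinearGroup (Fin 2) K ⋊[ε] T,
      g ∈ Subgroup.center (Matrix.SpecialLinearGroup (Fin 2) K ⋊[ε] T) ↔
        ∃ a : K, a ≠ 0 ∧
          (g.left : Matrix (Fin 2) (Fin 2) K) = !![a, 0; 0, a⁻¹] ∧
          a ^ 2 = (χ g.right : K) := by
  intro g
  constructor
  · intro hg
    rw [Subgroup.mem_center_iff] at hg
    have d1 : (!![1,1;0,1] : Matrix (Fin 2) (Fin 2) K).det = 1 := by
      simp [Matrix.det_fin_two_of]
    have d2 : (!![1,0;1,1] : Matrix (Fin 2) (Fin 2) K).det = 1 := by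
      simp [Matrix.det_fin_two_of]
    obtain ⟨Ad1, hAd1⟩ : ∃ A : Matrix.SpecialLinearGroup (Fin 2) K,
        (A : Matrix (Fin 2) (Fin 2) K) = !![1,1;0,1] := ⟨⟨_, d1⟩, rfl⟩
    have h1 := congrArg SemidirectProduct.left (hg (SemidirectProduct.inl Ad1))
    obtain ⟨Ad2, hAd2⟩ : ∃ A : Matrix.SpecialLinearGroup (Fin 2) K,
        (A : Matrix (Fin 2) (Fin 2) K) = !![1,0;1,1] := ⟨⟨_, d2⟩, rfl⟩
    have h2 := congrArg SemidirectProduct.left (hg (SemidirectProduct.inl Ad2))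
    simp only [SemidirectProduct.mul_left, SemidirectProduct.left_inl,
      SemidirectProduct.right_inl, _root_.map_one, MulAut.one_apply] at h1 h2
    have h1' := congrArg (fun X : Matrix.SpecialLinearGroup (Fin 2) K => (X : Matrix (Fin 2) (Fin 2) K)) h1
    have h2' := congrArg (fun X : Matrix.SpecialLinearGroup (Fin 2) K => (X : Matrix (Fin 2) (Fin 2) K)) h2
    simp only [Matrix.SpecialLinearGroup.coe_mul, hε] at h1' h2'
    have e100 := congrFun (congrFun h1' 0) 0
    have e101 := congrFun (congrFun h1' 0) 1
    have e211 := congrFun (congrFun h2' 1) 1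
    have e210 := congrFun (congrFun h2' 1) 0
    simp [Matrix.mul_apply, Fin.sum_univ_two, hAd1, hAd2] at e100 e101 e211 e210
    have hc : (g.left : Matrix (Fin 2) (Fin 2) K) 1 0 = 0 := e100
    have hb : (g.left : Matrix (Fin 2) (Fin 2) K) 0 1 = 0 := e211
    have hdet : (g.left : Matrix (Fin 2) (Fin 2) K) 0 0 * (g.left : Matrix (Fin 2) (Fin 2) K) 1 1
        - (g.left : Matrix (Fin 2) (Fin 2) K) 0 1 * (g.left : Matrix (Fin 2) (Fin 2) K) 1 0 = 1 := by
      rw [← Matrix.det_fin_two]; exact g.left.2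
    rw [hb, hc, mul_zero, sub_zero] at hdet
    have ha : (g.left : Matrix (Fin 2) (Fin 2) K) 0 0 ≠ 0 := left_ne_zero_of_mul_eq_one hdet
    have hd : (g.left : Matrix (Fin 2) (Fin 2) K) 1 1 = ((g.left : Matrix (Fin 2) (Fin 2) K) 0 0)⁻¹ :=
      eq_inv_of_mul_eq_one_right (by linear_combination hdet)
    refine ⟨(g.left : Matrix (Fin 2) (Fin 2) K) 0 0, ha, ?_, ?_⟩
    · ext i j
      fin_cases i <;> fin_cases j <;> simp [hb, hc, hd]
    · -- from e210 with hc : a = d * χ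
      rw [hc, hd] at e210
      have hχ : ((χ g.right : K)) ≠ 0 := (χ g.right).ne_zero
      field_simp at e210
      rw [sq]
      linear_combination e210
  · rintro ⟨a, ha, hM, ha2⟩
    rw [Subgroup.mem_center_iff]
    intro h
    refine SemidirectProduct.ext ?_ ?_
    · simp only [SemidirectProduct.mul_left]
      apply Subtype.ext
      show (h.left : Matrix (Fin 2) (Fin 2) K) * _ = (g.left : Matrix (Fin 2) (Fin 2) K) * _
      rw [hε, hε, hM]
      have hχ : ((χ g.right : K)) = a ^ 2 := ha2.symm
      ext i j
      fin_cases i <;> fin_cases j <;>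
        simp [Matrix.mul_apply, Fin.sum_univ_two, hM, hχ] <;>
        (try field_simp) <;> (try ring)
    · simp only [SemidirectProduct.mul_right]
      exact mul_comm _ _
end

section
/- Let R = K[a,b,c,d]/(ad − bc − 1), and let the multiplicative group K∖{0} act on R by K-algebra automorphisms via λ·a = λa, λ·b = λ⁻¹b, λ·c = λc, λ·d = λ⁻¹d. Then the subalgebra R^{K∖{0}} of invariants equals the K-subalgebra of R generated by ab, cd, and ad + bc, and the K-algebra homomorphism K[x,y,z]/(z² − 4xy − 1) → R sending x ↦ ab, y ↦ cd, z ↦ ad + bc is injective with image R^{K∖{0}}; in particular R^{K∖{0}} ≅ K[x,y,z]/(z² − 4xy − 1). -/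
set_option linter.unusedSectionVars false
set_option linter.unusedTactic false


open MvPolynomial

set_option synthInstance.maxHeartbeats 1000000
set_option maxHeartbeats 1000000

/-- The coordinate ring `R = K[a,b,c,d]/(ad − bc − 1)` of `SL₂`. -/
noncomputable abbrev SL2Ring (K : Type*) [Field K] : Type _ :=
  MvPolynomial (Fin 4) K ⧸
    (Ideal.span {X 0 * X 3 - X 1 * X 2 - 1} : Ideal (MvPolynomial (Fin 4) K))

/-- the class of `a` in `R` -/
noncomputable abbrev sl2a (K : Type*) [Field K] : SL2Ring K := Ideal.Quotient.mk _ (X 0)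
/-- the class of `b` in `R` -/
noncomputable abbrev sl2b (K : Type*) [Field K] : SL2Ring K := Ideal.Quotient.mk _ (X 1)
/-- the class of `c` in `R` -/
noncomputable abbrev sl2c (K : Type*) [Field K] : SL2Ring K := Ideal.Quotient.mk _ (X 2)
/-- the class of `d` in `R` -/
noncomputable abbrev sl2d (K : Type*) [Field K] : SL2Ring K := Ideal.Quotient.mk _ (X 3)

/-- The ring `K[x,y,z]/(z² − 4xy − 1)`. -/
noncomputable abbrev XYZRing (K : Type*) [Field K] : Type _ :=
  MvPolynomial (Fin 3) K ⧸
    (Ideal.span {X 2 ^ 2 - 4 * (X 0 * X 1) - 1} : Ideal (MvPolynomial (Fin 3) K))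

noncomputable section
open Polynomial LaurentPolynomial
namespace Stmt14
variable {K : Type*} [Field K] [CharZero K]

abbrev L (K : Type*) [Field K] := LaurentPolynomial (Polynomial K)

/-- `T` as a monoid hom. -/
def Tmon (K : Type*) [Field K] : Multiplicative ℤ →* L K where
  toFun n := T (Multiplicative.toAdd n)
  map_one' := T_zero
  map_mul' _ _ := T_add _ _

/-- map on coefficients -/
def Mc (θ : Polynomial K →+* Polynomial K) : L K →+* L K :=
  AddMonoidAlgebra.liftNCRingHom (LaurentPolynomial.C.comp θ) (Tmon K)
    (fun _ _ => Commute.all _ _)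

lemma Mc_single (θ : Polynomial K →+* Polynomial K) (n : ℤ) (p : Polynomial K) :
    Mc θ (AddMonoidAlgebra.single n p) = AddMonoidAlgebra.single n (θ p) := by
  have : Mc θ (AddMonoidAlgebra.single n p) = LaurentPolynomial.C (θ p) * T n :=
    AddMonoidAlgebra.liftNC_single _ _ _ _
  rw [this, ← single_eq_C_mul_T]

lemma Mc_apply (θ : Polynomial K →+* Polynomial K) (u : L K) (m : ℤ) :
    (Mc θ u).coeff m = θ (u.coeff m) := by
  induction u using AddMonoidAlgebra.induction_linear with
  | zero => simp
  | add f g hf hg =>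
      rw [map_add, AddMonoidAlgebra.coeff_add, AddMonoidAlgebra.coeff_add, Finsupp.add_apply,
        Finsupp.add_apply, hf, hg, map_add]
  | single n p =>
      rw [Mc_single, AddMonoidAlgebra.coeff_single, AddMonoidAlgebra.coeff_single,
        Finsupp.single_apply, Finsupp.single_apply]
      split_ifs with h
      · rfl
      · exact (map_zero θ).symm

/-- `x ↦ T, y ↦ X·T⁻¹` -/
def delta' : MvPolynomial (Fin 2) K →ₐ[K] L K :=
  MvPolynomial.aeval ![T 1, AddMonoidAlgebra.single (-1 : ℤ) (Polynomial.X : Polynomial K)]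

/-- `x ↦ T, y ↦ (X+X²)·T⁻¹` -/
def deltaW : MvPolynomial (Fin 2) K →ₐ[K] L K :=
  MvPolynomial.aeval ![T 1, AddMonoidAlgebra.single (-1 : ℤ) (Polynomial.X + Polynomial.X ^ 2 : Polynomial K)]

lemma algebraMap_L (k : K) :
    algebraMap K (L K) k = AddMonoidAlgebra.single (0 : ℤ) (Polynomial.C k) := rfl

lemma delta'_X0 : (delta' (MvPolynomial.X 0) : L K) = T 1 := by
  simp [delta', MvPolynomial.aeval_X]

lemma delta'_X1 : (delta' (MvPolynomial.X 1) : L K)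
    = AddMonoidAlgebra.single (-1 : ℤ) (Polynomial.X : Polynomial K) := by
  simp [delta', MvPolynomial.aeval_X]

lemma deltaW_X0 : (deltaW (MvPolynomial.X 0) : L K) = T 1 := by
  simp [deltaW, MvPolynomial.aeval_X]

lemma deltaW_X1 : (deltaW (MvPolynomial.X 1) : L K)
    = AddMonoidAlgebra.single (-1 : ℤ) (Polynomial.X + Polynomial.X ^ 2 : Polynomial K) := by
  simp [deltaW, MvPolynomial.aeval_X]

lemma delta'_monomial (u : Fin 2 →₀ ℕ) (k : K) :
    delta' (monomial u k) =
      AddMonoidAlgebra.single ((u 0 : ℤ) - u 1) (Polynomial.C k * Polynomial.X ^ (u 1)) := by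
  rw [delta', MvPolynomial.aeval_monomial, Finsupp.prod_fintype _ _ (fun i => pow_zero _),
    Fin.prod_univ_two]
  simp only [Matrix.cons_val_zero, Matrix.cons_val_one, Matrix.head_cons]
  rw [algebraMap_L, T_pow, AddMonoidAlgebra.single_pow, LaurentPolynomial.T,
    AddMonoidAlgebra.single_mul_single, AddMonoidAlgebra.single_mul_single]
  congr 1
  · push_cast; ring
  · ring

lemma delta'_injective : Function.Injective (delta' (K := K)) := by
  rw [injective_iff_map_eq_zero]
  intro r hr
  have key : ∀ s : MvPolynomial (Fin 2) K, ∀ d : Fin 2 →₀ ℕ,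
      MvPolynomial.coeff d s = ((delta' s).coeff ((d 0 : ℤ) - d 1)).coeff (d 1) := by
    intro s
    induction s using MvPolynomial.induction_on' with
    | monomial u k =>
        intro d
        rw [delta'_monomial, MvPolynomial.coeff_monomial, AddMonoidAlgebra.coeff_single,
            Finsupp.single_apply]
        rcases eq_or_ne u d with rfl | h
        · simp
        · rw [if_neg h]
          split_ifs with h2
          · rw [Polynomial.coeff_C_mul, Polynomial.coeff_X_pow]
            split_ifs with h3
            · exfalso
              apply h
              apply Finsupp.ext
              intro i
              rcases (by decide : ∀ i : Fin 2, i = 0 ∨ i = 1) i with rfl | rfl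
              · omega
              · exact h3.symm
            · rw [mul_zero]
          · simp
    | add p q hp hq =>
        intro d
        rw [map_add, MvPolynomial.coeff_add, hp d, hq d, AddMonoidAlgebra.coeff_add, Finsupp.add_apply,
          Polynomial.coeff_add]
  ext d
  rw [key r d, hr]
  simp

lemma Mc_comp_delta' :
    ∀ s : MvPolynomial (Fin 2) K,
      Mc ((Polynomial.aeval (Polynomial.X + Polynomial.X ^ 2 : Polynomial K)).toRingHom)
        (delta' s) = deltaW s := by
  intro s
  have h : (Mc ((Polynomial.aeval (Polynomial.X + Polynomial.X ^ 2 : Polynomial K)).toRingHom)).comp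
      (delta' (K := K)).toRingHom = (deltaW (K := K)).toRingHom := by
    apply MvPolynomial.ringHom_ext
    · intro k
      simp only [RingHom.coe_comp, Function.comp_apply, AlgHom.toRingHom_eq_coe,
        RingHom.coe_coe]
      rw [show ((MvPolynomial.C k : MvPolynomial (Fin 2) K)) = algebraMap K _ k from rfl,
        AlgHom.commutes, AlgHom.commutes, algebraMap_L, Mc_single]
      congr 1
      exact Polynomial.aeval_C _ _
    · intro i
      rcases (by decide : ∀ i : Fin 2, i = 0 ∨ i = 1) i with rfl | rfl
      · simp only [RingHom.coe_comp, Function.comp_apply, AlgHom.toRingHom_eq_coe,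
          RingHom.coe_coe]
        rw [delta'_X0, deltaW_X0, LaurentPolynomial.T, Mc_single, map_one]
      · simp only [RingHom.coe_comp, Function.comp_apply, AlgHom.toRingHom_eq_coe,
          RingHom.coe_coe]
        rw [delta'_X1, deltaW_X1, Mc_single]
        congr 1
        simp
  exact DFunLike.congr_fun h s

lemma deltaW_injective : Function.Injective (deltaW (K := K)) := by
  rw [injective_iff_map_eq_zero]
  intro r hr
  apply delta'_injective
  rw [map_zero]
  apply LaurentPolynomial.ext
  intro m
  rw [← Mc_comp_delta'] at hr
  have h1 : ((Polynomial.aeval (Polynomial.X + Polynomial.X ^ 2 : Polynomial K)).toRingHom)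
      ((delta' r).coeff m) = 0 := by
    rw [← Mc_apply ((Polynomial.aeval (Polynomial.X + Polynomial.X ^ 2 :
      Polynomial K)).toRingHom), hr]
    rfl
  have h1' : Polynomial.eval₂ Polynomial.C (Polynomial.X + Polynomial.X ^ 2)
      ((delta' r).coeff m) = 0 := by
    have : ((Polynomial.aeval (Polynomial.X + Polynomial.X ^ 2 : Polynomial K)).toRingHom)
        ((delta' r).coeff m) = Polynomial.eval₂ (algebraMap K (Polynomial K))
          (Polynomial.X + Polynomial.X ^ 2) ((delta' r).coeff m) := Polynomial.aeval_def _ _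
    rw [this, Polynomial.algebraMap_eq] at h1
    exact h1
  have h2 : ((delta' r).coeff m).comp (Polynomial.X + Polynomial.X ^ 2) = 0 := h1'
  rcases Polynomial.comp_eq_zero_iff.mp h2 with h | ⟨-, h⟩
  · simpa using h
  · exfalso
    have := congrArg (fun p => Polynomial.coeff p 1) h
    simp at this

lemma flip_fix : ∀ s : MvPolynomial (Fin 2) K,
    Mc ((Polynomial.aeval (-1 - Polynomial.X : Polynomial K)).toRingHom) (deltaW s)
      = deltaW s := by
  intro s
  have h : (Mc ((Polynomial.aeval (-1 - Polynomial.X : Polynomial K)).toRingHom)).comp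
      (deltaW (K := K)).toRingHom = (deltaW (K := K)).toRingHom := by
    apply MvPolynomial.ringHom_ext
    · intro k
      simp only [RingHom.coe_comp, Function.comp_apply, AlgHom.toRingHom_eq_coe,
        RingHom.coe_coe]
      rw [show ((MvPolynomial.C k : MvPolynomial (Fin 2) K)) = algebraMap K _ k from rfl,
        AlgHom.commutes, algebraMap_L, Mc_single]
      congr 1
      exact Polynomial.aeval_C _ _
    · intro i
      rcases (by decide : ∀ i : Fin 2, i = 0 ∨ i = 1) i with rfl | rfl
      · simp only [RingHom.coe_comp, Function.comp_apply, AlgHom.toRingHom_eq_coe,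
          RingHom.coe_coe]
        rw [deltaW_X0, LaurentPolynomial.T, Mc_single, map_one]
      · simp only [RingHom.coe_comp, Function.comp_apply, AlgHom.toRingHom_eq_coe,
          RingHom.coe_coe]
        rw [deltaW_X1, Mc_single]
        congr 1
        simp only [AlgHom.toRingHom_eq_coe, RingHom.coe_coe, map_add, map_pow,
          Polynomial.aeval_X]
        ring
  exact DFunLike.congr_fun h s

lemma LC_ne_zero {p : Polynomial K} (hp : p ≠ 0) : (LaurentPolynomial.C p : L K) ≠ 0 := by
  intro h
  apply hp
  have h0 : (LaurentPolynomial.C p : L K).coeff 0 = (0 : L K).coeff 0 := by rw [h]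
  simpa using h0

lemma two_eq_C : (2 : L K) = LaurentPolynomial.C (2 : Polynomial K) := by
  rw [show (2 : Polynomial K) = 1 + 1 by norm_num, map_add, map_one]
  exact one_add_one_eq_two.symm

/-- The main pair lemma. -/
lemma main_pair (r₀ r₁ : MvPolynomial (Fin 2) K)
    (h : deltaW r₀ + deltaW r₁ * LaurentPolynomial.C (1 + 2 * Polynomial.X) = 0) :
    r₀ = 0 ∧ r₁ = 0 := by
  set θ := ((Polynomial.aeval (-1 - Polynomial.X : Polynomial K) :
    Polynomial K →ₐ[K] Polynomial K).toRingHom) with hθ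
  have h2 := congrArg (Mc θ) h
  rw [map_add, map_mul, map_zero, flip_fix, flip_fix] at h2
  have hC : Mc θ (LaurentPolynomial.C (1 + 2 * Polynomial.X : Polynomial K))
      = - LaurentPolynomial.C (1 + 2 * Polynomial.X : Polynomial K) := by
    rw [show (LaurentPolynomial.C (1 + 2 * Polynomial.X) : L K)
        = AddMonoidAlgebra.single (0:ℤ) (1 + 2 * Polynomial.X) from rfl, Mc_single]
    rw [show θ (1 + 2 * Polynomial.X) = -(1 + 2 * Polynomial.X) from by
      simp only [hθ, AlgHom.toRingHom_eq_coe, RingHom.coe_coe, map_add, map_mul,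
        map_one, Polynomial.aeval_X, map_ofNat]
      ring]
    rw [show (AddMonoidAlgebra.single (0:ℤ) (-(1 + 2 * Polynomial.X)) : L K)
        = LaurentPolynomial.C (-(1 + 2 * Polynomial.X)) from rfl, map_neg]
    rfl
  rw [hC] at h2
  have h2ne : (2 : L K) ≠ 0 := by
    rw [two_eq_C]
    exact LC_ne_zero two_ne_zero
  have hA : deltaW r₀ = 0 := by
    have hh : (2 : L K) * deltaW r₀ = 0 := by linear_combination h + h2
    rcases mul_eq_zero.mp hh with h' | h'
    · exact absurd h' h2ne
    · exact h'
  have hB : deltaW r₁ = 0 := by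
    rw [hA, zero_add] at h
    rcases mul_eq_zero.mp h with h' | h'
    · exact h'
    · exfalso
      refine LC_ne_zero (K := K) (p := 1 + 2 * Polynomial.X) ?_ h'
      intro hzz
      have := congrArg (fun p => Polynomial.coeff p 1) hzz
      simp [Polynomial.coeff_one] at this
  exact ⟨deltaW_injective (by rw [hA, map_zero]),
    deltaW_injective (by rw [hB, map_zero])⟩


section PartB

/-- relation polynomial in 4 variables -/
def f4 (K : Type*) [Field K] : MvPolynomial (Fin 4) K :=
  MvPolynomial.X 0 * MvPolynomial.X 3 - MvPolynomial.X 1 * MvPolynomial.X 2 - 1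

def I4 (K : Type*) [Field K] : Ideal (MvPolynomial (Fin 4) K) := Ideal.span {f4 K}

def g3 (K : Type*) [Field K] : MvPolynomial (Fin 3) K :=
  MvPolynomial.X 2 ^ 2 - 4 * (MvPolynomial.X 0 * MvPolynomial.X 1) - 1

def Phi2 : MvPolynomial (Fin 2) K →ₐ[K] MvPolynomial (Fin 4) K :=
  MvPolynomial.aeval ![MvPolynomial.X 0 * MvPolynomial.X 1, MvPolynomial.X 2 * MvPolynomial.X 3]

def Phi3 : MvPolynomial (Fin 3) K →ₐ[K] MvPolynomial (Fin 4) K :=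
  MvPolynomial.aeval ![MvPolynomial.X 0 * MvPolynomial.X 1, MvPolynomial.X 2 * MvPolynomial.X 3,
    MvPolynomial.X 0 * MvPolynomial.X 3 + MvPolynomial.X 1 * MvPolynomial.X 2]

def ev : MvPolynomial (Fin 4) K →ₐ[K] L K :=
  MvPolynomial.aeval ![T 1, 1, LaurentPolynomial.C Polynomial.X,
    LaurentPolynomial.C (1 + Polynomial.X) * T (-1)]

lemma ev_X0 : (ev (MvPolynomial.X 0) : L K) = T 1 := by simp [ev]
lemma ev_X1 : (ev (MvPolynomial.X 1) : L K) = 1 := by simp [ev]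
lemma ev_X2 : (ev (MvPolynomial.X 2) : L K) = LaurentPolynomial.C Polynomial.X := by simp [ev]
lemma ev_X3 : (ev (MvPolynomial.X 3) : L K)
    = LaurentPolynomial.C (1 + Polynomial.X) * T (-1) := by simp [ev]

lemma T_mul_CT (p : Polynomial K) : (T 1 : L K) * (LaurentPolynomial.C p * T (-1))
    = LaurentPolynomial.C p := by
  rw [← single_eq_C_mul_T, LaurentPolynomial.T, AddMonoidAlgebra.single_mul_single, one_mul]
  norm_num

lemma ev_f4 : (ev (f4 K) : L K) = 0 := by
  rw [f4, map_sub, map_sub, map_mul, map_mul, map_one, ev_X0, ev_X1, ev_X2, ev_X3,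
    T_mul_CT, one_mul]
  rw [show (1 : L K) = LaurentPolynomial.C 1 from (map_one _).symm, ← map_sub, ← map_sub]
  rw [show (1 + Polynomial.X - Polynomial.X - 1 : Polynomial K) = 0 by ring, map_zero]

lemma ev_I4 {p : MvPolynomial (Fin 4) K} (hp : p ∈ I4 K) : ev p = 0 := by
  obtain ⟨a, ha⟩ := Ideal.mem_span_singleton'.mp hp
  rw [← ha, map_mul, ev_f4, mul_zero]

lemma ev_Phi2 (s : MvPolynomial (Fin 2) K) : ev (Phi2 s) = deltaW s := by
  have h : (ev (K := K)).comp Phi2 = deltaW := by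
    apply MvPolynomial.algHom_ext
    intro i
    rcases (by decide : ∀ i : Fin 2, i = 0 ∨ i = 1) i with rfl | rfl
    · rw [AlgHom.comp_apply, Phi2, MvPolynomial.aeval_X]
      simp only [Matrix.cons_val_zero]
      rw [map_mul, ev_X0, ev_X1, mul_one, deltaW_X0]
    · rw [AlgHom.comp_apply, Phi2, MvPolynomial.aeval_X]
      simp only [Matrix.cons_val_one, Matrix.head_cons, Matrix.cons_val_zero]
      rw [map_mul, ev_X2, ev_X3, deltaW_X1, ← mul_assoc, ← map_mul, ← single_eq_C_mul_T]
      congr 1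
      ring
  exact DFunLike.congr_fun h s

lemma ev_s4 : (ev (MvPolynomial.X 0 * MvPolynomial.X 3 + MvPolynomial.X 1 * MvPolynomial.X 2)
    : L K) = LaurentPolynomial.C (1 + 2 * Polynomial.X) := by
  rw [map_add, map_mul, map_mul, ev_X0, ev_X1, ev_X2, ev_X3, T_mul_CT, one_mul, ← map_add]
  congr 1
  ring

/-- the variable-separating equivalence -/
def E (K : Type*) [Field K] :
    MvPolynomial (Fin 3) K ≃ₐ[K] Polynomial (MvPolynomial (Fin 2) K) :=
  (MvPolynomial.renameEquiv K (finRotate 3)).trans (MvPolynomial.finSuccEquiv K 2)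

lemma E_X0 : E K (MvPolynomial.X 0) = Polynomial.C (MvPolynomial.X 0) := by
  rw [E, AlgEquiv.trans_apply, MvPolynomial.renameEquiv_apply, MvPolynomial.rename_X,
    show (finRotate 3) 0 = ((0 : Fin 2).succ) from rfl, MvPolynomial.finSuccEquiv_X_succ]

lemma E_X1 : E K (MvPolynomial.X 1) = Polynomial.C (MvPolynomial.X 1) := by
  rw [E, AlgEquiv.trans_apply, MvPolynomial.renameEquiv_apply, MvPolynomial.rename_X,
    show (finRotate 3) 1 = ((1 : Fin 2).succ) from rfl, MvPolynomial.finSuccEquiv_X_succ]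

lemma E_X2 : E K (MvPolynomial.X 2) = Polynomial.X := by
  rw [E, AlgEquiv.trans_apply, MvPolynomial.renameEquiv_apply, MvPolynomial.rename_X,
    show (finRotate 3) 2 = (0 : Fin 3) from rfl, MvPolynomial.finSuccEquiv_X_zero]

def q0 (K : Type*) [Field K] : Polynomial (MvPolynomial (Fin 2) K) :=
  Polynomial.X ^ 2 - Polynomial.C (4 * (MvPolynomial.X 0 * MvPolynomial.X 1) + 1)

lemma E_g3 : E K (g3 K) = q0 K := by
  rw [g3, q0]
  simp only [map_sub, map_pow, map_mul, map_one, map_ofNat, map_add, E_X0, E_X1, E_X2]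
  ring

lemma monic_q0 : (q0 K).Monic := by
  apply Polynomial.monic_X_pow_sub
  calc Polynomial.degree (Polynomial.C (4 * (MvPolynomial.X 0 * MvPolynomial.X 1) + 1
      : MvPolynomial (Fin 2) K)) ≤ 0 := Polynomial.degree_C_le
  _ < 2 := by decide

lemma degree_q0 : (q0 K).degree = 2 := Polynomial.degree_X_pow_sub_C (by norm_num) _

def G : Polynomial (MvPolynomial (Fin 2) K) →+* MvPolynomial (Fin 4) K :=
  Polynomial.eval₂RingHom (Phi2 (K := K)).toRingHom
    (MvPolynomial.X 0 * MvPolynomial.X 3 + MvPolynomial.X 1 * MvPolynomial.X 2)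

lemma G_E (s : MvPolynomial (Fin 3) K) : G (E K s) = Phi3 s := by
  have h : (G (K := K)).comp ((E K).toAlgHom.toRingHom) = (Phi3 (K := K)).toRingHom := by
    apply MvPolynomial.ringHom_ext
    · intro k
      simp only [RingHom.coe_comp, Function.comp_apply, AlgHom.toRingHom_eq_coe,
        RingHom.coe_coe, AlgEquiv.toAlgHom_eq_coe, AlgEquiv.coe_algHom]
      show G ((E K) ((algebraMap K _) k)) = Phi3 ((algebraMap K _) k)
      rw [AlgEquiv.commutes, AlgHom.commutes]
      rw [show (algebraMap K (Polynomial (MvPolynomial (Fin 2) K))) k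
          = Polynomial.C (MvPolynomial.C k) from rfl]
      rw [G, Polynomial.coe_eval₂RingHom, Polynomial.eval₂_C]
      rw [show (MvPolynomial.C k : MvPolynomial (Fin 2) K) = algebraMap K _ k from rfl]
      exact (Phi2 (K := K)).commutes k
    · intro i
      simp only [RingHom.coe_comp, Function.comp_apply, AlgHom.toRingHom_eq_coe,
        RingHom.coe_coe, AlgEquiv.toAlgHom_eq_coe, AlgEquiv.coe_algHom]
      rcases (by decide : ∀ i : Fin 3, i = 0 ∨ i = 1 ∨ i = 2) i with rfl | rfl | rfl
      · show G ((E K) (MvPolynomial.X 0)) = Phi3 (MvPolynomial.X 0)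
        rw [E_X0, G, Polynomial.coe_eval₂RingHom, Polynomial.eval₂_C]
        show (Phi2 (MvPolynomial.X 0) : MvPolynomial (Fin 4) K) = _
        rw [show (Phi2 (MvPolynomial.X 0) : MvPolynomial (Fin 4) K)
            = MvPolynomial.X 0 * MvPolynomial.X 1 from by simp [Phi2]]
        rw [show (Phi3 (MvPolynomial.X 0) : MvPolynomial (Fin 4) K)
            = MvPolynomial.X 0 * MvPolynomial.X 1 from by simp [Phi3]]
      · show G ((E K) (MvPolynomial.X 1)) = Phi3 (MvPolynomial.X 1)
        rw [E_X1, G, Polynomial.coe_eval₂RingHom, Polynomial.eval₂_C]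
        show (Phi2 (MvPolynomial.X 1) : MvPolynomial (Fin 4) K) = _
        rw [show (Phi2 (MvPolynomial.X 1) : MvPolynomial (Fin 4) K)
            = MvPolynomial.X 2 * MvPolynomial.X 3 from by simp [Phi2]]
        rw [show (Phi3 (MvPolynomial.X 1) : MvPolynomial (Fin 4) K)
            = MvPolynomial.X 2 * MvPolynomial.X 3 from by simp [Phi3]]
      · show G ((E K) (MvPolynomial.X 2)) = Phi3 (MvPolynomial.X 2)
        rw [E_X2, G, Polynomial.coe_eval₂RingHom, Polynomial.eval₂_X]
        rw [show (Phi3 (MvPolynomial.X 2) : MvPolynomial (Fin 4) K)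
            = MvPolynomial.X 0 * MvPolynomial.X 3 + MvPolynomial.X 1 * MvPolynomial.X 2 from by
          simp [Phi3]]
  exact DFunLike.congr_fun h s

lemma G_q0_mem : (G (q0 K) : MvPolynomial (Fin 4) K) ∈ I4 K := by
  rw [q0, G, Polynomial.coe_eval₂RingHom, Polynomial.eval₂_sub, Polynomial.eval₂_pow,
    Polynomial.eval₂_X, Polynomial.eval₂_C]
  rw [show ((Phi2 (K := K)).toRingHom (4 * (MvPolynomial.X 0 * MvPolynomial.X 1) + 1))
      = 4 * ((MvPolynomial.X 0 * MvPolynomial.X 1) * (MvPolynomial.X 2 * MvPolynomial.X 3))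
        + 1 from by
    simp only [AlgHom.toRingHom_eq_coe, RingHom.coe_coe, map_add, map_mul, map_one, map_ofNat]
    simp [Phi2]]
  apply Ideal.mem_span_singleton'.mpr
  refine ⟨MvPolynomial.X 0 * MvPolynomial.X 3 - MvPolynomial.X 1 * MvPolynomial.X 2 + 1, ?_⟩
  rw [f4]
  ring

lemma key_inj (q : MvPolynomial (Fin 3) K) (hq : Phi3 q ∈ I4 K) :
    q ∈ Ideal.span {g3 K} := by
  set p := E K q with hp
  have hdiv := Polynomial.modByMonic_add_div p (q0 K)
  set r := p %ₘ q0 K with hrdef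
  have hdeg : r.degree < 2 := by
    rw [← degree_q0 (K := K)]
    exact Polynomial.degree_modByMonic_lt p monic_q0
  have hdeg1 : r.degree ≤ 1 := by
    rcases hd : r.degree with _ | n
    · exact bot_le
    · rw [hd] at hdeg
      have h2 : (n : WithBot ℕ) < ((2 : ℕ) : WithBot ℕ) := hdeg
      have h3 : n ≤ 1 := Nat.lt_succ_iff.mp (WithBot.coe_lt_coe.mp h2)
      exact (WithBot.coe_le_coe.mpr h3 : (n : WithBot ℕ) ≤ ((1:ℕ) : WithBot ℕ))
  have hr : r = Polynomial.C (r.coeff 1) * Polynomial.X + Polynomial.C (r.coeff 0) :=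
    Polynomial.eq_X_add_C_of_degree_le_one hdeg1
  have hPhi : Phi3 q = G (q0 K) * G (p /ₘ q0 K)
      + (Phi2 (r.coeff 0) + Phi2 (r.coeff 1)
        * (MvPolynomial.X 0 * MvPolynomial.X 3 + MvPolynomial.X 1 * MvPolynomial.X 2)) := by
    rw [← G_E q, ← hp]
    conv_lhs => rw [← hdiv]
    rw [map_add, map_mul]
    rw [show (G (r : Polynomial (MvPolynomial (Fin 2) K)) : MvPolynomial (Fin 4) K)
        = Phi2 (r.coeff 1)
          * (MvPolynomial.X 0 * MvPolynomial.X 3 + MvPolynomial.X 1 * MvPolynomial.X 2)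
          + Phi2 (r.coeff 0) from by
      conv_lhs => rw [hr]
      rw [G, Polynomial.coe_eval₂RingHom, Polynomial.eval₂_add, Polynomial.eval₂_mul,
        Polynomial.eval₂_C, Polynomial.eval₂_X, Polynomial.eval₂_C]
      rfl]
    ring
  have hmem : Phi2 (r.coeff 0) + Phi2 (r.coeff 1)
      * (MvPolynomial.X 0 * MvPolynomial.X 3 + MvPolynomial.X 1 * MvPolynomial.X 2) ∈ I4 K := by
    have h1 : G (q0 K) * G (p /ₘ q0 K) ∈ I4 K := Ideal.mul_mem_right _ _ G_q0_mem
    have := (I4 K).sub_mem hq h1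
    rwa [hPhi, add_sub_cancel_left] at this
  have hev : deltaW (r.coeff 0) + deltaW (r.coeff 1)
      * LaurentPolynomial.C (1 + 2 * Polynomial.X) = 0 := by
    have h0 := ev_I4 hmem
    rwa [map_add, map_mul, ev_Phi2, ev_Phi2, ev_s4] at h0
  obtain ⟨h0, h1⟩ := main_pair _ _ hev
  have hr0 : r = 0 := by rw [hr, h0, h1]; simp
  have hps : q0 K * (p /ₘ q0 K) = p := by
    conv_rhs => rw [← hdiv]
    rw [hr0, zero_add]
  have hq' : q = (E K).symm (q0 K * (p /ₘ q0 K)) := by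
    rw [hps, hp]
    exact ((E K).symm_apply_apply q).symm
  rw [hq', map_mul]
  have hEs : (E K).symm (q0 K) = g3 K := by
    rw [← E_g3]
    exact (E K).symm_apply_apply _
  rw [hEs]
  exact Ideal.mem_span_singleton'.mpr ⟨(E K).symm (p /ₘ q0 K), mul_comm _ _⟩

end PartB


section PartC

def w4 : Fin 4 → ℤ := ![1, -1, 1, -1]

lemma weight_w4 (d : Fin 4 →₀ ℕ) :
    (Finsupp.weight w4) d = (d 0 : ℤ) + d 2 - d 1 - d 3 := by
  rw [Finsupp.weight_apply, Finsupp.sum_fintype _ _ (fun i => by simp), Fin.sum_univ_four]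
  simp only [w4, Matrix.cons_val_zero, Matrix.cons_val_one, Matrix.head_cons,
    Matrix.cons_val_two, Matrix.tail_cons, Matrix.cons_val_three, smul_eq_mul]
  push_cast
  ring

lemma f4_hom : (f4 K).IsWeightedHomogeneous w4 0 := by
  have h03 := (MvPolynomial.isWeightedHomogeneous_X K w4 0).mul
    (MvPolynomial.isWeightedHomogeneous_X K w4 3)
  have h12 := (MvPolynomial.isWeightedHomogeneous_X K w4 1).mul
    (MvPolynomial.isWeightedHomogeneous_X K w4 2)
  have h1 := MvPolynomial.isWeightedHomogeneous_one K w4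
  have e03 : w4 0 + w4 3 = 0 := by decide
  have e12 : w4 1 + w4 2 = 0 := by decide
  rw [e03] at h03
  rw [e12] at h12
  rw [f4]
  rw [← MvPolynomial.mem_weightedHomogeneousSubmodule] at h03 h12 h1 ⊢
  exact Submodule.sub_mem _ (Submodule.sub_mem _ h03 h12) h1

lemma I4_component {p : MvPolynomial (Fin 4) K} (hp : p ∈ I4 K) (n : ℤ) :
    MvPolynomial.weightedHomogeneousComponent w4 n p ∈ I4 K := by
  obtain ⟨g, hg⟩ := Ideal.mem_span_singleton'.mp hp
  rw [← hg]
  have hfin := MvPolynomial.weightedHomogeneousComponent_finsupp (w := w4) g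
  have hgsum : g = ∑ m ∈ hfin.toFinset, MvPolynomial.weightedHomogeneousComponent w4 m g := by
    rw [← finsum_eq_sum _ hfin, MvPolynomial.sum_weightedHomogeneousComponent]
  rw [show g * f4 K
      = ∑ m ∈ hfin.toFinset, MvPolynomial.weightedHomogeneousComponent w4 m g * f4 K from by
    rw [← Finset.sum_mul, ← hgsum]]
  rw [map_sum]
  apply Ideal.sum_mem
  intro m _
  have hhom := (MvPolynomial.weightedHomogeneousComponent_isWeightedHomogeneous (w := w4) m g).mul
    (f4_hom (K := K))
  rw [add_zero] at hhom
  rcases eq_or_ne m n with rfl | hmn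
  · rw [hhom.weightedHomogeneousComponent_same]
    exact Ideal.mul_mem_left _ _ (Ideal.subset_span (Set.mem_singleton _))
  · rw [MvPolynomial.IsWeightedHomogeneous.weightedHomogeneousComponent_ne n hhom hmn.symm]
    exact Ideal.zero_mem _

def scale (l : Kˣ) : MvPolynomial (Fin 4) K →ₐ[K] MvPolynomial (Fin 4) K :=
  MvPolynomial.aeval ![(l : K) • MvPolynomial.X 0, ((l : K))⁻¹ • MvPolynomial.X 1,
    (l : K) • MvPolynomial.X 2, ((l : K))⁻¹ • MvPolynomial.X 3]

lemma scale_monomial (l : Kˣ) (d : Fin 4 →₀ ℕ) (c : K) :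
    scale l (MvPolynomial.monomial d c)
      = MvPolynomial.C ((l : K) ^ (d 0 + d 2) * ((l : K)⁻¹) ^ (d 1 + d 3))
        * MvPolynomial.monomial d c := by
  rw [scale, MvPolynomial.aeval_monomial,
    Finsupp.prod_fintype _ _ (fun i => pow_zero _), Fin.prod_univ_four]
  rw [MvPolynomial.monomial_eq, Finsupp.prod_fintype _ _ (fun i => pow_zero _),
    Fin.prod_univ_four]
  simp only [Matrix.cons_val_zero, Matrix.cons_val_one, Matrix.head_cons,
    Matrix.cons_val_two, Matrix.tail_cons, Matrix.cons_val_three]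
  rw [_root_.smul_pow, _root_.smul_pow, _root_.smul_pow, _root_.smul_pow]
  simp only [MvPolynomial.smul_eq_C_mul, map_mul, map_pow, pow_add]
  rw [show (algebraMap K (MvPolynomial (Fin 4) K)) c = MvPolynomial.C c from rfl]
  ring

lemma scale_hom (l : Kˣ) {p : MvPolynomial (Fin 4) K} {n : ℤ}
    (hp : p.IsWeightedHomogeneous w4 n) :
    scale l p = MvPolynomial.C ((l : K) ^ n) * p := by
  conv_lhs => rw [← MvPolynomial.support_sum_monomial_coeff p]
  conv_rhs => rw [← MvPolynomial.support_sum_monomial_coeff p]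
  rw [map_sum, Finset.mul_sum]
  apply Finset.sum_congr rfl
  intro v hv
  rw [scale_monomial]
  congr 2
  have hw := hp (MvPolynomial.mem_support_iff.mp hv)
  rw [weight_w4] at hw
  have hl : (l : K) ≠ 0 := l.ne_zero
  rw [show ((l : K)⁻¹) ^ (v 1 + v 3) = ((l : K) ^ ((v 1 + v 3 : ℕ) : ℤ))⁻¹ by
    rw [zpow_natCast, inv_pow]]
  rw [show (l : K) ^ (v 0 + v 2) = (l : K) ^ ((v 0 + v 2 : ℕ) : ℤ) from (zpow_natCast _ _).symm]
  rw [← div_eq_mul_inv, ← zpow_sub₀ hl]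
  congr 1
  push_cast
  omega

lemma wc_scale (l : Kˣ) (p : MvPolynomial (Fin 4) K) (n : ℤ) :
    MvPolynomial.weightedHomogeneousComponent w4 n (scale l p)
      = MvPolynomial.C ((l : K) ^ n) * MvPolynomial.weightedHomogeneousComponent w4 n p := by
  have hfin := MvPolynomial.weightedHomogeneousComponent_finsupp (w := w4) p
  have hpsum : p = ∑ m ∈ hfin.toFinset, MvPolynomial.weightedHomogeneousComponent w4 m p := by
    rw [← finsum_eq_sum _ hfin, MvPolynomial.sum_weightedHomogeneousComponent]
  conv_lhs => rw [hpsum, map_sum, map_sum]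
  have hterm : ∀ m ∈ hfin.toFinset,
      MvPolynomial.weightedHomogeneousComponent w4 n
        (scale l (MvPolynomial.weightedHomogeneousComponent w4 m p))
      = if m = n
        then MvPolynomial.C ((l : K) ^ n)
          * MvPolynomial.weightedHomogeneousComponent w4 n p
        else 0 := by
    intro m _
    rw [scale_hom l (MvPolynomial.weightedHomogeneousComponent_isWeightedHomogeneous (w := w4) m p),
      MvPolynomial.weightedHomogeneousComponent_C_mul]
    rcases eq_or_ne m n with rfl | hmn
    · rw [if_pos rfl,
        (MvPolynomial.weightedHomogeneousComponent_isWeightedHomogeneous (w := w4) m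
          p).weightedHomogeneousComponent_same]
    · rw [if_neg hmn,
        MvPolynomial.IsWeightedHomogeneous.weightedHomogeneousComponent_ne n
          (MvPolynomial.weightedHomogeneousComponent_isWeightedHomogeneous (w := w4) m p)
          hmn.symm, mul_zero]
  rw [Finset.sum_congr rfl hterm, Finset.sum_ite_eq' hfin.toFinset n
    (fun _ => MvPolynomial.C ((l : K) ^ n) * MvPolynomial.weightedHomogeneousComponent w4 n p)]
  split_ifs with hn
  · rfl
  · have : MvPolynomial.weightedHomogeneousComponent w4 n p = 0 := by
      by_contra hne
      exact hn (hfin.mem_toFinset.mpr hne)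
    rw [this, mul_zero]

lemma two_zpow_ne_one {n : ℤ} (hn : n ≠ 0) : (2 : K) ^ n ≠ 1 := by
  have key : ∀ m : ℕ, m ≠ 0 → (2 : K) ^ m ≠ 1 := by
    intro m hm h
    have : ((2 ^ m : ℕ) : K) = ((1 : ℕ) : K) := by push_cast; exact h
    have h2 : (2 : ℕ) ^ m = 1 := Nat.cast_injective this
    have := Nat.one_lt_two_pow_iff.mpr hm
    omega
  intro h
  rcases n with m | m
  · rw [Int.ofNat_eq_coe, zpow_natCast] at h
    exact key m (by simpa using hn) h
  · rw [zpow_negSucc, inv_eq_one] at h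
    exact key (m + 1) (Nat.succ_ne_zero m) h

lemma monomial_eq4 (d : Fin 4 →₀ ℕ) (c : K) :
    MvPolynomial.monomial d c = MvPolynomial.C c
      * (MvPolynomial.X 0 ^ (d 0) * MvPolynomial.X 1 ^ (d 1)
        * MvPolynomial.X 2 ^ (d 2) * MvPolynomial.X 3 ^ (d 3)) := by
  rw [MvPolynomial.monomial_eq, Finsupp.prod_fintype _ _ (fun i => pow_zero _),
    Fin.prod_univ_four]

lemma pow_mem (SR : Subalgebra K (MvPolynomial (Fin 4) K ⧸ I4 K))
    (h01 : Ideal.Quotient.mk (I4 K) (MvPolynomial.X 0 * MvPolynomial.X 1) ∈ SR)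
    (h23 : Ideal.Quotient.mk (I4 K) (MvPolynomial.X 2 * MvPolynomial.X 3) ∈ SR)
    (h03 : Ideal.Quotient.mk (I4 K) (MvPolynomial.X 0 * MvPolynomial.X 3) ∈ SR)
    (h12 : Ideal.Quotient.mk (I4 K) (MvPolynomial.X 1 * MvPolynomial.X 2) ∈ SR) :
    ∀ N i j k l : ℕ, i + j + k + l ≤ N → i + k = j + l →
      Ideal.Quotient.mk (I4 K) (MvPolynomial.X 0 ^ i * MvPolynomial.X 1 ^ j
        * MvPolynomial.X 2 ^ k * MvPolynomial.X 3 ^ l) ∈ SR := by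
  intro N
  induction N with
  | zero =>
      intro i j k l h _
      obtain ⟨rfl, rfl, rfl, rfl⟩ : i = 0 ∧ j = 0 ∧ k = 0 ∧ l = 0 := by omega
      simp only [pow_zero, mul_one, map_one]
      exact SR.one_mem
  | succ N ih =>
      intro i j k l h hbal
      by_cases hz : i + k = 0
      · obtain ⟨rfl, rfl, rfl, rfl⟩ : i = 0 ∧ j = 0 ∧ k = 0 ∧ l = 0 := by omega
        simp only [pow_zero, mul_one, map_one]
        exact SR.one_mem
      · rcases (by omega : 0 < i ∨ 0 < k) with hi | hk <;>
          rcases (by omega : 0 < j ∨ 0 < l) with hj | hl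
        · obtain ⟨i', rfl⟩ : ∃ i', i = i' + 1 := ⟨i - 1, by omega⟩
          obtain ⟨j', rfl⟩ : ∃ j', j = j' + 1 := ⟨j - 1, by omega⟩
          rw [show (MvPolynomial.X 0 ^ (i' + 1) * MvPolynomial.X 1 ^ (j' + 1)
              * MvPolynomial.X 2 ^ k * MvPolynomial.X 3 ^ l : MvPolynomial (Fin 4) K)
            = (MvPolynomial.X 0 * MvPolynomial.X 1) * (MvPolynomial.X 0 ^ i'
              * MvPolynomial.X 1 ^ j' * MvPolynomial.X 2 ^ k * MvPolynomial.X 3 ^ l) from by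
            ring, map_mul]
          exact SR.mul_mem h01 (ih i' j' k l (by omega) (by omega))
        · obtain ⟨i', rfl⟩ : ∃ i', i = i' + 1 := ⟨i - 1, by omega⟩
          obtain ⟨l', rfl⟩ : ∃ l', l = l' + 1 := ⟨l - 1, by omega⟩
          rw [show (MvPolynomial.X 0 ^ (i' + 1) * MvPolynomial.X 1 ^ j
              * MvPolynomial.X 2 ^ k * MvPolynomial.X 3 ^ (l' + 1) : MvPolynomial (Fin 4) K)
            = (MvPolynomial.X 0 * MvPolynomial.X 3) * (MvPolynomial.X 0 ^ i'
              * MvPolynomial.X 1 ^ j * MvPolynomial.X 2 ^ k * MvPolynomial.X 3 ^ l') from by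
            ring, map_mul]
          exact SR.mul_mem h03 (ih i' j k l' (by omega) (by omega))
        · obtain ⟨k', rfl⟩ : ∃ k', k = k' + 1 := ⟨k - 1, by omega⟩
          obtain ⟨j', rfl⟩ : ∃ j', j = j' + 1 := ⟨j - 1, by omega⟩
          rw [show (MvPolynomial.X 0 ^ i * MvPolynomial.X 1 ^ (j' + 1)
              * MvPolynomial.X 2 ^ (k' + 1) * MvPolynomial.X 3 ^ l : MvPolynomial (Fin 4) K)
            = (MvPolynomial.X 1 * MvPolynomial.X 2) * (MvPolynomial.X 0 ^ i
              * MvPolynomial.X 1 ^ j' * MvPolynomial.X 2 ^ k' * MvPolynomial.X 3 ^ l) from by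
            ring, map_mul]
          exact SR.mul_mem h12 (ih i j' k' l (by omega) (by omega))
        · obtain ⟨k', rfl⟩ : ∃ k', k = k' + 1 := ⟨k - 1, by omega⟩
          obtain ⟨l', rfl⟩ : ∃ l', l = l' + 1 := ⟨l - 1, by omega⟩
          rw [show (MvPolynomial.X 0 ^ i * MvPolynomial.X 1 ^ j
              * MvPolynomial.X 2 ^ (k' + 1) * MvPolynomial.X 3 ^ (l' + 1) : MvPolynomial (Fin 4) K)
            = (MvPolynomial.X 2 * MvPolynomial.X 3) * (MvPolynomial.X 0 ^ i
              * MvPolynomial.X 1 ^ j * MvPolynomial.X 2 ^ k' * MvPolynomial.X 3 ^ l') from by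
            ring, map_mul]
          exact SR.mul_mem h23 (ih i j k' l' (by omega) (by omega))

/-- image of a weight-zero homogeneous polynomial lies in the subalgebra. -/
lemma hom_zero_mem (SR : Subalgebra K (MvPolynomial (Fin 4) K ⧸ I4 K))
    (h01 : Ideal.Quotient.mk (I4 K) (MvPolynomial.X 0 * MvPolynomial.X 1) ∈ SR)
    (h23 : Ideal.Quotient.mk (I4 K) (MvPolynomial.X 2 * MvPolynomial.X 3) ∈ SR)
    (h03 : Ideal.Quotient.mk (I4 K) (MvPolynomial.X 0 * MvPolynomial.X 3) ∈ SR)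
    (h12 : Ideal.Quotient.mk (I4 K) (MvPolynomial.X 1 * MvPolynomial.X 2) ∈ SR)
    {p : MvPolynomial (Fin 4) K} (hp : p.IsWeightedHomogeneous w4 0) :
    Ideal.Quotient.mk (I4 K) p ∈ SR := by
  have hrw : (Ideal.Quotient.mk (I4 K)) p = ∑ d ∈ p.support,
      (Ideal.Quotient.mk (I4 K)) (MvPolynomial.monomial d (MvPolynomial.coeff d p)) := by
    conv_lhs => rw [← MvPolynomial.support_sum_monomial_coeff p]
    rw [map_sum]
  rw [hrw]
  apply Subalgebra.sum_mem
  intro d hd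
  rw [monomial_eq4, map_mul]
  apply SR.mul_mem
  · rw [show (Ideal.Quotient.mk (I4 K)) (MvPolynomial.C (MvPolynomial.coeff d p))
        = algebraMap K _ (MvPolynomial.coeff d p) from rfl]
    exact SR.algebraMap_mem _
  · have hw := hp (MvPolynomial.mem_support_iff.mp hd)
    rw [weight_w4] at hw
    exact pow_mem SR h01 h23 h03 h12 (d 0 + d 1 + d 2 + d 3) (d 0) (d 1) (d 2) (d 3)
      (le_refl _) (by omega)

end PartC

end Stmt14

end

/-- Let `R = K[a,b,c,d]/(ad − bc − 1)` with the `Kˣ`-action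
`λ·a = λa, λ·b = λ⁻¹b, λ·c = λc, λ·d = λ⁻¹d` by `K`-algebra automorphisms.  Then the invariant
subalgebra `R^{Kˣ}` equals the `K`-subalgebra generated by `ab`, `cd` and `ad + bc`, and the
`K`-algebra homomorphism `K[x,y,z]/(z² − 4xy − 1) → R`, `x ↦ ab`, `y ↦ cd`, `z ↦ ad + bc`, is
injective with image `R^{Kˣ}`; in particular `R^{Kˣ} ≅ K[x,y,z]/(z² − 4xy − 1)`. -/
theorem stmt_14 {K : Type*} [Field K] [CharZero K]
    (act : Kˣ →* (SL2Ring K ≃ₐ[K] SL2Ring K))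
    (hacta : ∀ l : Kˣ, act l (sl2a K) = (l : K) • sl2a K)
    (hactb : ∀ l : Kˣ, act l (sl2b K) = ((l : K))⁻¹ • sl2b K)
    (hactc : ∀ l : Kˣ, act l (sl2c K) = (l : K) • sl2c K)
    (hactd : ∀ l : Kˣ, act l (sl2d K) = ((l : K))⁻¹ • sl2d K)
    (ψ : XYZRing K →ₐ[K] SL2Ring K)
    (hψx : ψ (Ideal.Quotient.mk _ (X 0)) = sl2a K * sl2b K)
    (hψy : ψ (Ideal.Quotient.mk _ (X 1)) = sl2c K * sl2d K)
    (hψz : ψ (Ideal.Quotient.mk _ (X 2)) = sl2a K * sl2d K + sl2b K * sl2c K) :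
    ({r : SL2Ring K | ∀ l : Kˣ, act l r = r} =
      (Algebra.adjoin K
        ({sl2a K * sl2b K, sl2c K * sl2d K, sl2a K * sl2d K + sl2b K * sl2c K} :
          Set (SL2Ring K)) : Set (SL2Ring K))) ∧
    Function.Injective ψ ∧
    Set.range ψ = {r : SL2Ring K | ∀ l : Kˣ, act l r = r} := by
  classical
  set S : Subalgebra K (SL2Ring K) := Algebra.adjoin K
      ({sl2a K * sl2b K, sl2c K * sl2d K, sl2a K * sl2d K + sl2b K * sl2c K} :
        Set (SL2Ring K)) with hS
  set mk4 : MvPolynomial (Fin 4) K →+* SL2Ring K := Ideal.Quotient.mk (Stmt14.I4 K) with hmk4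
  -- basic memberships
  have m1 : sl2a K * sl2b K ∈ S := Algebra.subset_adjoin (by left; rfl)
  have m2 : sl2c K * sl2d K ∈ S := Algebra.subset_adjoin (by right; left; rfl)
  have m3 : sl2a K * sl2d K + sl2b K * sl2c K ∈ S :=
    Algebra.subset_adjoin (by right; right; rfl)
  have hab : mk4 (X 0 * X 1) = sl2a K * sl2b K := by rw [map_mul]; rfl
  have hcd : mk4 (X 2 * X 3) = sl2c K * sl2d K := by rw [map_mul]; rfl
  have hs4 : mk4 (X 0 * X 3 + X 1 * X 2) = sl2a K * sl2d K + sl2b K * sl2c K := by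
    rw [map_add, map_mul, map_mul]; rfl
  have m1' : mk4 (X 0 * X 1) ∈ S := by rw [hab]; exact m1
  have m2' : mk4 (X 2 * X 3) ∈ S := by rw [hcd]; exact m2
  have m3' : mk4 (X 0 * X 3 + X 1 * X 2) ∈ S := by rw [hs4]; exact m3
  have hf0 : mk4 (X 0 * X 3 - X 1 * X 2 - 1) = 0 :=
    Ideal.Quotient.eq_zero_iff_mem.mpr (Ideal.subset_span (Set.mem_singleton _))
  have hf0' : mk4 (X 0 * X 3) - mk4 (X 1 * X 2) - 1 = 0 := by
    rw [← map_one mk4, ← map_sub, ← map_sub]; exact hf0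
  have had : mk4 (X 0 * X 3) ∈ S := by
    have h2 : (2 : K) • mk4 (X 0 * X 3) = mk4 (X 0 * X 3 + X 1 * X 2) + 1 := by
      rw [two_smul, map_add]
      linear_combination hf0'
    have heq : mk4 (X 0 * X 3) = (2 : K)⁻¹ • (mk4 (X 0 * X 3 + X 1 * X 2) + 1) := by
      rw [← h2, inv_smul_smul₀ two_ne_zero]
    rw [heq]
    exact S.smul_mem (S.add_mem m3' S.one_mem) _
  have hbc : mk4 (X 1 * X 2) ∈ S := by
    have h2 : (2 : K) • mk4 (X 1 * X 2) = mk4 (X 0 * X 3 + X 1 * X 2) - 1 := by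
      rw [two_smul, map_add]
      linear_combination -hf0'
    have heq : mk4 (X 1 * X 2) = (2 : K)⁻¹ • (mk4 (X 0 * X 3 + X 1 * X 2) - 1) := by
      rw [← h2, inv_smul_smul₀ two_ne_zero]
    rw [heq]
    exact S.smul_mem (S.sub_mem m3' S.one_mem) _
  -- the action on classes of polynomials
  have hactp : ∀ l : Kˣ, ∀ q : MvPolynomial (Fin 4) K,
      act l (mk4 q) = mk4 (Stmt14.scale l q) := by
    intro l
    have hcomp : (act l).toAlgHom.comp (Ideal.Quotient.mkₐ K (Stmt14.I4 K))
        = (Ideal.Quotient.mkₐ K (Stmt14.I4 K)).comp (Stmt14.scale l) := by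
      apply MvPolynomial.algHom_ext
      intro i
      rcases (by decide : ∀ i : Fin 4, i = 0 ∨ i = 1 ∨ i = 2 ∨ i = 3) i with rfl | rfl | rfl | rfl
      · show act l (mk4 (X 0)) = Ideal.Quotient.mkₐ K (Stmt14.I4 K) (Stmt14.scale l (X 0))
        rw [show Stmt14.scale l (X 0) = (l : K) • X 0 from by
          simp [Stmt14.scale, MvPolynomial.aeval_X]]
        rw [map_smul]
        exact hacta l
      · show act l (mk4 (X 1)) = Ideal.Quotient.mkₐ K (Stmt14.I4 K) (Stmt14.scale l (X 1))
        rw [show Stmt14.scale l (X 1) = ((l : K))⁻¹ • X 1 from by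
          simp [Stmt14.scale, MvPolynomial.aeval_X]]
        rw [map_smul]
        exact hactb l
      · show act l (mk4 (X 2)) = Ideal.Quotient.mkₐ K (Stmt14.I4 K) (Stmt14.scale l (X 2))
        rw [show Stmt14.scale l (X 2) = (l : K) • X 2 from by
          simp [Stmt14.scale, MvPolynomial.aeval_X]]
        rw [map_smul]
        exact hactc l
      · show act l (mk4 (X 3)) = Ideal.Quotient.mkₐ K (Stmt14.I4 K) (Stmt14.scale l (X 3))
        rw [show Stmt14.scale l (X 3) = ((l : K))⁻¹ • X 3 from by
          simp [Stmt14.scale, MvPolynomial.aeval_X]]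
        rw [map_smul]
        exact hactd l
    intro q
    exact DFunLike.congr_fun hcomp q
  -- part 1: invariants = S
  have part1 : {r : SL2Ring K | ∀ l : Kˣ, act l r = r} = (S : Set (SL2Ring K)) := by
    ext r
    constructor
    · intro hr
      obtain ⟨p, rfl⟩ := Ideal.Quotient.mk_surjective r
      set l₀ : Kˣ := Units.mk0 (2 : K) two_ne_zero with hl₀
      have hfix := hr l₀
      rw [show Ideal.Quotient.mk _ p = mk4 p from rfl, hactp l₀ p] at hfix
      have hsub : Stmt14.scale l₀ p - p ∈ Stmt14.I4 K := Ideal.Quotient.eq.mp hfix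
      have hcompmem : ∀ n : ℤ, n ≠ 0 →
          MvPolynomial.weightedHomogeneousComponent Stmt14.w4 n p ∈ Stmt14.I4 K := by
        intro n hn
        have h1 := Stmt14.I4_component hsub n
        rw [map_sub, Stmt14.wc_scale] at h1
        have h2 : MvPolynomial.C (((2 : K)) ^ n - 1)
            * MvPolynomial.weightedHomogeneousComponent Stmt14.w4 n p ∈ Stmt14.I4 K := by
          rw [map_sub, map_one, sub_mul, one_mul]
          exact h1
        have h3 := (Stmt14.I4 K).mul_mem_left (MvPolynomial.C ((((2 : K)) ^ n - 1)⁻¹)) h2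
        rw [← mul_assoc, ← map_mul,
          inv_mul_cancel₀ (sub_ne_zero.mpr (Stmt14.two_zpow_ne_one hn)), map_one, one_mul] at h3
        exact h3
      have hfin := MvPolynomial.weightedHomogeneousComponent_finsupp (w := Stmt14.w4) p
      have hpsum : p = ∑ m ∈ hfin.toFinset,
          MvPolynomial.weightedHomogeneousComponent Stmt14.w4 m p := by
        rw [← finsum_eq_sum _ hfin, MvPolynomial.sum_weightedHomogeneousComponent]
      have hmk : mk4 p = mk4 (MvPolynomial.weightedHomogeneousComponent Stmt14.w4 0 p) := by
        have hmk1 : mk4 p = ∑ m ∈ hfin.toFinset,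
            mk4 (MvPolynomial.weightedHomogeneousComponent Stmt14.w4 m p) := by
          conv_lhs => rw [hpsum]
          rw [map_sum]
        rw [hmk1]
        have hterm : ∀ m ∈ hfin.toFinset,
            mk4 (MvPolynomial.weightedHomogeneousComponent Stmt14.w4 m p)
            = if m = 0
              then mk4 (MvPolynomial.weightedHomogeneousComponent Stmt14.w4 0 p) else 0 := by
          intro m _
          rcases eq_or_ne m 0 with rfl | hm0
          · rw [if_pos rfl]
          · rw [if_neg hm0]
            exact Ideal.Quotient.eq_zero_iff_mem.mpr (hcompmem m hm0)
        rw [Finset.sum_congr rfl hterm, Finset.sum_ite_eq' hfin.toFinset (0 : ℤ)]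
        split_ifs with h0
        · rfl
        · have hz : MvPolynomial.weightedHomogeneousComponent Stmt14.w4 0 p = 0 := by
            by_contra hne
            exact h0 (hfin.mem_toFinset.mpr hne)
          rw [hz, map_zero]
      show Ideal.Quotient.mk _ p ∈ (S : Set (SL2Ring K))
      rw [show Ideal.Quotient.mk _ p = mk4 p from rfl, hmk]
      exact Stmt14.hom_zero_mem S m1' m2' had hbc
        (MvPolynomial.weightedHomogeneousComponent_isWeightedHomogeneous (w := Stmt14.w4) 0 p)
    · intro hrS l
      have hle : S ≤ AlgHom.equalizer (act l).toAlgHom (AlgHom.id K (SL2Ring K)) := by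
        rw [hS]
        apply Algebra.adjoin_le
        intro x hx
        have hll : (l : K) * ((l : K))⁻¹ = 1 := mul_inv_cancel₀ l.ne_zero
        rcases hx with h | h | h
        · subst h
          show act l (sl2a K * sl2b K) = sl2a K * sl2b K
          rw [map_mul, hacta, hactb, smul_mul_smul_comm, hll, one_smul]
        · subst h
          show act l (sl2c K * sl2d K) = sl2c K * sl2d K
          rw [map_mul, hactc, hactd, smul_mul_smul_comm, hll, one_smul]
        · rw [Set.mem_singleton_iff] at h
          subst h
          show act l (sl2a K * sl2d K + sl2b K * sl2c K) = sl2a K * sl2d K + sl2b K * sl2c K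
          rw [map_add, map_mul, map_mul, hacta, hactb, hactc, hactd,
            smul_mul_smul_comm, smul_mul_smul_comm, hll, inv_mul_cancel₀ l.ne_zero,
            one_smul, one_smul]
      exact hle hrS
  -- ψ on classes
  have hψmk : ∀ s : MvPolynomial (Fin 3) K,
      ψ (Ideal.Quotient.mk _ s) = mk4 (Stmt14.Phi3 s) := by
    have hcomp : ψ.comp (Ideal.Quotient.mkₐ K
          (Ideal.span {X 2 ^ 2 - 4 * (X 0 * X 1) - 1} : Ideal (MvPolynomial (Fin 3) K)))
        = (Ideal.Quotient.mkₐ K (Stmt14.I4 K)).comp (Stmt14.Phi3 (K := K)) := by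
      apply MvPolynomial.algHom_ext
      intro i
      rcases (by decide : ∀ i : Fin 3, i = 0 ∨ i = 1 ∨ i = 2) i with rfl | rfl | rfl
      · show ψ (Ideal.Quotient.mk _ (X 0)) = Ideal.Quotient.mkₐ K (Stmt14.I4 K)
          (Stmt14.Phi3 (X 0))
        rw [hψx, show Stmt14.Phi3 (X 0) = (X 0 * X 1 : MvPolynomial (Fin 4) K) from by
          simp [Stmt14.Phi3, MvPolynomial.aeval_X]]
        rw [← hab]
        rfl
      · show ψ (Ideal.Quotient.mk _ (X 1)) = Ideal.Quotient.mkₐ K (Stmt14.I4 K)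
          (Stmt14.Phi3 (X 1))
        rw [hψy, show Stmt14.Phi3 (X 1) = (X 2 * X 3 : MvPolynomial (Fin 4) K) from by
          simp [Stmt14.Phi3, MvPolynomial.aeval_X]]
        rw [← hcd]
        rfl
      · show ψ (Ideal.Quotient.mk _ (X 2)) = Ideal.Quotient.mkₐ K (Stmt14.I4 K)
          (Stmt14.Phi3 (X 2))
        rw [hψz, show Stmt14.Phi3 (X 2)
            = (X 0 * X 3 + X 1 * X 2 : MvPolynomial (Fin 4) K) from by
          simp [Stmt14.Phi3, MvPolynomial.aeval_X]]
        rw [← hs4]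
        rfl
    intro s
    exact DFunLike.congr_fun hcomp s
  -- part 2 : injectivity
  have part2 : Function.Injective ψ := by
    rw [injective_iff_map_eq_zero]
    intro u hu
    obtain ⟨q, rfl⟩ := Ideal.Quotient.mk_surjective u
    rw [hψmk] at hu
    have hmem : Stmt14.Phi3 q ∈ Stmt14.I4 K := Ideal.Quotient.eq_zero_iff_mem.mp hu
    have hq := Stmt14.key_inj q hmem
    exact Ideal.Quotient.eq_zero_iff_mem.mpr hq
  refine ⟨part1, part2, ?_⟩
  -- part 3 : range
  have hrange : ψ.range = S := by
    apply le_antisymm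
    · intro x hx
      obtain ⟨u, rfl⟩ := hx
      obtain ⟨q, rfl⟩ := Ideal.Quotient.mk_surjective u
      show ψ ((Ideal.Quotient.mk (Ideal.span {X 2 ^ 2 - 4 * (X 0 * X 1) - 1} :
        Ideal (MvPolynomial (Fin 3) K))) q) ∈ S
      rw [hψmk]
      induction q using MvPolynomial.induction_on with
      | C k =>
          rw [show Stmt14.Phi3 (MvPolynomial.C k) = MvPolynomial.C k from by
            rw [show (MvPolynomial.C k : MvPolynomial (Fin 3) K) = algebraMap K _ k from rfl,
              AlgHom.commutes]
            rfl]
          exact S.algebraMap_mem k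
      | add p q hp hq =>
          rw [map_add, map_add]
          exact S.add_mem hp hq
      | mul_X p i hp =>
          rw [map_mul, map_mul]
          refine S.mul_mem hp ?_
          rcases (by decide : ∀ i : Fin 3, i = 0 ∨ i = 1 ∨ i = 2) i with rfl | rfl | rfl
          · rw [show Stmt14.Phi3 (X 0) = (X 0 * X 1 : MvPolynomial (Fin 4) K) from by
              simp [Stmt14.Phi3, MvPolynomial.aeval_X]]
            exact m1'
          · rw [show Stmt14.Phi3 (X 1) = (X 2 * X 3 : MvPolynomial (Fin 4) K) from by
              simp [Stmt14.Phi3, MvPolynomial.aeval_X]]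
            exact m2'
          · rw [show Stmt14.Phi3 (X 2)
                = (X 0 * X 3 + X 1 * X 2 : MvPolynomial (Fin 4) K) from by
              simp [Stmt14.Phi3, MvPolynomial.aeval_X]]
            exact m3'
    · rw [hS]
      apply Algebra.adjoin_le
      intro x hx
      rcases hx with h | h | h
      · exact h ▸ ⟨Ideal.Quotient.mk _ (X 0), hψx⟩
      · exact h ▸ ⟨Ideal.Quotient.mk _ (X 1), hψy⟩
      · rw [Set.mem_singleton_iff] at h
        exact h ▸ ⟨Ideal.Quotient.mk _ (X 2), hψz⟩
  rw [part1, ← hrange]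
  exact (AlgHom.coe_range ψ).symm ▸ rfl
end

section
/- Let R = K[x,y,z]/(z² − 4xy − 1), let S = R[s, s⁻¹] be the Laurent polynomial ring over R, and let σ be the K-algebra involution of S determined by σ(x) = −x, σ(y) = −y, σ(z) = −z, σ(s) = −s (which is well defined since the relation z² − 4xy − 1 is preserved). Then the subalgebra S^σ of σ-invariants equals the K-subalgebra of S generated by xs, ys, zs, s², and s⁻². -/
open MvPolynomial

set_option synthInstance.maxHeartbeats 1000000
set_option maxHeartbeats 1000000

/-- the class of `x` in `R`, viewed in the Laurent polynomial ring `S = R[s,s⁻¹]` -/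
noncomputable abbrev lX (K : Type*) [Field K] : LaurentPolynomial (XYZRing K) :=
  LaurentPolynomial.C (Ideal.Quotient.mk _ (X 0))
/-- the class of `y` in `R`, viewed in `S = R[s,s⁻¹]` -/
noncomputable abbrev lY (K : Type*) [Field K] : LaurentPolynomial (XYZRing K) :=
  LaurentPolynomial.C (Ideal.Quotient.mk _ (X 1))
/-- the class of `z` in `R`, viewed in `S = R[s,s⁻¹]` -/
noncomputable abbrev lZ (K : Type*) [Field K] : LaurentPolynomial (XYZRing K) :=
  LaurentPolynomial.C (Ideal.Quotient.mk _ (X 2))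

/-- Let `R = K[x,y,z]/(z² − 4xy − 1)`, `S = R[s,s⁻¹]` and let `σ` be the
`K`-algebra involution of `S` with `σ(x) = −x`, `σ(y) = −y`, `σ(z) = −z`, `σ(s) = −s`.  Then
the invariants `S^σ` form the `K`-subalgebra generated by `xs`, `ys`, `zs`, `s²` and `s⁻²`. -/
theorem stmt_15 {K : Type*} [Field K] [CharZero K]
    (σ : LaurentPolynomial (XYZRing K) →ₐ[K] LaurentPolynomial (XYZRing K))
    (hσσ : ∀ f, σ (σ f) = f)
    (hσx : σ (lX K) = -lX K) (hσy : σ (lY K) = -lY K) (hσz : σ (lZ K) = -lZ K)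
    (hσs : σ (LaurentPolynomial.T 1) = -LaurentPolynomial.T 1) :
    {f : LaurentPolynomial (XYZRing K) | σ f = f} =
      (Algebra.adjoin K
        ({lX K * LaurentPolynomial.T 1, lY K * LaurentPolynomial.T 1,
          lZ K * LaurentPolynomial.T 1, LaurentPolynomial.T 2, LaurentPolynomial.T (-2)} :
          Set (LaurentPolynomial (XYZRing K))) : Set (LaurentPolynomial (XYZRing K))) := by
  classical
  set A : Subalgebra K (LaurentPolynomial (XYZRing K)) := Algebra.adjoin K
        ({lX K * LaurentPolynomial.T 1, lY K * LaurentPolynomial.T 1,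
          lZ K * LaurentPolynomial.T 1, LaurentPolynomial.T 2, LaurentPolynomial.T (-2)} :
          Set (LaurentPolynomial (XYZRing K))) with hA
  -- basic memberships
  have hxA : lX K * LaurentPolynomial.T 1 ∈ A := Algebra.subset_adjoin (by simp)
  have hyA : lY K * LaurentPolynomial.T 1 ∈ A := Algebra.subset_adjoin (by simp)
  have hzA : lZ K * LaurentPolynomial.T 1 ∈ A := Algebra.subset_adjoin (by simp)
  have h2A : LaurentPolynomial.T (2 : ℤ) ∈ A := Algebra.subset_adjoin (by simp)
  have hm2A : LaurentPolynomial.T (-2 : ℤ) ∈ A := Algebra.subset_adjoin (by simp)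
  -- halving
  have half : ∀ {a : LaurentPolynomial (XYZRing K)}, a + a ∈ A → a ∈ A := by
    intro a ha
    have h := A.smul_mem ha ((2 : K)⁻¹)
    rwa [← two_smul K a, smul_smul, inv_mul_cancel₀ (two_ne_zero), one_smul] at h
  -- sigma on T(-1)
  have hT01 : (LaurentPolynomial.T (-1) : LaurentPolynomial (XYZRing K)) *
      LaurentPolynomial.T 1 = 1 := by
    rw [← LaurentPolynomial.T_add]; norm_num
  have hσsm : σ (LaurentPolynomial.T (-1)) = -LaurentPolynomial.T (-1) := by
    have h1 : σ (LaurentPolynomial.T (-1)) * (-LaurentPolynomial.T 1) = 1 := by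
      rw [← hσs, ← map_mul, hT01, map_one]
    calc σ (LaurentPolynomial.T (-1))
        = σ (LaurentPolynomial.T (-1)) * (-LaurentPolynomial.T 1) *
            (-LaurentPolynomial.T (-1)) := by
          rw [mul_assoc, neg_mul_neg, mul_comm (LaurentPolynomial.T 1 : LaurentPolynomial (XYZRing K)), hT01, mul_one]
      _ = -LaurentPolynomial.T (-1) := by rw [h1, one_mul]
  have hTT : (LaurentPolynomial.T 1 : LaurentPolynomial (XYZRing K)) * LaurentPolynomial.T 1 *
      LaurentPolynomial.T (-2) = 1 := by
    rw [← LaurentPolynomial.T_add, ← LaurentPolynomial.T_add]; norm_num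
  have hT2 : (LaurentPolynomial.T 1 : LaurentPolynomial (XYZRing K)) * LaurentPolynomial.T 1 =
      LaurentPolynomial.T 2 := by
    rw [← LaurentPolynomial.T_add]; norm_num
  -- the subalgebra of "good" elements
  let S' : Subalgebra K (LaurentPolynomial (XYZRing K)) :=
  { carrier := {f | f + σ f ∈ A ∧ (f - σ f) * LaurentPolynomial.T 1 ∈ A}
    one_mem' := by
      constructor
      · rw [map_one]; exact A.add_mem A.one_mem A.one_mem
      · rw [map_one, sub_self, zero_mul]; exact A.zero_mem
    mul_mem' := by
      rintro f g ⟨hf1, hf2⟩ ⟨hg1, hg2⟩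
      constructor
      · apply half
        have e1 : ((f - σ f) * LaurentPolynomial.T 1) * ((g - σ g) * LaurentPolynomial.T 1) *
            LaurentPolynomial.T (-2) = (f - σ f) * (g - σ g) := by
          rw [show ((f - σ f) * LaurentPolynomial.T 1) * ((g - σ g) * LaurentPolynomial.T 1) *
              LaurentPolynomial.T (-2) = (f - σ f) * (g - σ g) *
              (LaurentPolynomial.T 1 * LaurentPolynomial.T 1 * LaurentPolynomial.T (-2)) from
              by ring, hTT, mul_one]
        have key : (f * g + σ (f * g)) + (f * g + σ (f * g)) =
            (f + σ f) * (g + σ g) + (f - σ f) * (g - σ g) := by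
          rw [map_mul]; ring
        rw [key, ← e1]
        exact A.add_mem (A.mul_mem hf1 hg1) (A.mul_mem (A.mul_mem hf2 hg2) hm2A)
      · apply half
        have key : (f * g - σ (f * g)) * LaurentPolynomial.T 1
              + (f * g - σ (f * g)) * LaurentPolynomial.T 1 =
            (f + σ f) * ((g - σ g) * LaurentPolynomial.T 1) +
            ((f - σ f) * LaurentPolynomial.T 1) * (g + σ g) := by
          rw [map_mul]; ring
        rw [key]
        exact A.add_mem (A.mul_mem hf1 hg2) (A.mul_mem hf2 hg1)
    add_mem' := by
      rintro f g ⟨hf1, hf2⟩ ⟨hg1, hg2⟩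
      constructor
      · rw [map_add, show f + g + (σ f + σ g) = (f + σ f) + (g + σ g) from by ring]
        exact A.add_mem hf1 hg1
      · rw [map_add, show (f + g - (σ f + σ g)) * LaurentPolynomial.T 1 =
            (f - σ f) * LaurentPolynomial.T 1 + (g - σ g) * LaurentPolynomial.T 1 from by ring]
        exact A.add_mem hf2 hg2
    algebraMap_mem' := by
      intro c
      constructor
      · rw [AlgHom.commutes]
        exact A.add_mem (A.algebraMap_mem c) (A.algebraMap_mem c)
      · rw [AlgHom.commutes, sub_self, zero_mul]; exact A.zero_mem }
  have memS' : ∀ {f : LaurentPolynomial (XYZRing K)},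
      f ∈ S' ↔ f + σ f ∈ A ∧ (f - σ f) * LaurentPolynomial.T 1 ∈ A := Iff.rfl
  -- T n ∈ S'
  have hT1S' : (LaurentPolynomial.T 1 : LaurentPolynomial (XYZRing K)) ∈ S' := by
    rw [memS']
    refine ⟨?_, ?_⟩
    · rw [hσs, add_neg_cancel]; exact A.zero_mem
    · rw [hσs, sub_neg_eq_add, add_mul, hT2]; exact A.add_mem h2A h2A
  have hTm1S' : (LaurentPolynomial.T (-1) : LaurentPolynomial (XYZRing K)) ∈ S' := by
    rw [memS']
    refine ⟨?_, ?_⟩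
    · rw [hσsm, add_neg_cancel]; exact A.zero_mem
    · rw [hσsm, sub_neg_eq_add, add_mul, hT01]; exact A.add_mem A.one_mem A.one_mem
  have hTn : ∀ n : ℤ, (LaurentPolynomial.T n : LaurentPolynomial (XYZRing K)) ∈ S' := by
    intro n
    induction n using Int.induction_on with
    | zero => rw [LaurentPolynomial.T_zero]; exact S'.one_mem
    | succ n ih => rw [show ((n : ℤ) + 1) = n + 1 from rfl, LaurentPolynomial.T_add]
                   exact S'.mul_mem ih hT1S'
    | pred n ih =>
        rw [show (-(n : ℤ) - 1) = -(n : ℤ) + (-1) from by ring, LaurentPolynomial.T_add]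
        exact S'.mul_mem ih hTm1S'
  -- C r ∈ S'
  have hCx : lX K ∈ S' := by
    rw [memS']
    refine ⟨?_, ?_⟩
    · rw [hσx, add_neg_cancel]; exact A.zero_mem
    · rw [hσx, sub_neg_eq_add, add_mul]; exact A.add_mem hxA hxA
  have hCy : lY K ∈ S' := by
    rw [memS']
    refine ⟨?_, ?_⟩
    · rw [hσy, add_neg_cancel]; exact A.zero_mem
    · rw [hσy, sub_neg_eq_add, add_mul]; exact A.add_mem hyA hyA
  have hCz : lZ K ∈ S' := by
    rw [memS']
    refine ⟨?_, ?_⟩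
    · rw [hσz, add_neg_cancel]; exact A.zero_mem
    · rw [hσz, sub_neg_eq_add, add_mul]; exact A.add_mem hzA hzA
  let CA : XYZRing K →ₐ[K] LaurentPolynomial (XYZRing K) :=
    { LaurentPolynomial.C with
      commutes' := fun c => (LaurentPolynomial.algebraMap_apply c).symm }
  let ψ : MvPolynomial (Fin 3) K →ₐ[K] LaurentPolynomial (XYZRing K) :=
    CA.comp (Ideal.Quotient.mkₐ K _)
  have hψ : ∀ p : MvPolynomial (Fin 3) K, ψ p = LaurentPolynomial.C (Ideal.Quotient.mk _ p) :=
    fun p => rfl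
  have hCmem : ∀ r : XYZRing K, LaurentPolynomial.C r ∈ S' := by
    have hle : Algebra.adjoin K (Set.range (X : Fin 3 → MvPolynomial (Fin 3) K)) ≤
        S'.comap ψ := by
      apply Algebra.adjoin_le
      rintro _ ⟨i, rfl⟩
      fin_cases i
      · exact hCx
      · exact hCy
      · exact hCz
    intro r
    obtain ⟨p, rfl⟩ := Ideal.Quotient.mk_surjective r
    rw [← hψ]
    exact hle (by rw [MvPolynomial.adjoin_range_X]; trivial)
  -- everything is in S'
  have hall : ∀ f : LaurentPolynomial (XYZRing K), f ∈ S' := by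
    intro f
    refine LaurentPolynomial.induction_on' f (fun p q hp hq => S'.add_mem hp hq) ?_
    intro n a
    exact S'.mul_mem (hCmem a) (hTn n)
  -- conclude
  ext f
  simp only [Set.mem_setOf_eq, SetLike.mem_coe]
  constructor
  · intro hf
    have h := (hall f).1
    rw [hf] at h
    exact half h
  · intro hf
    have hle : A ≤ AlgHom.equalizer σ (AlgHom.id K (LaurentPolynomial (XYZRing K))) := by
      rw [hA]
      apply Algebra.adjoin_le
      rintro g hg
      simp only [Set.mem_insert_iff, Set.mem_singleton_iff] at hg
      rcases hg with rfl | rfl | rfl | rfl | rfl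
      · show σ _ = _
        rw [map_mul, hσx, hσs, neg_mul_neg]; rfl
      · show σ _ = _
        rw [map_mul, hσy, hσs, neg_mul_neg]; rfl
      · show σ _ = _
        rw [map_mul, hσz, hσs, neg_mul_neg]; rfl
      · show σ _ = _
        rw [show (2 : ℤ) = 1 + 1 from rfl, LaurentPolynomial.T_add, map_mul, hσs, neg_mul_neg]
        rfl
      · show σ _ = _
        rw [show (-2 : ℤ) = -1 + -1 from rfl, LaurentPolynomial.T_add, map_mul, hσsm,
          neg_mul_neg]
        rfl
    exact hle hf
end

section
/- Let R = K[x,y,z]/(z² − 4xy − 1), let S = R[s, s⁻¹] be the Laurent polynomial ring over R, and let σ be the K-algebra involution of S determined by σ(x) = −x, σ(y) = −y, σ(z) = −z, σ(s) = s. Then the subalgebra S^σ of σ-invariants equals the K-subalgebra of S generated by x², y², z², xy, xz, yz, s, and s⁻¹. -/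
open MvPolynomial

set_option synthInstance.maxHeartbeats 1000000
set_option maxHeartbeats 1000000

/-- Let `R = K[x,y,z]/(z² − 4xy − 1)`, `S = R[s,s⁻¹]` and let `σ` be the
`K`-algebra involution of `S` with `σ(x) = −x`, `σ(y) = −y`, `σ(z) = −z`, `σ(s) = s`.  Then
the invariants `S^σ` form the `K`-subalgebra generated by
`x²`, `y²`, `z²`, `xy`, `xz`, `yz`, `s` and `s⁻¹`. -/
theorem stmt_16 {K : Type*} [Field K] [CharZero K]
    (σ : LaurentPolynomial (XYZRing K) →ₐ[K] LaurentPolynomial (XYZRing K))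
    (hσσ : ∀ f, σ (σ f) = f)
    (hσx : σ (lX K) = -lX K) (hσy : σ (lY K) = -lY K) (hσz : σ (lZ K) = -lZ K)
    (hσs : σ (LaurentPolynomial.T 1) = LaurentPolynomial.T 1) :
    {f : LaurentPolynomial (XYZRing K) | σ f = f} =
      (Algebra.adjoin K
        ({lX K ^ 2, lY K ^ 2, lZ K ^ 2, lX K * lY K, lX K * lZ K, lY K * lZ K,
          LaurentPolynomial.T 1, LaurentPolynomial.T (-1)} :
          Set (LaurentPolynomial (XYZRing K))) : Set (LaurentPolynomial (XYZRing K))) := by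
  set S := LaurentPolynomial (XYZRing K)
  set A : Subalgebra K S := Algebra.adjoin K
    ({lX K ^ 2, lY K ^ 2, lZ K ^ 2, lX K * lY K, lX K * lZ K, lY K * lZ K,
      LaurentPolynomial.T 1, LaurentPolynomial.T (-1)} : Set S)
  -- σ(T(-1)) = T(-1)
  have hTmul : (LaurentPolynomial.T 1 : S) * LaurentPolynomial.T (-1) = 1 := by
    rw [← LaurentPolynomial.T_add]; norm_num
  have hσs' : σ (LaurentPolynomial.T (-1) : S) = LaurentPolynomial.T (-1) := by
    have h1 : σ ((LaurentPolynomial.T 1 : S) * LaurentPolynomial.T (-1)) = 1 := by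
      rw [hTmul, map_one]
    rw [map_mul, hσs] at h1
    calc σ (LaurentPolynomial.T (-1) : S)
        = (LaurentPolynomial.T (-1) * LaurentPolynomial.T 1) * σ (LaurentPolynomial.T (-1)) := by
          linear_combination (-σ (LaurentPolynomial.T (-1) : S)) * hTmul
      _ = LaurentPolynomial.T (-1) * (LaurentPolynomial.T 1 * σ (LaurentPolynomial.T (-1))) := by
          ring
      _ = LaurentPolynomial.T (-1) := by rw [h1, mul_one]
  -- σ fixes A pointwise
  have hfixA : ∀ a ∈ A, σ a = a := by
    intro a ha
    induction ha using Algebra.adjoin_induction with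
    | mem g hg =>
      simp only [Set.mem_insert_iff, Set.mem_singleton_iff] at hg
      rcases hg with rfl | rfl | rfl | rfl | rfl | rfl | rfl | rfl
      · rw [map_pow, hσx]; ring
      · rw [map_pow, hσy]; ring
      · rw [map_pow, hσz]; ring
      · rw [map_mul, hσx, hσy]; ring
      · rw [map_mul, hσx, hσz]; ring
      · rw [map_mul, hσy, hσz]; ring
      · exact hσs
      · exact hσs'
    | algebraMap r => exact σ.commutes r
    | add p q _ _ hp hq => rw [map_add, hp, hq]
    | mul p q _ _ hp hq => rw [map_mul, hp, hq]
  -- membership of generators of A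
  have memA : ∀ g ∈ ({lX K ^ 2, lY K ^ 2, lZ K ^ 2, lX K * lY K, lX K * lZ K, lY K * lZ K,
      LaurentPolynomial.T 1, LaurentPolynomial.T (-1)} : Set S), g ∈ A :=
    fun g hg => Algebra.subset_adjoin hg
  have hx2 : lX K ^ 2 ∈ A := memA _ (by simp)
  have hy2 : lY K ^ 2 ∈ A := memA _ (by simp)
  have hz2 : lZ K ^ 2 ∈ A := memA _ (by simp)
  have hxy : lX K * lY K ∈ A := memA _ (by simp)
  have hxz : lX K * lZ K ∈ A := memA _ (by simp)
  have hyz : lY K * lZ K ∈ A := memA _ (by simp)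
  have hT1 : (LaurentPolynomial.T 1 : S) ∈ A := memA _ (by simp)
  have hTm1 : (LaurentPolynomial.T (-1) : S) ∈ A := memA _ (by simp)
  -- T n ∈ A for all n
  have hTn : ∀ n : ℤ, (LaurentPolynomial.T n : S) ∈ A := by
    intro n
    induction n using Int.induction_on with
    | zero => rw [LaurentPolynomial.T_zero]; exact A.one_mem
    | succ k ih => rw [show ((k : ℤ) + 1) = k + 1 from rfl, LaurentPolynomial.T_add];
                   exact A.mul_mem ih hT1
    | pred k ih => rw [show (-(k : ℤ) - 1) = -k + (-1) by ring, LaurentPolynomial.T_add];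
                   exact A.mul_mem ih hTm1
  -- decomposition predicate
  let P : S → Prop := fun f => ∃ a b c d : S, a ∈ A ∧ b ∈ A ∧ c ∈ A ∧ d ∈ A ∧
    f = a + b * lX K + c * lY K + d * lZ K
  have hPofA : ∀ a ∈ A, P a := fun a ha =>
    ⟨a, 0, 0, 0, ha, A.zero_mem, A.zero_mem, A.zero_mem, by ring⟩
  have hPadd : ∀ p q, P p → P q → P (p + q) := by
    rintro p q ⟨a, b, c, d, ha, hb, hc, hd, rfl⟩ ⟨a', b', c', d', ha', hb', hc', hd', rfl⟩
    exact ⟨a + a', b + b', c + c', d + d', A.add_mem ha ha', A.add_mem hb hb',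
      A.add_mem hc hc', A.add_mem hd hd', by ring⟩
  have hPmul : ∀ p q, P p → P q → P (p * q) := by
    rintro p q ⟨a, b, c, d, ha, hb, hc, hd, rfl⟩ ⟨a', b', c', d', ha', hb', hc', hd', rfl⟩
    refine ⟨a * a' + b * b' * lX K ^ 2 + c * c' * lY K ^ 2 + d * d' * lZ K ^ 2
        + (b * c' + c * b') * (lX K * lY K) + (b * d' + d * b') * (lX K * lZ K)
        + (c * d' + d * c') * (lY K * lZ K),
      a * b' + b * a', a * c' + c * a', a * d' + d * a', ?_, ?_, ?_, ?_, by ring⟩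
    · exact A.add_mem (A.add_mem (A.add_mem (A.add_mem (A.add_mem (A.add_mem
        (A.mul_mem ha ha') (A.mul_mem (A.mul_mem hb hb') hx2))
        (A.mul_mem (A.mul_mem hc hc') hy2)) (A.mul_mem (A.mul_mem hd hd') hz2))
        (A.mul_mem (A.add_mem (A.mul_mem hb hc') (A.mul_mem hc hb')) hxy))
        (A.mul_mem (A.add_mem (A.mul_mem hb hd') (A.mul_mem hd hb')) hxz))
        (A.mul_mem (A.add_mem (A.mul_mem hc hd') (A.mul_mem hd hc')) hyz)
    · exact A.add_mem (A.mul_mem ha hb') (A.mul_mem hb ha')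
    · exact A.add_mem (A.mul_mem ha hc') (A.mul_mem hc ha')
    · exact A.add_mem (A.mul_mem ha hd') (A.mul_mem hd ha')
  have hPx : P (lX K) := ⟨0, 1, 0, 0, A.zero_mem, A.one_mem, A.zero_mem, A.zero_mem, by ring⟩
  have hPy : P (lY K) := ⟨0, 0, 1, 0, A.zero_mem, A.zero_mem, A.one_mem, A.zero_mem, by ring⟩
  have hPz : P (lZ K) := ⟨0, 0, 0, 1, A.zero_mem, A.zero_mem, A.zero_mem, A.one_mem, by ring⟩
  -- P holds for C r for every r : XYZRing K
  have hPC : ∀ r : XYZRing K, P (LaurentPolynomial.C r) := by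
    intro r
    obtain ⟨q, rfl⟩ := Ideal.Quotient.mk_surjective r
    induction q using MvPolynomial.induction_on with
    | C a =>
      refine hPofA _ ?_
      have : (LaurentPolynomial.C (Ideal.Quotient.mk _ (MvPolynomial.C a : MvPolynomial (Fin 3) K)) : S)
          = algebraMap K S a := rfl
      rw [this]
      exact A.algebraMap_mem a
    | add p q hp hq =>
      rw [map_add, map_add]
      exact hPadd _ _ hp hq
    | mul_X p i hp =>
      rw [map_mul, map_mul]
      have hi : P (LaurentPolynomial.C (Ideal.Quotient.mk _ (X i : MvPolynomial (Fin 3) K))) := by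
        fin_cases i
        · exact hPx
        · exact hPy
        · exact hPz
      exact hPmul _ _ hp hi
  -- P holds everywhere
  have hPall : ∀ f : S, P f := by
    intro f
    induction f using LaurentPolynomial.induction_on' with
    | add p q hp hq => exact hPadd p q hp hq
    | C_mul_T n a => exact hPmul _ _ (hPC a) (hPofA _ (hTn n))
  -- main equality
  ext f
  simp only [Set.mem_setOf_eq, SetLike.mem_coe]
  constructor
  · intro hf
    obtain ⟨a, b, c, d, ha, hb, hc, hd, hfd⟩ := hPall f
    have hσf : σ f = a - b * lX K - c * lY K - d * lZ K := by
      rw [hfd]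
      simp only [map_add, map_mul, hfixA a ha, hfixA b hb, hfixA c hc, hfixA d hd,
        hσx, hσy, hσz]
      ring
    have h2 : (2 : K) • f = (2 : K) • a := by
      have := hf
      rw [hσf, hfd] at this
      have h2' : (2 : K) • f = f + σ f := by
        rw [hf, two_smul]
      rw [h2', hσf, hfd]
      have : (2 : K) • a = a + a := two_smul K a
      rw [this]; ring
    have hfa : f = a := by
      have h2ne : (2 : K) ≠ 0 := two_ne_zero
      have := congrArg (fun t => (2 : K)⁻¹ • t) h2
      simpa [smul_smul, inv_mul_cancel₀ h2ne] using this
    rw [hfa]; exact ha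
  · intro hf
    exact hfixA f hf
end

section
/- Let v₁ : M → ℤ be a group homomorphism, v₀ : M → ℚ a map with 2v₀ a group homomorphism M → ℤ, and e ∈ M with 2v₀(e) = 1 and v₁(e) = −1. Let ∂₋^{sk}, ∂₊^{sk} be the skew derivations of K(t)[M] attached to (v₀, v₁, e), and let ∂₋^{re}, ∂₊^{re} be the reflexive derivations of K(t)[M] attached to the data (ṽ₀, ṽ₁, e) = (−v₁, v₁, e). Define φ : K(t)[M] → K(t)[M] by φ(Qχ^m) = Q((2t−1)²)·t^{v₁(m)}·(t − 1/2)^{2v₀(m)}·χ^m, where Q((2t−1)²) denotes the rational function Q evaluated at (2t−1)². Then φ is an injective K-algebra homomorphism satisfying ∂₋^{re}∘φ = φ∘∂₋^{sk} and ∂₊^{re}∘φ = φ∘∂₊^{sk}. -/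
lemma chain_rule {K : Type*} [Field K]
    (D : Derivation K (RatFunc K) (RatFunc K)) (hD : D RatFunc.X = 1)
    (sub : RatFunc K →ₐ[K] RatFunc K) (Q : RatFunc K) :
    D (sub Q) = sub (D Q) * D (sub RatFunc.X) := by
  set s := D (sub RatFunc.X) with hs
  have hmul : ∀ a b : RatFunc K, D (sub a) = sub (D a) * s → D (sub b) = sub (D b) * s →
      D (sub (a * b)) = sub (D (a * b)) * s := by
    intro a b ha hb
    rw [map_mul, Derivation.leibniz, Derivation.leibniz, smul_eq_mul, smul_eq_mul, smul_eq_mul,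
      smul_eq_mul, ha, hb, map_add, map_mul, map_mul]
    ring
  have hX : D (sub RatFunc.X) = sub (D RatFunc.X) * s := by rw [hD, map_one, one_mul]
  have hpoly : ∀ p : Polynomial K,
      D (sub (algebraMap _ (RatFunc K) p)) = sub (D (algebraMap _ (RatFunc K) p)) * s := by
    intro p
    induction p using Polynomial.induction_on with
    | C a =>
        rw [RatFunc.algebraMap_C]
        have : (RatFunc.C a : RatFunc K) = algebraMap K (RatFunc K) a := rfl
        rw [this, Derivation.map_algebraMap, AlgHom.commutes, Derivation.map_algebraMap,
          map_zero, zero_mul]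
    | add p q hp hq => simp only [map_add, hp, hq, add_mul]
    | monomial n a ih =>
        have h1 : Polynomial.C a * Polynomial.X ^ (n + 1)
            = Polynomial.C a * Polynomial.X ^ n * Polynomial.X := by ring
        rw [h1, map_mul]
        exact hmul _ _ ih (by rw [RatFunc.algebraMap_X]; exact hX)
  induction Q using RatFunc.induction_on with
  | f p q hq =>
      have hq' : algebraMap (Polynomial K) (RatFunc K) q ≠ 0 := RatFunc.algebraMap_ne_zero hq
      have hsq' : sub (algebraMap (Polynomial K) (RatFunc K) q) ≠ 0 := by
        simpa using (map_ne_zero_iff _ (RingHom.injective (sub : RatFunc K →+* RatFunc K))).2 hq'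
      rw [map_div₀, Derivation.leibniz_div, Derivation.leibniz_div]
      simp only [smul_eq_mul, map_mul, map_sub, map_inv₀, map_pow, hpoly p, hpoly q]
      field_simp

/-- Let `v₁ : M → ℤ` be a homomorphism, `v₀ : M → ℚ` with `2v₀` a
homomorphism into `ℤ` (realized by `w : M → ℤ` with `w = 2v₀`), and `e ∈ M` with `2v₀(e) = 1`,
`v₁(e) = −1`.  Let `∂₋ˢᵏ, ∂₊ˢᵏ` be the skew derivations of `K(t)[M]` attached to `(v₀,v₁,e)`
and `∂₋ʳᵉ, ∂₊ʳᵉ` the reflexive derivations attached to `(−v₁, v₁, e)`.  The map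
`φ(Qχ^m) = Q((2t−1)²)·t^{v₁(m)}·(t − 1/2)^{2v₀(m)}·χ^m` (where `Q ↦ Q((2t−1)²)` is the
`K`-algebra endomorphism `sub` of `K(t)` with `sub(t) = (2t−1)²`) is an injective `K`-algebra
homomorphism with `∂₋ʳᵉ∘φ = φ∘∂₋ˢᵏ` and `∂₊ʳᵉ∘φ = φ∘∂₊ˢᵏ`. -/
theorem stmt_17 {K : Type*} [Field K] [CharZero K]
    {M : Type*} [AddCommGroup M] [Module.Free ℤ M] [Module.Finite ℤ M]
    (D : Derivation K (RatFunc K) (RatFunc K)) (hD : D RatFunc.X = 1)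
    (v₀ : M →+ ℚ) (w : M →+ ℤ) (hw : ∀ m : M, (w m : ℚ) = 2 * v₀ m)
    (v₁ : M →+ ℤ) (e : M) (hv₀e : 2 * v₀ e = 1) (hv₁e : v₁ e = -1)
    (Dsm Dsp : Derivation K (AddMonoidAlgebra (RatFunc K) M) (AddMonoidAlgebra (RatFunc K) M))
    (hDsm : ∀ (Q : RatFunc K) (m : M), Dsm (AddMonoidAlgebra.single m Q) =
      AddMonoidAlgebra.single (m - e)
        (2 * (((v₀ m : ℚ) : RatFunc K) * Q + RatFunc.X * D Q)))
    (hDsp : ∀ (Q : RatFunc K) (m : M), Dsp (AddMonoidAlgebra.single m Q) =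
      AddMonoidAlgebra.single (m + e)
        (2 * ((((v₀ m : ℚ) : RatFunc K) * (1 - RatFunc.X⁻¹) + (v₁ m : RatFunc K)) * Q +
          (RatFunc.X - 1) * D Q)))
    (Drm Drp : Derivation K (AddMonoidAlgebra (RatFunc K) M) (AddMonoidAlgebra (RatFunc K) M))
    (hDrm : ∀ (Q : RatFunc K) (m : M), Drm (AddMonoidAlgebra.single m Q) =
      AddMonoidAlgebra.single (m - e) (((-(v₁ m) : ℤ) : RatFunc K) * Q + RatFunc.X * D Q))
    (hDrp : ∀ (Q : RatFunc K) (m : M), Drp (AddMonoidAlgebra.single m Q) =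
      AddMonoidAlgebra.single (m + e) ((v₁ m : RatFunc K) * Q + (RatFunc.X - 1) * D Q))
    (sub : RatFunc K →ₐ[K] RatFunc K)
    (hsub : sub RatFunc.X = (2 * RatFunc.X - 1) ^ 2) :
    ∃ Φ : AddMonoidAlgebra (RatFunc K) M →ₐ[K] AddMonoidAlgebra (RatFunc K) M,
      (∀ (Q : RatFunc K) (m : M), Φ (AddMonoidAlgebra.single m Q) =
        AddMonoidAlgebra.single m
          (sub Q * RatFunc.X ^ (v₁ m) * (RatFunc.X - (2 : RatFunc K)⁻¹) ^ (w m))) ∧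
      Function.Injective Φ ∧
      (∀ f, Drm (Φ f) = Φ (Dsm f)) ∧
      (∀ f, Drp (Φ f) = Φ (Dsp f)) := by
  classical
  haveI : CharZero (RatFunc K) :=
    charZero_of_injective_algebraMap (algebraMap K (RatFunc K)).injective
  set Y : RatFunc K := RatFunc.X - (2 : RatFunc K)⁻¹ with hYdef
  have hX0 : (RatFunc.X : RatFunc K) ≠ 0 := RatFunc.X_ne_zero
  have h2K : ((2 : RatFunc K))⁻¹ = RatFunc.C ((2 : K)⁻¹) := by rw [map_inv₀, map_ofNat]
  have hY0 : Y ≠ 0 := by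
    rw [hYdef, h2K, ← RatFunc.algebraMap_X, ← RatFunc.algebraMap_C, ← map_sub]
    exact RatFunc.algebraMap_ne_zero (Polynomial.X_sub_C_ne_zero _)
  have h20 : (2 : RatFunc K) ≠ 0 := two_ne_zero
  -- the character c
  set c : M → RatFunc K := fun m => RatFunc.X ^ (v₁ m) * Y ^ (w m) with hc
  have hcne : ∀ m, c m ≠ 0 := fun m =>
    mul_ne_zero (zpow_ne_zero _ hX0) (zpow_ne_zero _ hY0)
  have hcadd : ∀ m m', c (m + m') = c m * c m' := by
    intro m m'
    simp only [hc, map_add, zpow_add₀ hX0, zpow_add₀ hY0]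
    ring
  -- the algebra hom Φ
  set g : Multiplicative M →* AddMonoidAlgebra (RatFunc K) M :=
    { toFun := fun m => AddMonoidAlgebra.single m.toAdd (c m.toAdd)
      map_one' := by
        simp only [toAdd_one, hc, map_zero, zpow_zero, one_mul]
        rfl
      map_mul' := fun m m' => by
        rw [AddMonoidAlgebra.single_mul_single, ← hcadd]
        rfl } with hg
  set Φ : AddMonoidAlgebra (RatFunc K) M →ₐ[K] AddMonoidAlgebra (RatFunc K) M :=
    AddMonoidAlgebra.liftNCAlgHom
      ((AddMonoidAlgebra.singleZeroAlgHom :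
          RatFunc K →ₐ[K] AddMonoidAlgebra (RatFunc K) M).comp sub)
      g (fun _ _ => Commute.all _ _) with hΦdef
  have hΦ : ∀ (Q : RatFunc K) (m : M),
      Φ (AddMonoidAlgebra.single m Q) = AddMonoidAlgebra.single m (sub Q * c m) := by
    intro Q m
    rw [hΦdef]
    simp only [AddMonoidAlgebra.liftNCAlgHom, AddMonoidAlgebra.liftNCRingHom, AlgHom.coe_mk,
      RingHom.coe_mk, MonoidHom.coe_mk, OneHom.coe_mk, AddMonoidHom.toFun_eq_coe,
      AddMonoidAlgebra.liftNC_single, hg, AlgHom.comp_apply, toAdd_ofAdd, RingHom.coe_coe,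
      AddMonoidHom.coe_coe,
      AddMonoidAlgebra.singleZeroAlgHom_apply]
    rw [AddMonoidAlgebra.single_mul_single, zero_add]
  -- derivative facts
  have hDalg : ∀ a : K, D (algebraMap K (RatFunc K) a) = 0 := fun a => D.map_algebraMap a
  have hD2 : D (2 : RatFunc K) = 0 := by
    rw [← map_ofNat (algebraMap K (RatFunc K)) 2]; exact hDalg _
  have hDY : D Y = 1 := by
    rw [hYdef, map_sub, hD, Derivation.leibniz_inv, hD2, smul_zero, sub_zero]
  have h2Y : (2 : RatFunc K) * Y = 2 * RatFunc.X - 1 := by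
    rw [hYdef, mul_sub, mul_inv_cancel₀ h20]
  have hD4 : D (4 : RatFunc K) = 0 := by
    rw [← map_ofNat (algebraMap K (RatFunc K)) 4]; exact hDalg _
  have hs : D (sub RatFunc.X) = 8 * Y := by
    rw [hsub, ← h2Y]
    have h4 : ((2 : RatFunc K) * Y) ^ 2 = 4 * (Y * Y) := by ring
    rw [h4]
    simp only [Derivation.leibniz, hDY, hD4, smul_eq_mul, mul_one, mul_zero, add_zero, zero_add]
    ring
  have hchain : ∀ Q : RatFunc K, D (sub Q) = sub (D Q) * (8 * Y) := fun Q => by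
    rw [chain_rule D hD sub Q, hs]
  have hXp : ∀ n : ℤ, D (RatFunc.X ^ n) = (n : RatFunc K) * RatFunc.X ^ (n - 1) := by
    intro n
    rw [Derivation.leibniz_zpow, hD, smul_eq_mul, mul_one, zsmul_eq_mul]
  have hYp : ∀ n : ℤ, D (Y ^ n) = (n : RatFunc K) * Y ^ (n - 1) := by
    intro n
    rw [Derivation.leibniz_zpow, hDY, smul_eq_mul, mul_one, zsmul_eq_mul]
  have hcD : ∀ m, D (c m) = (v₁ m : RatFunc K) * RatFunc.X ^ (v₁ m - 1) * Y ^ (w m)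
      + (w m : RatFunc K) * RatFunc.X ^ (v₁ m) * Y ^ (w m - 1) := by
    intro m
    simp only [hc]
    rw [Derivation.leibniz, smul_eq_mul, smul_eq_mul, hXp, hYp]
    ring
  -- casts
  have hwc : ∀ m : M, ((w m : ℤ) : RatFunc K) = 2 * ((v₀ m : ℚ) : RatFunc K) := by
    intro m
    have h1 := congrArg (fun q : ℚ => (q : RatFunc K)) (hw m)
    push_cast at h1
    exact h1
  have hsubrat : ∀ q : ℚ, sub ((q : RatFunc K)) = (q : RatFunc K) := fun q =>
    map_ratCast (sub : RatFunc K →+* RatFunc K) q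
  have hwe : w e = 1 := by exact_mod_cast (hw e).trans hv₀e
  -- coefficient formula and injectivity
  have hcoeff : ∀ (f : AddMonoidAlgebra (RatFunc K) M) (m : M), (Φ f).coeff m = sub (f.coeff m) * c m := by
    intro f m
    induction f using AddMonoidAlgebra.induction_linear with
    | zero => simp
    | add a b ha hb =>
        rw [map_add, AddMonoidAlgebra.coeff_add, Finsupp.add_apply, ha, hb, AddMonoidAlgebra.coeff_add, Finsupp.add_apply, map_add, add_mul]
    | single m' Q =>
        rw [hΦ, AddMonoidAlgebra.coeff_single, AddMonoidAlgebra.coeff_single, Finsupp.single_apply, Finsupp.single_apply]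
        by_cases h : m' = m
        · simp [h]
        · simp [h]
  have hinj : Function.Injective Φ := by
    intro f f' hff
    ext m
    have h1 : (Φ f).coeff m = (Φ f').coeff m := by rw [hff]
    rw [hcoeff, hcoeff] at h1
    have h2 := mul_right_cancel₀ (hcne m) h1
    exact RingHom.injective (sub : RatFunc K →+* RatFunc K) h2
  -- index arithmetic
  have hv1me : ∀ m : M, v₁ (m - e) = v₁ m + 1 := fun m => by rw [map_sub, hv₁e]; ring
  have hwme : ∀ m : M, w (m - e) = w m - 1 := fun m => by rw [map_sub, hwe]
  have hv1pe : ∀ m : M, v₁ (m + e) = v₁ m - 1 := fun m => by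
    rw [map_add, hv₁e]; ring
  have hwpe : ∀ m : M, w (m + e) = w m + 1 := fun m => by rw [map_add, hwe]
  -- the minus intertwining
  have hkeym : ∀ f, Drm (Φ f) = Φ (Dsm f) := by
    intro f
    induction f using AddMonoidAlgebra.induction_linear with
    | zero => simp
    | add a b ha hb => rw [map_add, map_add, ha, hb, map_add, map_add]
    | single m Q =>
        rw [hΦ, hDrm, hDsm, hΦ]
        congr 1
        rw [Derivation.leibniz, smul_eq_mul, smul_eq_mul, hchain, hcD]
        simp only [map_mul, map_add, map_ofNat, hsub, hsubrat]
        simp only [hc, hv1me, hwme]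
        rw [zpow_add_one₀ hX0, zpow_sub_one₀ hY0, zpow_sub_one₀ hX0, ← h2Y, hwc m]
        push_cast
        field_simp
        ring
  -- the plus intertwining
  have hkeyp : ∀ f, Drp (Φ f) = Φ (Dsp f) := by
    intro f
    induction f using AddMonoidAlgebra.induction_linear with
    | zero => simp
    | add a b ha hb => rw [map_add, map_add, ha, hb, map_add, map_add]
    | single m Q =>
        rw [hΦ, hDrp, hDsp, hΦ]
        congr 1
        rw [Derivation.leibniz, smul_eq_mul, smul_eq_mul, hchain, hcD]
        simp only [map_mul, map_add, map_sub, map_one, map_inv₀, map_ofNat, hsub, hsubrat]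
        simp only [hc, hv1pe, hwpe]
        rw [zpow_add_one₀ hY0, zpow_sub_one₀ hX0, zpow_sub_one₀ hY0, ← h2Y, hwc m]
        field_simp
        rw [map_intCast, show (RatFunc.X : RatFunc K) = Y + 2⁻¹ by rw [hYdef]; ring]
        ring
  refine ⟨Φ, ?_, hinj, hkeym, hkeyp⟩
  intro Q m
  rw [hΦ]
  congr 1
  simp only [hc]
  ring
end
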